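/- arXiv:1407.5884 — 10 statements merged into one kernel-verified Lean document; each statement's English description precedes it below -/
import Mathlib

section
/- Let (t_m) and (ℓ_m) be sequences of positive integers with ℓ_m → ∞ and t_m/ℓ_m^{1/5} → 0 as m → ∞. Write t = t_m, ℓ = ℓ_m. Then the variance of the number of empty boxes when ℓ balls are placed uniformly and independently into tℓ boxes, namely 𝕍(Y) = (tℓ)(tℓ−1)(1 − 2/(tℓ))^ℓ + tℓ(1 − 1/(tℓ))^ℓ − (tℓ)^2 (1 − 1/(tℓ))^{2ℓ}, satisfies 𝕍(Y) / (t e^{−2/t}(e^{1/t} − 1 − 1/t) ℓ) → 1 as m → ∞. -/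
set_option maxHeartbeats 1000000

lemma pow_sub_pow_bounds (a b : ℝ) (ha : 0 ≤ a) (hab : a ≤ b) (k : ℕ) :
    ((k:ℝ)+1) * a^k * (b - a) ≤ b^(k+1) - a^(k+1) ∧
      b^(k+1) - a^(k+1) ≤ ((k:ℝ)+1) * b^k * (b-a) := by
  have hb : 0 ≤ b := ha.trans hab
  induction k with
  | zero => simp
  | succ k ih =>
    obtain ⟨ih1, ih2⟩ := ih
    have hank : 0 ≤ a^k := pow_nonneg ha k
    have hbnk : 0 ≤ b^k := pow_nonneg hb k
    have hank1 : 0 ≤ a^(k+1) := pow_nonneg ha _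
    have e1 : b^(k+1+1) - a^(k+1+1) = b*(b^(k+1) - a^(k+1)) + a^(k+1)*(b-a) := by ring
    have hnn : (0:ℝ) ≤ ((k:ℝ)+1) * a^k * (b-a) := by
      apply mul_nonneg (mul_nonneg (by positivity) hank) (by linarith)
    have s1 : (((k:ℝ)+1) * a^k * (b-a)) * a ≤ (b^(k+1) - a^(k+1)) * b :=
      le_trans (mul_le_mul_of_nonneg_left hab hnn) (mul_le_mul_of_nonneg_right ih1 hb)
    have s2 : (b^(k+1) - a^(k+1)) * b ≤ (((k:ℝ)+1) * b^k * (b-a)) * b :=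
      mul_le_mul_of_nonneg_right ih2 hb
    have ea : a^(k+1) = a^k * a := pow_succ a k
    have eb : b^(k+1) = b^k * b := pow_succ b k
    constructor
    · push_cast
      rw [e1]; rw [ea, eb] at s1 ⊢
      nlinarith [s1]
    · push_cast
      rw [e1]; rw [ea, eb] at s2 ⊢
      nlinarith [s2, mul_nonneg hbnk (sub_nonneg.2 hab), mul_nonneg (mul_nonneg hbnk hb) (sub_nonneg.2 hab)]

theorem core (l : ℕ) (T L n p a b E1 E2 : ℝ)
    (hT : 1 ≤ T) (hL : 4 ≤ L) (hLl : L = (l:ℝ)) (hn : n = T * L)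
    (hp : p = 1 - 1/n) (ha : a = 1 - 2/n) (hb : b = p^2)
    (hE1 : E1 = Real.exp (-(1/T))) (hE2 : E2 = Real.exp (-(2/T))) :
    |(n * (n - 1) * a ^ l + n * p ^ l - n ^ 2 * p ^ (2 * l)) /
        (T * Real.exp (-2 / T) * (Real.exp (1 / T) - 1 - 1 / T) * L) - 1| ≤ 576 / L := by
  have hT0 : (0:ℝ) < T := by linarith only [hT]
  have hL0 : (0:ℝ) < L := by linarith only [hL]
  have hn4 : (4:ℝ) ≤ n := by
    have h := mul_nonneg (sub_nonneg.2 hT) hL0.le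
    rw [hn]; nlinarith only [h, hL]
  have hn0 : (0:ℝ) < n := by linarith only [hn4]
  have h2n : 2/n = 2*(1/n) := by ring
  have hx4 : 1/n ≤ 1/4 := by
    rw [div_le_div_iff₀ hn0 (by norm_num)]; linarith only [hn4]
  have hx0 : 0 < 1/n := by positivity
  have hxT : 0 < 1/T := by positivity
  have hp0 : 0 ≤ p := by rw [hp]; linarith only [hx4]
  have ha0 : 0 ≤ a := by rw [ha, h2n]; linarith only [hx4]
  have hp1 : p ≤ 1 := by rw [hp]; linarith only [hx0]
  have ha1 : a ≤ 1 := by rw [ha, h2n]; linarith only [hx0]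
  have hba : b - a = (1/n)^2 := by rw [ha, hb, hp]; ring
  have hab : a ≤ b := by linarith only [hba, sq_nonneg (1/n)]
  have hE1pos : 0 < E1 := hE1 ▸ Real.exp_pos _
  have hE2pos : 0 < E2 := hE2 ▸ Real.exp_pos _
  have hE1le : E1 ≤ 1 := by
    rw [hE1, Real.exp_le_one_iff]; exact neg_nonpos.2 (by positivity)
  have hE2le : E2 ≤ 1 := by
    rw [hE2, Real.exp_le_one_iff]; exact neg_nonpos.2 (by positivity)
  -- basic exp bounds
  have key1 : p ≤ Real.exp (-(1/n)) := by
    have h := Real.add_one_le_exp (-(1/n)); rw [hp]; linarith only [h]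
  have key1' : Real.exp (-(1/n + 2*(1/n)^2)) ≤ p := by
    rw [hp]
    have h := Real.add_one_le_exp (1/n + 2*(1/n)^2)
    rw [Real.exp_neg]
    have h3 : (Real.exp (1/n + 2*(1/n)^2))⁻¹ ≤ (1 + (1/n + 2*(1/n)^2))⁻¹ := by
      apply inv_anti₀ (by positivity) (by linarith only [h])
    refine h3.trans ?_
    rw [← one_div, div_le_iff₀ (by positivity)]
    nlinarith only [hx0, hx4]
  have key2 : a ≤ Real.exp (-(2/n)) := by
    have h := Real.add_one_le_exp (-(2/n)); rw [ha]; linarith only [h]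
  have key2' : Real.exp (-(2/n + 2*(2/n)^2)) ≤ a := by
    rw [ha]
    have h := Real.add_one_le_exp (2/n + 2*(2/n)^2)
    rw [Real.exp_neg]
    have h3 : (Real.exp (2/n + 2*(2/n)^2))⁻¹ ≤ (1 + (2/n + 2*(2/n)^2))⁻¹ := by
      apply inv_anti₀ (by positivity) (by linarith only [h])
    refine h3.trans ?_
    rw [← one_div, div_le_iff₀ (by positivity)]
    nlinarith only [hx0, hx4, h2n]
  have hexp1 : Real.exp (-(1/n)) ^ l = E1 := by
    rw [hE1, ← Real.exp_nat_mul]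
    congr 1
    rw [hn, ← hLl]
    field_simp
  have hexp2 : Real.exp (-(2/n)) ^ l = E2 := by
    rw [hE2, ← Real.exp_nat_mul]
    congr 1
    rw [hn, ← hLl]
    field_simp
  have hpl_ub : p ^ l ≤ E1 := by
    rw [← hexp1]; exact pow_le_pow_left₀ hp0 key1 l
  have hal_ub : a ^ l ≤ E2 := by
    rw [← hexp2]; exact pow_le_pow_left₀ ha0 key2 l
  have hpl_lb : E1 - 2/(T^2*L) ≤ p ^ l := by
    have h1 : Real.exp (-(1/n + 2*(1/n)^2)) ^ l ≤ p ^ l :=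
      pow_le_pow_left₀ (Real.exp_pos _).le key1' l
    have h2 : Real.exp (-(1/n + 2*(1/n)^2)) ^ l = E1 * Real.exp (-(2/(T^2*L))) := by
      rw [hE1, ← Real.exp_nat_mul, ← Real.exp_add]
      congr 1
      rw [hn, ← hLl]; field_simp; ring
    rw [h2] at h1
    have h3 : 1 - 2/(T^2*L) ≤ Real.exp (-(2/(T^2*L))) := by
      have h := Real.add_one_le_exp (-(2/(T^2*L))); linarith only [h]
    have h4 : (0:ℝ) ≤ 2/(T^2*L) := by positivity
    have h5 : E1*(1 - 2/(T^2*L)) ≤ E1 * Real.exp (-(2/(T^2*L))) :=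
      mul_le_mul_of_nonneg_left h3 hE1pos.le
    have h6 : E1*(2/(T^2*L)) ≤ 2/(T^2*L) := mul_le_of_le_one_left h4 hE1le
    have e : E1*(1 - 2/(T^2*L)) = E1 - E1*(2/(T^2*L)) := by ring
    linarith only [h1, h5, h6, e]
  have hal_lb : E2 - 8/(T^2*L) ≤ a ^ l := by
    have h1 : Real.exp (-(2/n + 2*(2/n)^2)) ^ l ≤ a ^ l :=
      pow_le_pow_left₀ (Real.exp_pos _).le key2' l
    have h2 : Real.exp (-(2/n + 2*(2/n)^2)) ^ l = E2 * Real.exp (-(8/(T^2*L))) := by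
      rw [hE2, ← Real.exp_nat_mul, ← Real.exp_add]
      congr 1
      rw [hn, ← hLl]; field_simp; ring
    rw [h2] at h1
    have h3 : 1 - 8/(T^2*L) ≤ Real.exp (-(8/(T^2*L))) := by
      have h := Real.add_one_le_exp (-(8/(T^2*L))); linarith only [h]
    have h4 : (0:ℝ) ≤ 8/(T^2*L) := by positivity
    have h5 : E2*(1 - 8/(T^2*L)) ≤ E2 * Real.exp (-(8/(T^2*L))) :=
      mul_le_mul_of_nonneg_left h3 hE2pos.le
    have h6 : E2*(8/(T^2*L)) ≤ 8/(T^2*L) := mul_le_of_le_one_left h4 hE2le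
    have e : E2*(1 - 8/(T^2*L)) = E2 - E2*(8/(T^2*L)) := by ring
    linarith only [h1, h5, h6, e]
  -- geometric part
  have hl4 : 4 ≤ l := by
    have : (4:ℝ) ≤ (l:ℝ) := hLl ▸ hL
    exact_mod_cast this
  obtain ⟨k, hk⟩ : ∃ k, l = k + 1 := ⟨l - 1, by omega⟩
  have hkL : ((k:ℝ)+1) = L := by rw [hLl, hk]; push_cast; ring
  have geom := pow_sub_pow_bounds a b ha0 hab k
  have hQlb : L * a^k * (1/n)^2 ≤ b^l - a^l := by
    rw [hk, ← hkL, ← hba]; exact geom.1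
  have hQub : b^l - a^l ≤ L * b^k * (1/n)^2 := by
    rw [hk, ← hkL, ← hba]; exact geom.2
  have hak_lb : a ^ l ≤ a ^ k := pow_le_pow_of_le_one ha0 ha1 (by omega)
  have hbk_ub : b ^ k ≤ E2 * Real.exp (2/n) := by
    have h1 : b ^ k = p ^ (2*k) := by rw [hb, ← pow_mul]
    have h2 : p ^ (2*k) ≤ Real.exp (-(1/n)) ^ (2*k) := pow_le_pow_left₀ hp0 key1 _
    have h3 : Real.exp (-(1/n)) ^ (2*k) = Real.exp (-(2*(k:ℝ)/n)) := by
      rw [← Real.exp_nat_mul]; congr 1; push_cast; ring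
    have h4 : Real.exp (-(2*(k:ℝ)/n)) = E2 * Real.exp (2/n) := by
      rw [hE2, ← Real.exp_add]
      congr 1
      have hkn : (k:ℝ) = L - 1 := by linarith only [hkL]
      rw [hkn, hn]; field_simp; ring
    rw [h3, h4] at h2; rw [h1]; exact h2
  have hexp2n : Real.exp (2/n) ≤ 1 + 4/n := by
    have hu : (2:ℝ)/n ≤ 1/2 := by linarith only [hx4, h2n]
    have hsqe : Real.exp ((1:ℝ)/2) * Real.exp ((1:ℝ)/2) = Real.exp 1 := by
      rw [← Real.exp_add]; norm_num
    have h5 : Real.exp ((1:ℝ)/2) ≤ 2 := by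
      nlinarith only [hsqe, Real.exp_one_lt_d9, Real.exp_pos ((1:ℝ)/2)]
    have h6 : Real.exp (2/n) ≤ 2 := le_trans (Real.exp_le_exp.2 hu) h5
    have h7 := Real.add_one_le_exp (-(2/n))
    have h8 : Real.exp (-(2/n)) = (Real.exp (2/n))⁻¹ := Real.exp_neg _
    have h9 : Real.exp (2/n) - 1 ≤ (2/n) * Real.exp (2/n) := by
      have hxe := Real.exp_pos (2/n)
      rw [h8] at h7
      have h10 := mul_le_mul_of_nonneg_right h7 hxe.le
      rw [inv_mul_cancel₀ hxe.ne'] at h10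
      nlinarith only [h10]
    have h11 : 0 ≤ (1/n) * (2 - Real.exp (2/n)) :=
      mul_nonneg hx0.le (by linarith only [h6])
    ring_nf at h9 h11 ⊢
    linarith only [h9, h11]
  -- Q bounds
  have hQ1 : L * E2 - 8/T^2 ≤ n^2 * (b^l - a^l) := by
    have h1 : L * (E2 - 8/(T^2*L)) ≤ L * a^k :=
      mul_le_mul_of_nonneg_left (le_trans hal_lb hak_lb) hL0.le
    have h2 : L * (E2 - 8/(T^2*L)) = L * E2 - 8/T^2 := by field_simp
    have h3 : n^2 * (L * a^k * (1/n)^2) ≤ n^2 * (b^l - a^l) :=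
      mul_le_mul_of_nonneg_left hQlb (by positivity)
    have h4 : n^2 * (L * a^k * (1/n)^2) = L * a^k := by field_simp
    rw [h4] at h3; linarith only [h1, h2, h3]
  have hQ2 : n^2 * (b^l - a^l) ≤ L * E2 + 4/T := by
    have h3 : n^2 * (b^l - a^l) ≤ n^2 * (L * b^k * (1/n)^2) :=
      mul_le_mul_of_nonneg_left hQub (by positivity)
    have h4 : n^2 * (L * b^k * (1/n)^2) = L * b^k := by field_simp
    have h1 : L * b^k ≤ L * (E2 * (1 + 4/n)) := by
      apply mul_le_mul_of_nonneg_left _ hL0.le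
      calc b^k ≤ E2 * Real.exp (2/n) := hbk_ub
        _ ≤ E2 * (1 + 4/n) := mul_le_mul_of_nonneg_left hexp2n hE2pos.le
    have hLn4 : L * (4/n) = 4/T := by rw [hn]; field_simp
    have q1 : E2*(4/n) ≤ 4/n := mul_le_of_le_one_left (by positivity) hE2le
    have q2 : L*(E2*(4/n)) ≤ L*(4/n) := mul_le_mul_of_nonneg_left q1 hL0.le
    have e' : L*(E2*(1+4/n)) = L*E2 + L*(E2*(4/n)) := by ring
    rw [h4] at h3
    ring_nf at h3 h1 q2 e' hLn4 ⊢
    linarith only [h3, h1, q2, e', hLn4]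
  -- identities
  have hNid : n * (n - 1) * a ^ l + n * p ^ l - n ^ 2 * p ^ (2 * l)
      = n * p^l - n * a^l - n^2 * (b^l - a^l) := by
    rw [pow_mul, ← hb]; ring
  have hDE : Real.exp (-2/T) = E2 := by rw [hE2, neg_div]
  have hEE : E2 * Real.exp (1/T) = E1 := by
    rw [hE1, hE2, ← Real.exp_add]; congr 1; ring
  have hDid : T * Real.exp (-2/T) * (Real.exp (1/T) - 1 - 1/T) * L
      = n * E1 - n * E2 - L * E2 := by
    rw [hDE]
    have hTT : T * (1/T) = 1 := by field_simp
    have expand : T * E2 * (Real.exp (1/T) - 1 - 1/T) * L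
        = L*T*(E2*Real.exp (1/T)) - L*T*E2 - L*E2*(T*(1/T)) := by ring
    rw [expand, hTT, hEE, hn]; ring
  -- denominator lower bound
  have hsq : Real.exp (1/(2*T)) * Real.exp (1/(2*T)) = Real.exp (1/T) := by
    have e : 1/(2*T) + 1/(2*T) = 1/T := by
      rw [← add_div, div_eq_div_iff (by positivity : (2*T:ℝ) ≠ 0) hT0.ne']; ring
    rw [← Real.exp_add, e]
  have hcube : 1/(4*T^2) ≤ Real.exp (1/T) - 1 - 1/T := by
    have h1 : 1 + 1/(2*T) ≤ Real.exp (1/(2*T)) := by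
      have h := Real.add_one_le_exp (1/(2*T)); linarith only [h]
    have hsq2 : (1 + 1/(2*T)) * (1 + 1/(2*T)) ≤ Real.exp (1/(2*T)) * Real.exp (1/(2*T)) :=
      mul_le_mul h1 h1 (by positivity) (Real.exp_pos _).le
    have e1 : (1/(2*T)) * (1/(2*T)) = 1/(4*T^2) := by field_simp; ring
    have e2 : 2*(1/(2*T)) = 1/T := by field_simp
    ring_nf at hsq2 hsq e1 e2 ⊢
    linarith only [hsq2, hsq, e1, e2]
  have hE2lb : 1/8 ≤ E2 := by
    have ht2 : 2/T ≤ 2 := by rw [div_le_iff₀ hT0]; linarith only [hT]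
    have h1 : Real.exp (-(2:ℝ)) ≤ E2 := by
      rw [hE2]; exact Real.exp_le_exp.2 (by linarith only [ht2])
    have h2 : Real.exp (-(2:ℝ)) = (Real.exp 1 * Real.exp 1)⁻¹ := by
      rw [← Real.exp_add, ← Real.exp_neg]; norm_num
    have h3 : Real.exp 1 * Real.exp 1 ≤ 8 := by
      nlinarith only [Real.exp_one_lt_d9, Real.exp_pos (1:ℝ)]
    have h4 : (8:ℝ)⁻¹ ≤ (Real.exp 1 * Real.exp 1)⁻¹ := inv_anti₀ (by positivity) h3
    have h5 : (1:ℝ)/8 = (8:ℝ)⁻¹ := by norm_num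
    have h6 := h2.symm ▸ h4
    ring_nf at h1 h6 ⊢
    linarith only [h1, h6]
  have hDlb : L/(32*T) ≤ n * E1 - n * E2 - L * E2 := by
    rw [← hDid, hDE]
    have step : T * (1/8) * (1/(4*T^2)) * L ≤ T * E2 * (Real.exp (1/T) - 1 - 1/T) * L := by
      gcongr <;> first | exact hE2lb | exact hcube
    have eq1 : T * (1/8) * (1/(4*T^2)) * L = L/(32*T) := by field_simp; ring
    ring_nf at step eq1 ⊢
    linarith only [step, eq1]
  -- difference bound
  have d1 : n * (2/(T^2*L)) = 2/T := by rw [hn]; field_simp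
  have d2 : n * (8/(T^2*L)) = 8/T := by rw [hn]; field_simp
  have m1 : n * p^l ≤ n * E1 := mul_le_mul_of_nonneg_left hpl_ub hn0.le
  have m2 : n * E1 - 2/T ≤ n * p^l := by
    have h := mul_le_mul_of_nonneg_left hpl_lb hn0.le
    have e : n * (E1 - 2/(T^2*L)) = n*E1 - n*(2/(T^2*L)) := by ring
    rw [e, d1] at h; linarith only [h]
  have m3 : n * a^l ≤ n * E2 := mul_le_mul_of_nonneg_left hal_ub hn0.le
  have m4 : n * E2 - 8/T ≤ n * a^l := by
    have h := mul_le_mul_of_nonneg_left hal_lb hn0.le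
    have e : n * (E2 - 8/(T^2*L)) = n*E2 - n*(8/(T^2*L)) := by ring
    rw [e, d2] at h; linarith only [h]
  have hTsq : 8/T^2 ≤ 8/T := by
    rw [div_le_div_iff₀ (by positivity) hT0]
    nlinarith only [hT, hT0]
  have hdiff : |(n * (n - 1) * a ^ l + n * p ^ l - n ^ 2 * p ^ (2 * l))
      - (n * E1 - n * E2 - L * E2)| ≤ 18/T := by
    rw [hNid, abs_le]
    constructor
    · ring_nf at m2 m3 hQ2 hxT ⊢
      linarith only [m2, m3, hQ2, hxT]
    · ring_nf at m1 m4 hQ1 hTsq hxT ⊢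
      linarith only [m1, m4, hQ1, hTsq, hxT]
  -- final assembly
  have hD0 : 0 < n * E1 - n * E2 - L * E2 :=
    lt_of_lt_of_le (by positivity) hDlb
  rw [hDid]
  have hfrac : (n * (n - 1) * a ^ l + n * p ^ l - n ^ 2 * p ^ (2 * l)) /
      (n * E1 - n * E2 - L * E2) - 1
      = ((n * (n - 1) * a ^ l + n * p ^ l - n ^ 2 * p ^ (2 * l))
        - (n * E1 - n * E2 - L * E2)) / (n * E1 - n * E2 - L * E2) := by
    rw [div_sub_one hD0.ne']
  rw [hfrac, abs_div, abs_of_pos hD0, div_le_div_iff₀ hD0 hL0]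
  have e3 : 576 * (L/(32*T)) = (18/T) * L := by field_simp; ring
  calc |(n * (n - 1) * a ^ l + n * p ^ l - n ^ 2 * p ^ (2 * l))
        - (n * E1 - n * E2 - L * E2)| * L ≤ (18/T) * L :=
        mul_le_mul_of_nonneg_right hdiff hL0.le
    _ = 576 * (L/(32*T)) := e3.symm
    _ ≤ 576 * (n * E1 - n * E2 - L * E2) :=
        mul_le_mul_of_nonneg_left hDlb (by norm_num)

/-- Asymptotics of the variance of the number of empty boxes: if `ℓ_m → ∞` and
`t_m/ℓ_m^{1/5} → 0`, then
`𝕍(Y) = (tℓ)(tℓ-1)(1-2/(tℓ))^ℓ + tℓ(1-1/(tℓ))^ℓ - (tℓ)²(1-1/(tℓ))^{2ℓ}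
      ∼ t e^{-2/t}(e^{1/t} - 1 - 1/t) ℓ`. -/
theorem variance_empty_boxes_asymptotic (t l : ℕ → ℕ) (ht : ∀ m, 0 < t m) (hl : ∀ m, 0 < l m)
    (hltop : Filter.Tendsto l Filter.atTop Filter.atTop)
    (hts : Filter.Tendsto (fun m => (t m : ℝ) / (l m : ℝ) ^ ((1 : ℝ) / 5))
      Filter.atTop (nhds 0)) :
    Filter.Tendsto
      (fun m =>
        (((t m : ℝ) * (l m : ℝ)) * ((t m : ℝ) * (l m : ℝ) - 1) *
            (1 - 2 / ((t m : ℝ) * (l m : ℝ))) ^ (l m)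
          + (t m : ℝ) * (l m : ℝ) * (1 - 1 / ((t m : ℝ) * (l m : ℝ))) ^ (l m)
          - ((t m : ℝ) * (l m : ℝ)) ^ 2 * (1 - 1 / ((t m : ℝ) * (l m : ℝ))) ^ (2 * l m)) /
          ((t m : ℝ) * Real.exp (-2 / (t m : ℝ)) *
            (Real.exp (1 / (t m : ℝ)) - 1 - 1 / (t m : ℝ)) * (l m : ℝ)))
      Filter.atTop (nhds 1) := by
  set f := (fun m =>
        (((t m : ℝ) * (l m : ℝ)) * ((t m : ℝ) * (l m : ℝ) - 1) *
            (1 - 2 / ((t m : ℝ) * (l m : ℝ))) ^ (l m)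
          + (t m : ℝ) * (l m : ℝ) * (1 - 1 / ((t m : ℝ) * (l m : ℝ))) ^ (l m)
          - ((t m : ℝ) * (l m : ℝ)) ^ 2 * (1 - 1 / ((t m : ℝ) * (l m : ℝ))) ^ (2 * l m)) /
          ((t m : ℝ) * Real.exp (-2 / (t m : ℝ)) *
            (Real.exp (1 / (t m : ℝ)) - 1 - 1 / (t m : ℝ)) * (l m : ℝ))) with hf
  have hev : ∀ᶠ m in Filter.atTop, ‖f m - 1‖ ≤ 576 / (l m : ℝ) := by
    filter_upwards [hltop.eventually (Filter.eventually_ge_atTop 4)] with m hm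
    rw [Real.norm_eq_abs]
    exact core (l m) (t m : ℝ) (l m : ℝ) ((t m : ℝ) * (l m : ℝ))
      (1 - 1 / ((t m : ℝ) * (l m : ℝ))) (1 - 2 / ((t m : ℝ) * (l m : ℝ)))
      ((1 - 1 / ((t m : ℝ) * (l m : ℝ)))^2)
      (Real.exp (-(1/(t m : ℝ)))) (Real.exp (-(2/(t m : ℝ))))
      (by exact_mod_cast ht m) (by exact_mod_cast hm) rfl rfl rfl rfl rfl rfl rfl
  have htend : Filter.Tendsto (fun m => (576:ℝ) / (l m : ℝ)) Filter.atTop (nhds 0) :=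
    Filter.Tendsto.div_atTop tendsto_const_nhds (tendsto_natCast_atTop_atTop.comp hltop)
  have h0 : Filter.Tendsto (fun m => f m - 1) Filter.atTop (nhds 0) :=
    squeeze_zero_norm' hev htend
  have h1 := h0.add_const 1
  simpa using h1
end

section
/- Let (n_m) be a sequence of positive integers tending to infinity and (h_m) a sequence of positive integers with h_m^2/n_m → 0 (in particular, for fixed h this covers h_m = h). Let X_{n_m} be the image size of a uniformly random function from an n_m-element set to itself. Then ℙ(X_{n_m} = h_m) / [ (1/h_m!) n_m^{h_m} (h_m/n_m)^{n_m} ] → 1 as m → ∞. -/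
open Finset

section Aux

private lemma fiber_card' (n h : ℕ) (S : Finset (Fin n)) (hS : S.card = h) :
    (univ.filter fun f : Fin n → Fin n => univ.image f = S).card
      = (univ.filter fun g : Fin n → Fin h => Function.Surjective g).card := by
  classical
  rw [← Fintype.card_subtype, ← Fintype.card_subtype]
  refine Fintype.card_congr ?_
  let e : {x // x ∈ S} ≃ Fin h := S.equivFinOfCardEq hS
  have e1 : {f : Fin n → Fin n // univ.image f = S} ≃ {f : Fin n → Fin n // Set.range f = ↑S} :=
    Equiv.subtypeEquivRight (fun f => by rw [← Finset.coe_inj, coe_image, coe_univ, Set.image_univ])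
  have e2 : {f : Fin n → Fin n // Set.range f = ↑S} ≃ {g : Fin n → {x // x ∈ S} // Function.Surjective g} :=
    { toFun := fun f => ⟨fun x => ⟨f.1 x, by have := f.2; rw [Set.ext_iff] at this; exact (this (f.1 x)).mp (Set.mem_range_self x)⟩,
        by
          rintro ⟨y, hy⟩
          rw [← Finset.mem_coe, ← f.2] at hy
          obtain ⟨x, hx⟩ := hy
          exact ⟨x, Subtype.ext hx⟩⟩
      invFun := fun g => ⟨fun x => (g.1 x : Fin n),
        by
          have h1 : (fun x => (g.1 x : Fin n)) = Subtype.val ∘ g.1 := rfl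
          rw [h1, Set.range_comp, g.2.range_eq, Set.image_univ, Subtype.range_coe_subtype]
          ext x; simp⟩
      left_inv := fun f => rfl
      right_inv := fun g => rfl }
  have e3 : {g : Fin n → {x // x ∈ S} // Function.Surjective g} ≃ {g : Fin n → Fin h // Function.Surjective g} :=
    Equiv.subtypeEquiv (Equiv.arrowCongr (Equiv.refl _) e)
      (fun g => by
        constructor
        · intro hg
          simpa [Equiv.arrowCongr] using e.surjective.comp hg
        · intro hg y
          obtain ⟨x, hx⟩ := hg (e y)
          exact ⟨x, e.injective (by simpa [Equiv.arrowCongr] using hx)⟩)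
  exact (e1.trans e2).trans e3

private lemma count_eq' (n h : ℕ) :
    (univ.filter (fun f : Fin n → Fin n => (univ.image f).card = h)).card
      = n.choose h * (univ.filter fun g : Fin n → Fin h => Function.Surjective g).card := by
  classical
  have key : ∀ f ∈ univ.filter (fun f : Fin n → Fin n => (univ.image f).card = h),
      univ.image f ∈ powersetCard h (univ : Finset (Fin n)) := by
    intro f hf
    rw [mem_filter] at hf
    exact mem_powersetCard_univ.mpr hf.2
  rw [Finset.card_eq_sum_card_fiberwise key]
  have hsum : ∀ S ∈ powersetCard h (univ : Finset (Fin n)),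
      ((univ.filter (fun f : Fin n → Fin n => (univ.image f).card = h)).filter
        (fun f => univ.image f = S)).card
        = (univ.filter fun g : Fin n → Fin h => Function.Surjective g).card := by
    intro S hS
    have hSc : S.card = h := mem_powersetCard_univ.mp hS
    rw [filter_filter]
    have : (univ.filter (fun f : Fin n → Fin n => (univ.image f).card = h ∧ univ.image f = S))
        = univ.filter (fun f => univ.image f = S) := by
      apply filter_congr
      intro f _
      constructor
      · exact fun hf => hf.2
      · exact fun hf => ⟨hf ▸ hSc, hf⟩
    rw [this]
    exact fiber_card' n h S hSc
  rw [Finset.sum_congr rfl hsum, Finset.sum_const, card_powersetCard, card_univ, Fintype.card_fin,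
    smul_eq_mul]

private lemma surj_le' (n h : ℕ) :
    (univ.filter fun g : Fin n → Fin h => Function.Surjective g).card ≤ h ^ n := by
  classical
  calc (univ.filter fun g : Fin n → Fin h => Function.Surjective g).card
      ≤ (univ : Finset (Fin n → Fin h)).card := card_filter_le _ _
    _ = h ^ n := by rw [card_univ, Fintype.card_fun, Fintype.card_fin, Fintype.card_fin]

private lemma avoid_card' (n h : ℕ) (i : Fin h) :
    (univ.filter fun g : Fin n → Fin h => ∀ x, g x ≠ i).card = (h - 1) ^ n := by
  classical
  rw [← Fintype.card_subtype]
  have := Fintype.card_congr (Equiv.subtypePiEquivPi (p := fun (_ : Fin n) (j : Fin h) => j ≠ i))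
  rw [this, Fintype.card_pi]
  have hc : Fintype.card {j : Fin h // j ≠ i} = h - 1 := by
    rw [Fintype.card_subtype_compl, Fintype.card_fin, Fintype.card_subtype_eq]
  simp [hc]

private lemma surj_ge' (n h : ℕ) :
    h ^ n ≤ (univ.filter fun g : Fin n → Fin h => Function.Surjective g).card + h * (h - 1) ^ n := by
  classical
  have hsub : (univ.filter fun g : Fin n → Fin h => ¬ Function.Surjective g)
      ⊆ univ.biUnion (fun i : Fin h => univ.filter fun g => ∀ x, g x ≠ i) := by
    intro g hg
    rw [mem_filter, Function.Surjective] at hg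
    push_neg at hg
    obtain ⟨i, hi⟩ := hg.2
    exact mem_biUnion.mpr ⟨i, mem_univ i, mem_filter.mpr ⟨mem_univ g, hi⟩⟩
  have h1 := Finset.card_le_card hsub
  have h2 := Finset.card_biUnion_le (s := (univ : Finset (Fin h)))
    (t := fun i : Fin h => univ.filter fun g : Fin n → Fin h => ∀ x, g x ≠ i)
  have h3 : ∑ i : Fin h, (univ.filter fun g : Fin n → Fin h => ∀ x, g x ≠ i).card
      = h * (h - 1) ^ n := by
    simp only [avoid_card']
    rw [Finset.sum_const, card_univ, Fintype.card_fin, smul_eq_mul]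
  have hsplit := Finset.card_filter_add_card_filter_not
    (s := (univ : Finset (Fin n → Fin h))) (fun g : Fin n → Fin h => Function.Surjective g)
  have hcard : (univ : Finset (Fin n → Fin h)).card = h ^ n := by
    rw [card_univ, Fintype.card_fun, Fintype.card_fin, Fintype.card_fin]
  rw [← hcard, ← hsplit]
  exact Nat.add_le_add_left (h1.trans (h2.trans (le_of_eq h3))) _

private lemma P_upper' (n h : ℕ) (hn1 : 1 ≤ n) :
    (n.descFactorial h : ℝ) / (n:ℝ)^h ≤ 1 := by
  have hn0 : (0:ℝ) < (n:ℝ)^h := by positivity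
  rw [div_le_one hn0]
  exact_mod_cast Nat.descFactorial_le_pow n h

private lemma P_lower' (n h : ℕ) (hhn : h ≤ n) (hn1 : 1 ≤ n) :
    1 - (h:ℝ)^2/(n:ℝ) ≤ (n.descFactorial h : ℝ) / (n:ℝ)^h := by
  have hn0 : (0:ℝ) < (n:ℝ) := by exact_mod_cast hn1
  have hd : ((n - h : ℕ) : ℝ)^h ≤ (n.descFactorial h : ℝ) := by
    have : (n - h)^h ≤ n.descFactorial h := by
      rw [Nat.descFactorial_eq_prod_range]
      calc (n - h)^h = (n - h)^(range h).card := by rw [card_range]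
        _ ≤ ∏ i ∈ range h, (n - i) := pow_card_le_prod _ _ _
            (fun i hi => Nat.sub_le_sub_left (le_of_lt (mem_range.mp hi)) n)
    exact_mod_cast this
  have hb : 1 - (h:ℝ)^2/n ≤ ((n:ℝ) - h) ^ h / (n:ℝ)^h := by
    rw [← div_pow]
    have hber := one_add_mul_le_pow (a := -((h:ℝ)/n)) (by
      have : (h:ℝ)/n ≤ 1 := by
        rw [div_le_one hn0]; exact_mod_cast hhn
      linarith) h
    have heq : (1 + -((h:ℝ)/n)) = ((n:ℝ) - h)/n := by field_simp; ring
    rw [heq] at hber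
    refine le_trans (le_of_eq ?_) hber
    ring
  refine hb.trans ?_
  have : ((n:ℝ) - h) ^ h = ((n - h : ℕ) : ℝ) ^ h := by rw [Nat.cast_sub hhn]
  rw [this]
  gcongr

private lemma Q_upper' (n h : ℕ) (hh1 : 1 ≤ h) :
    ((univ.filter fun g : Fin n → Fin h => Function.Surjective g).card : ℝ) / (h:ℝ)^n ≤ 1 := by
  have : (0:ℝ) < (h:ℝ)^n := by positivity
  rw [div_le_one this]
  exact_mod_cast surj_le' n h

private lemma Q_lower' (n h : ℕ) (hh1 : 1 ≤ h) :
    1 - (h:ℝ) * (((h - 1 : ℕ):ℝ) / (h:ℝ))^n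
      ≤ ((univ.filter fun g : Fin n → Fin h => Function.Surjective g).card : ℝ) / (h:ℝ)^n := by
  have hh0 : (0:ℝ) < (h:ℝ) := by exact_mod_cast hh1
  have hpow : (0:ℝ) < (h:ℝ)^n := by positivity
  have hge : ((h:ℝ))^n - (h:ℝ) * ((h-1:ℕ):ℝ)^n
      ≤ ((univ.filter fun g : Fin n → Fin h => Function.Surjective g).card : ℝ) := by
    have := surj_ge' n h
    have hc : ((h:ℕ):ℝ)^n ≤ ((univ.filter fun g : Fin n → Fin h => Function.Surjective g).card : ℝ)
        + (h:ℝ) * ((h-1:ℕ):ℝ)^n := by exact_mod_cast this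
    linarith
  rw [div_pow]
  have heq : 1 - (h:ℝ) * (((h-1:ℕ):ℝ)^n / (h:ℝ)^n)
      = ((h:ℝ)^n - (h:ℝ)*((h-1:ℕ):ℝ)^n) / (h:ℝ)^n := by
    field_simp
  rw [heq]
  gcongr

private lemma err_bound' (n h : ℕ) (hh1 : 1 ≤ h) (hn1 : 1 ≤ n) (hsq : h^2 ≤ n) :
    (h:ℝ) * (((h - 1 : ℕ):ℝ) / (h:ℝ))^n ≤ Real.sqrt n * Real.exp (-Real.sqrt n) := by
  have hh0 : (0:ℝ) < (h:ℝ) := by exact_mod_cast hh1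
  have hn0 : (0:ℝ) < (n:ℝ) := by exact_mod_cast hn1
  have hcast : ((h - 1 : ℕ):ℝ) = (h:ℝ) - 1 := by rw [Nat.cast_sub hh1]; simp
  have hfrac : ((h - 1 : ℕ):ℝ) / (h:ℝ) = 1 - 1/(h:ℝ) := by rw [hcast]; field_simp
  have h1 : (0:ℝ) ≤ 1 - 1/(h:ℝ) := by
    have : 1/(h:ℝ) ≤ 1 := by rw [div_le_one hh0]; exact_mod_cast hh1
    linarith
  have h2 : 1 - 1/(h:ℝ) ≤ Real.exp (-(1/(h:ℝ))) := by
    have := Real.add_one_le_exp (-(1/(h:ℝ))); linarith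
  have h3 : (1 - 1/(h:ℝ))^n ≤ Real.exp (-(1/(h:ℝ)))^n := pow_le_pow_left₀ h1 h2 n
  have h4 : Real.exp (-(1/(h:ℝ)))^n = Real.exp (-((n:ℝ)/(h:ℝ))) := by
    rw [← Real.exp_nat_mul]; congr 1; field_simp
  have hsqrt : (h:ℝ) ≤ Real.sqrt n := by
    have : Real.sqrt ((h:ℝ)^2) ≤ Real.sqrt n := Real.sqrt_le_sqrt (by exact_mod_cast hsq)
    rwa [Real.sqrt_sq hh0.le] at this
  have h5 : Real.sqrt n ≤ (n:ℝ)/(h:ℝ) := by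
    rw [le_div_iff₀ hh0]
    calc Real.sqrt n * (h:ℝ) ≤ Real.sqrt n * Real.sqrt n :=
          mul_le_mul_of_nonneg_left hsqrt (Real.sqrt_nonneg _)
      _ = n := Real.mul_self_sqrt hn0.le
  have h6 : Real.exp (-((n:ℝ)/(h:ℝ))) ≤ Real.exp (-Real.sqrt n) :=
    Real.exp_le_exp.mpr (by linarith)
  rw [hfrac]
  exact mul_le_mul hsqrt ((h3.trans (le_of_eq h4)).trans h6) (by positivity) (Real.sqrt_nonneg _)

end Aux

/-- Asymptotics for small image sizes: if `n_m → ∞` and `h_m² / n_m → 0`, then the probability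
that a uniformly random function from an `n_m`-element set to itself has image size exactly
`h_m` is asymptotic to `(1/h_m!) n_m^{h_m} (h_m/n_m)^{n_m}`. -/
theorem image_size_small_asymptotic (n h : ℕ → ℕ) (hh : ∀ m, 0 < h m)
    (hn : Filter.Tendsto n Filter.atTop Filter.atTop)
    (hh2 : Filter.Tendsto (fun m => (h m : ℝ) ^ 2 / (n m : ℝ)) Filter.atTop (nhds 0)) :
    Filter.Tendsto
      (fun m =>
        (((Finset.univ.filter (fun f : Fin (n m) → Fin (n m) =>
              (Finset.univ.image f).card = h m)).card : ℝ) / (n m : ℝ) ^ (n m)) /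
          ((1 / ((h m).factorial : ℝ)) * (n m : ℝ) ^ (h m) * ((h m : ℝ) / (n m : ℝ)) ^ (n m)))
      Filter.atTop (nhds 1) := by
  classical
  set P : ℕ → ℝ := fun m => ((n m).descFactorial (h m) : ℝ) / (n m : ℝ) ^ (h m) with hP_def
  set Q : ℕ → ℝ := fun m =>
    (((univ.filter fun g : Fin (n m) → Fin (h m) => Function.Surjective g).card : ℝ))
      / (h m : ℝ) ^ (n m) with hQ_def
  -- eventual basic facts
  have hev : ∀ᶠ m in Filter.atTop, 1 ≤ n m ∧ (h m)^2 ≤ n m := by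
    have h1 : ∀ᶠ m in Filter.atTop, 1 ≤ n m := hn.eventually_ge_atTop 1
    have h2 : ∀ᶠ m in Filter.atTop, (h m : ℝ)^2 / (n m : ℝ) < 1 :=
      hh2.eventually (gt_mem_nhds one_pos)
    filter_upwards [h1, h2] with m hm1 hm2
    refine ⟨hm1, ?_⟩
    have hn0 : (0:ℝ) < (n m : ℝ) := by exact_mod_cast hm1
    have : (h m : ℝ)^2 < (n m : ℝ) := by
      rwa [div_lt_one hn0] at hm2
    exact_mod_cast this.le
  have hhn : ∀ᶠ m in Filter.atTop, h m ≤ n m := by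
    filter_upwards [hev] with m hm
    calc h m ≤ (h m)^2 := Nat.le_self_pow two_ne_zero _
      _ ≤ n m := hm.2
  -- P tends to 1
  have hPl : ∀ᶠ m in Filter.atTop, 1 - (h m : ℝ)^2/(n m : ℝ) ≤ P m := by
    filter_upwards [hev, hhn] with m hm hmn
    exact P_lower' (n m) (h m) hmn hm.1
  have hPu : ∀ᶠ m in Filter.atTop, P m ≤ 1 := by
    filter_upwards [hev] with m hm
    exact P_upper' (n m) (h m) hm.1
  have hPt : Filter.Tendsto P Filter.atTop (nhds 1) := by
    refine tendsto_of_tendsto_of_tendsto_of_le_of_le' ?_ tendsto_const_nhds hPl hPu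
    have : Filter.Tendsto (fun m => 1 - (h m : ℝ)^2/(n m : ℝ)) Filter.atTop (nhds (1 - 0)) :=
      tendsto_const_nhds.sub hh2
    simpa using this
  -- error term tends to 0
  have hs : Filter.Tendsto (fun m => Real.sqrt (n m)) Filter.atTop Filter.atTop := by
    have hsqrt : Filter.Tendsto Real.sqrt Filter.atTop Filter.atTop := by
      apply Filter.tendsto_atTop_atTop_of_monotone (fun a b hab => Real.sqrt_le_sqrt hab)
      intro b
      exact ⟨b ^ 2, by rw [Real.sqrt_sq_eq_abs]; exact le_abs_self b⟩
    exact hsqrt.comp (tendsto_natCast_atTop_atTop.comp hn)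
  have herr : Filter.Tendsto (fun m => Real.sqrt (n m) * Real.exp (-Real.sqrt (n m)))
      Filter.atTop (nhds 0) := by
    have := (Real.tendsto_pow_mul_exp_neg_atTop_nhds_zero 1).comp hs
    simpa [Function.comp_def] using this
  -- Q tends to 1
  have hQl : ∀ᶠ m in Filter.atTop, 1 - Real.sqrt (n m) * Real.exp (-Real.sqrt (n m)) ≤ Q m := by
    filter_upwards [hev] with m hm
    have hb := Q_lower' (n m) (h m) (hh m)
    have he := err_bound' (n m) (h m) (hh m) hm.1 hm.2
    have : 1 - Real.sqrt (n m) * Real.exp (-Real.sqrt (n m))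
        ≤ 1 - (h m : ℝ) * (((h m - 1 : ℕ):ℝ) / (h m:ℝ))^(n m) := by linarith
    exact this.trans hb
  have hQu : ∀ᶠ m in Filter.atTop, Q m ≤ 1 := by
    filter_upwards with m
    exact Q_upper' (n m) (h m) (hh m)
  have hQt : Filter.Tendsto Q Filter.atTop (nhds 1) := by
    refine tendsto_of_tendsto_of_tendsto_of_le_of_le' ?_ tendsto_const_nhds hQl hQu
    have : Filter.Tendsto (fun m => 1 - Real.sqrt (n m) * Real.exp (-Real.sqrt (n m)))
        Filter.atTop (nhds (1 - 0)) := tendsto_const_nhds.sub herr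
    simpa using this
  -- eventual equality of the ratio with P * Q
  have hEq : (fun m =>
        (((Finset.univ.filter (fun f : Fin (n m) → Fin (n m) =>
              (Finset.univ.image f).card = h m)).card : ℝ) / (n m : ℝ) ^ (n m)) /
          ((1 / ((h m).factorial : ℝ)) * (n m : ℝ) ^ (h m) * ((h m : ℝ) / (n m : ℝ)) ^ (n m)))
      =ᶠ[Filter.atTop] (fun m => P m * Q m) := by
    filter_upwards [hev] with m hm
    have hn0 : ((n m : ℝ)) ≠ 0 := by
      have : (0:ℝ) < (n m : ℝ) := by exact_mod_cast hm.1
      exact this.ne'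
    have hh0 : ((h m : ℝ)) ≠ 0 := by
      have : (0:ℝ) < (h m : ℝ) := by exact_mod_cast hh m
      exact this.ne'
    have hf0 : (((h m).factorial : ℝ)) ≠ 0 := by
      exact_mod_cast (Nat.factorial_pos (h m)).ne'
    have hA : (((Finset.univ.filter (fun f : Fin (n m) → Fin (n m) =>
          (Finset.univ.image f).card = h m)).card : ℝ))
        = ((n m).choose (h m) : ℝ) *
          (((univ.filter (fun g : Fin (n m) → Fin (h m) => Function.Surjective g)).card : ℝ)) := by
      rw [count_eq' (n m) (h m)]
      push_cast
      ring
    have hdesc : (((n m).descFactorial (h m) : ℕ) : ℝ)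
        = (((h m).factorial : ℕ) : ℝ) * (((n m).choose (h m) : ℕ) : ℝ) := by
      exact_mod_cast congrArg (Nat.cast (R := ℝ)) (Nat.descFactorial_eq_factorial_mul_choose (n m) (h m))
    rw [hA, hP_def, hQ_def]
    simp only
    rw [hdesc]
    field_simp
    rw [mul_assoc _ ((n m : ℝ) ^ (n m)), ← mul_pow, mul_div_cancel₀ _ hn0]
  refine Filter.Tendsto.congr' hEq.symm ?_
  have := hPt.mul hQt
  simpa using this
end

section
/- Let q be a prime power with q − 1 = ℓs, r a positive integer, t = gcd(r, s), and γ a fixed generator of 𝔽_q^*. Choose a_0, …, a_{ℓ−1} independently and uniformly at random from 𝔽_q, and let g = f^r_{a_0,…,a_{ℓ−1}} be the associated r-th order cyclotomic mapping of index ℓ. Let T_j = γ^j {x^{tℓ} : x ∈ 𝔽_q^*} for 0 ≤ j ≤ tℓ−1 be the cyclotomic cosets of index tℓ, and let Y be the number of indices j ∈ {0,…,tℓ−1} such that T_j is disjoint from the value set g(𝔽_q). Then for every integer k with 0 ≤ k ≤ tℓ, 𝔼((Y)_k) = (tℓ)_k (1 − sk/(tq))^ℓ, where (m)_k = m(m−1)⋯(m−k+1).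 -/
private lemma cg_solve {M : Type*} [CommGroup M] (au c d y z w : M)
    (e : c * y = au * (d * z)) (hz : z = w) :
    c * d⁻¹ * (y * w⁻¹) = au := by
  subst hz
  have h1 : c * d⁻¹ * (y * z⁻¹) = (c * y) * (d * z)⁻¹ := by
    rw [mul_inv]; simp [mul_comm, mul_left_comm, mul_assoc]
  rw [h1, e, mul_inv_cancel_right]

private lemma cg_cancel {M : Type*} [CommGroup M] (a b d u v : M)
    (h : a * d⁻¹ * u = b * d⁻¹ * v) : a * u = b * v := by
  have e : ∀ x y : M, x * d⁻¹ * y * d = x * y := by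
    intro x y
    calc x * d⁻¹ * y * d = x * (d⁻¹ * (y * d)) := by rw [mul_assoc, mul_assoc]
      _ = x * (d⁻¹ * (d * y)) := by rw [mul_comm y d]
      _ = x * y := by rw [inv_mul_cancel_left]
  rw [← e a u, ← e b v, h]

private lemma cg_solve2 {M : Type*} [CommGroup M] (c d v e : M) :
    c * d⁻¹ * v * (d * e) = c * (v * e) := by
  simp [mul_comm, mul_left_comm, mul_assoc]

/-- Falling factorial moments of the number `Y` of cyclotomic cosets of index `tℓ` missed by
the value set of a random `r`-th order cyclotomic mapping of index `ℓ = (q-1)/s`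
(branch constants `a_0, …, a_{ℓ-1}` chosen independently and uniformly from `𝔽_q`):
`𝔼((Y)_k) = (tℓ)_k (1 - sk/(tq))^ℓ`. -/
theorem cyclotomic_mapping_missing_cosets_moments
    (F : Type) [Field F] [Fintype F] (q : ℕ) (hq : q = Fintype.card F)
    (s l r t : ℕ) (hs : 0 < s) (hl : 0 < l) (hr : 0 < r)
    (hls : l * s = q - 1) (ht : t = Nat.gcd r s)
    (γ : Fˣ) (hγ : ∀ x : Fˣ, x ∈ Subgroup.zpowers γ)
    (G : (Fin l → F) → F → F)
    (hG : ∀ a, G a 0 = 0 ∧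
      ∀ (i : Fin l) (y : Fˣ), G a ((γ : F) ^ (i : ℕ) * (y : F) ^ l)
        = a i * ((γ : F) ^ (i : ℕ) * (y : F) ^ l) ^ r)
    (Y : (F → F) → ℕ)
    (hY : ∀ g, Y g =
      Nat.card {j : Fin (t * l) // ∀ y : Fˣ, (γ : F) ^ (j : ℕ) * (y : F) ^ (t * l) ∉ Set.range g})
    (k : ℕ) (hk : k ≤ t * l) :
    (∑ a : Fin l → F, (((Y (G a)).descFactorial k : ℕ) : ℝ)) / (q : ℝ) ^ l
      = (((t * l).descFactorial k : ℕ) : ℝ) * (1 - (s : ℝ) * (k : ℝ) / ((t : ℝ) * (q : ℝ))) ^ l := by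
  classical
  -- basic numerology
  have htpos : 0 < t := ht ▸ Nat.gcd_pos_of_pos_left s hr
  have htds : t ∣ s := ht ▸ Nat.gcd_dvd_right r s
  have htdr : t ∣ r := ht ▸ Nat.gcd_dvd_left r s
  set c : ℕ := s / t with hcdef
  have hc : t * c = s := Nat.mul_div_cancel' htds
  have hq1 : 1 ≤ q - 1 := by rw [← hls]; exact Nat.one_le_iff_ne_zero.2 (by positivity)
  have hq2 : 2 ≤ q := by omega
  have hqsub : q - 1 + 1 = q := by omega
  have hcard_units : Fintype.card Fˣ = q - 1 := by rw [Fintype.card_units, hq]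
  have hord : orderOf γ = q - 1 := by
    rw [orderOf_eq_card_of_forall_mem_zpowers hγ, Nat.card_eq_fintype_card, hcard_units]
  have hpow_units : ∀ y : Fˣ, y ^ (q - 1) = 1 := fun y => by
    rw [← hcard_units]; exact pow_card_eq_one
  have hdvd : t * l ∣ q - 1 := ⟨c, by rw [← hls, ← hc]; ring⟩
  have hmem_pow : ∀ x : Fˣ, ∃ m : ℕ, γ ^ m = x := fun x =>
    (Submonoid.mem_powers_iff x γ).1 ((mem_powers_iff_mem_zpowers).2 (hγ x))
  -- decomposition of units
  have hdecomp : ∀ x : Fˣ, ∃ (i : Fin l) (y : Fˣ), x = γ ^ (i : ℕ) * y ^ l := by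
    intro x
    obtain ⟨m, hm⟩ := hmem_pow x
    refine ⟨⟨m % l, Nat.mod_lt _ hl⟩, γ ^ (m / l), ?_⟩
    rw [← hm]
    calc γ ^ m = γ ^ (m % l + l * (m / l)) := by rw [Nat.mod_add_div]
      _ = γ ^ (m % l) * (γ ^ (m / l)) ^ l := by
          rw [pow_add, pow_mul']
  -- l*r-th powers are t*l-th powers and vice versa
  have hlt_lr1 : ∀ z : Fˣ, ∃ w : Fˣ, z ^ (l * r) = w ^ (t * l) := by
    intro z
    obtain ⟨d, hd⟩ := htdr
    refine ⟨z ^ d, ?_⟩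
    rw [← pow_mul]
    congr 1
    rw [hd]; ring
  have hlt_lr2 : ∀ z : Fˣ, ∃ w : Fˣ, z ^ (t * l) = w ^ (l * r) := by
    intro z
    have h0 : Nat.gcd (l * r) (l * s) = l * t := by rw [Nat.gcd_mul_left, ht]
    have hbez := Nat.gcd_eq_gcd_ab (l * r) (l * s)
    rw [h0] at hbez
    refine ⟨z ^ Nat.gcdA (l * r) (l * s), ?_⟩
    have e3 : z ^ (((l * s : ℕ)) : ℤ) = 1 := by rw [zpow_natCast, hls, hpow_units]
    have key : z ^ ((l * t : ℕ) : ℤ) = (z ^ Nat.gcdA (l * r) (l * s)) ^ ((l * r : ℕ) : ℤ) := by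
      have f1 : z ^ ((((l * r : ℕ)) : ℤ) * Nat.gcdA (l * r) (l * s))
          = (z ^ Nat.gcdA (l * r) (l * s)) ^ (((l * r : ℕ)) : ℤ) := by
        rw [mul_comm, zpow_mul]
      have f2 : z ^ ((((l * s : ℕ)) : ℤ) * Nat.gcdB (l * r) (l * s)) = 1 := by
        rw [zpow_mul, e3, one_zpow]
      rw [hbez, zpow_add, f1, f2, mul_one]
    calc z ^ (t * l) = z ^ ((l * t : ℕ) : ℤ) := by rw [zpow_natCast, mul_comm t l]
      _ = (z ^ Nat.gcdA (l * r) (l * s)) ^ ((l * r : ℕ) : ℤ) := key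
      _ = (z ^ Nat.gcdA (l * r) (l * s)) ^ (l * r) := by rw [zpow_natCast]
  -- the bad cosets
  set Hfin : Finset Fˣ := Finset.image (fun u : Fˣ => u ^ (t * l)) Finset.univ with hHfin
  set badU : Fin l → ℕ → Finset Fˣ :=
    fun i j => Finset.image (fun v => γ ^ j * (γ ^ ((i : ℕ) * r))⁻¹ * v) Hfin with hbadU
  set badF : Fin l → ℕ → Finset F := fun i j => (badU i j).image Units.val with hbadF
  have hHcard : Hfin.card = c := by
    have hset : (Hfin : Set Fˣ) = (Subgroup.zpowers (γ ^ (t * l)) : Set Fˣ) := by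
      ext x
      simp only [hHfin, Finset.coe_image, Finset.coe_univ, Set.image_univ, Set.mem_range,
        SetLike.mem_coe]
      constructor
      · rintro ⟨u, rfl⟩
        obtain ⟨m, rfl⟩ := hmem_pow u
        refine ⟨(m : ℤ), ?_⟩
        show (γ ^ (t * l)) ^ (m : ℤ) = (γ ^ m) ^ (t * l)
        rw [zpow_natCast, ← pow_mul, ← pow_mul, mul_comm]
      · intro hx
        obtain ⟨m, rfl⟩ := (Submonoid.mem_powers_iff _ _).1 ((mem_powers_iff_mem_zpowers).2 hx)
        exact ⟨γ ^ m, by rw [← pow_mul, ← pow_mul, mul_comm]⟩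
    have hq1eq : q - 1 = (t * l) * c := by rw [← hls, ← hc]; ring
    calc Hfin.card = (↑Hfin : Set Fˣ).ncard := (Set.ncard_coe_finset _).symm
      _ = ((Subgroup.zpowers (γ ^ (t * l)) : Set Fˣ)).ncard := by rw [hset]
      _ = Nat.card (Subgroup.zpowers (γ ^ (t * l))) := by
          rw [← Nat.card_coe_set_eq]; rfl
      _ = orderOf (γ ^ (t * l)) := Nat.card_zpowers _
      _ = c := by
          rw [orderOf_pow, hord, Nat.gcd_eq_right hdvd, hq1eq,
            Nat.mul_div_cancel_left _ (by positivity)]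
  have hbadUcard : ∀ i j, (badU i j).card = c := fun i j => by
    rw [hbadU]
    rw [Finset.card_image_of_injective _ (mul_right_injective _), hHcard]
  have hbadFcard : ∀ i j, (badF i j).card = c := fun i j => by
    rw [hbadF]
    rw [Finset.card_image_of_injective _ Units.val_injective, hbadUcard]
  -- disjointness
  have hkey : ∀ (jn j'n : ℕ), jn < t * l → j'n < t * l → ∀ y y' : Fˣ,
      γ ^ jn * y ^ (t * l) = γ ^ j'n * y' ^ (t * l) → jn = j'n := by
    have main : ∀ (jn j'n : ℕ), jn < t * l → j'n ≤ jn → ∀ y y' : Fˣ,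
        γ ^ jn * y ^ (t * l) = γ ^ j'n * y' ^ (t * l) → jn = j'n := by
      intro jn j'n hjn hle y y' h
      have h1 : γ ^ j'n * (γ ^ (jn - j'n) * y ^ (t * l)) = γ ^ j'n * (y' ^ (t * l)) := by
        rw [← mul_assoc, ← pow_add, Nat.add_sub_cancel' hle, h]
      have h2 : γ ^ (jn - j'n) * y ^ (t * l) = y' ^ (t * l) := mul_left_cancel h1
      have h3 : γ ^ (jn - j'n) = (y' * y⁻¹) ^ (t * l) := by
        rw [mul_pow, inv_pow, ← h2, mul_assoc, mul_inv_cancel, mul_one]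
      obtain ⟨m, hm⟩ := hmem_pow (y' * y⁻¹)
      rw [← hm, ← pow_mul] at h3
      have h4 : (jn - j'n) ≡ m * (t * l) [MOD q - 1] := by
        rw [← hord]; exact pow_eq_pow_iff_modEq.1 h3
      have h5 : (jn - j'n) ≡ m * (t * l) [MOD t * l] := h4.of_dvd hdvd
      have h6 : (jn - j'n) ≡ 0 [MOD t * l] :=
        h5.trans (Nat.modEq_zero_iff_dvd.2 ⟨m, (mul_comm _ _)⟩)
      have h7 : (t * l) ∣ (jn - j'n) := Nat.modEq_zero_iff_dvd.1 h6
      have h8 : jn - j'n = 0 := Nat.eq_zero_of_dvd_of_lt h7 (by omega)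
      omega
    intro jn j'n hjn hj'n y y' h
    rcases le_total j'n jn with hle | hle
    · exact main jn j'n hjn hle y y' h
    · exact (main j'n jn hj'n hle y' y h.symm).symm
  have hdisjU : ∀ (i : Fin l) (j j' : Fin (t * l)), j ≠ j' →
      Disjoint (badU i (j : ℕ)) (badU i (j' : ℕ)) := by
    intro i j j' hne
    rw [Finset.disjoint_left]
    intro x hx hx'
    simp only [hbadU, hHfin, Finset.mem_image, Finset.mem_univ, true_and] at hx hx'
    obtain ⟨v, ⟨u, rfl⟩, hv⟩ := hx
    obtain ⟨v', ⟨u', rfl⟩, hv'⟩ := hx'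
    apply hne
    apply Fin.ext
    refine hkey (j : ℕ) (j' : ℕ) j.isLt j'.isLt u u' ?_
    exact cg_cancel _ _ _ _ _ (hv.trans hv'.symm)
  have hdisj : ∀ (i : Fin l) (j j' : Fin (t * l)), j ≠ j' →
      Disjoint (badF i (j : ℕ)) (badF i (j' : ℕ)) := by
    intro i j j' hne
    rw [hbadF, Finset.disjoint_image Units.val_injective]
    exact hdisjU i j j' hne
  -- membership in the range of G a
  have hmemrange : ∀ (a : Fin l → F) (w : F), w ≠ 0 →
      (w ∈ Set.range (G a) ↔ ∃ (i : Fin l) (z : Fˣ),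
        w = a i * ((γ : F) ^ (i : ℕ) * (z : F) ^ l) ^ r) := by
    intro a w hw
    constructor
    · rintro ⟨x, rfl⟩
      by_cases hx : x = 0
      · exact absurd (by rw [hx, (hG a).1]) hw
      · obtain ⟨i, y, hxy⟩ := hdecomp (Units.mk0 x hx)
        have hxF : x = (γ : F) ^ (i : ℕ) * (y : F) ^ l := by
          have := congrArg (Units.val) hxy
          simpa [Units.val_mul, Units.val_pow_eq_pow_val] using this
        exact ⟨i, y, by rw [hxF, (hG a).2 i y]⟩
    · rintro ⟨i, z, rfl⟩
      exact ⟨(γ : F) ^ (i : ℕ) * (z : F) ^ l, (hG a).2 i z⟩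
  -- the missing-coset characterization
  have hmiss : ∀ (a : Fin l → F) (j : Fin (t * l)),
      (∀ y : Fˣ, (γ : F) ^ (j : ℕ) * (y : F) ^ (t * l) ∉ Set.range (G a)) ↔
        ∀ i : Fin l, a i ∉ badF i (j : ℕ) := by
    intro a j
    constructor
    · intro h i hbad
      simp only [hbadF, hbadU, hHfin, Finset.mem_image, Finset.mem_univ, true_and] at hbad
      obtain ⟨b, ⟨v, ⟨u, rfl⟩, rfl⟩, hba⟩ := hbad
      apply h u
      refine ⟨(γ : F) ^ (i : ℕ) * ((1 : Fˣ) : F) ^ l, ?_⟩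
      rw [(hG a).2 i 1, ← hba]
      have e1 : ((γ : F) ^ (i : ℕ) * ((1 : Fˣ) : F) ^ l) ^ r
          = ((γ ^ ((i : ℕ) * r) : Fˣ) : F) := by
        simp [one_pow, mul_one, ← pow_mul, Units.val_pow_eq_pow_val]
      have e2 : (γ ^ (j : ℕ) * (γ ^ ((i : ℕ) * r))⁻¹ * u ^ (t * l)) * γ ^ ((i : ℕ) * r)
          = γ ^ (j : ℕ) * (u ^ (t * l) * 1) := by
        have := cg_solve2 (γ ^ (j : ℕ)) (γ ^ ((i : ℕ) * r)) (u ^ (t * l)) (1 : Fˣ)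
        simpa using this
      rw [e1, ← Units.val_mul, e2]
      simp [Units.val_mul, Units.val_pow_eq_pow_val]
    · intro h y hy
      have hval : ((γ ^ (j : ℕ) * y ^ (t * l) : Fˣ) : F)
          = (γ : F) ^ (j : ℕ) * (y : F) ^ (t * l) := by
        simp [Units.val_mul, Units.val_pow_eq_pow_val]
      have hne : (γ : F) ^ (j : ℕ) * (y : F) ^ (t * l) ≠ 0 := by
        rw [← hval]; exact Units.ne_zero _
      obtain ⟨i, z, he⟩ := (hmemrange a _ hne).1 hy
      have hai : a i ≠ 0 := by
        intro h0; rw [h0, zero_mul] at he; exact hne he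
      set au := Units.mk0 (a i) hai with hau
      have heu : γ ^ (j : ℕ) * y ^ (t * l) = au * (γ ^ ((i : ℕ) * r) * z ^ (l * r)) := by
        apply Units.ext
        push_cast [Units.val_mul, Units.val_pow_eq_pow_val, hau, Units.val_mk0]
        rw [he, mul_pow, ← pow_mul, ← pow_mul]
      obtain ⟨wz, hwz⟩ := hlt_lr1 z
      have hsolve : γ ^ (j : ℕ) * (γ ^ ((i : ℕ) * r))⁻¹ * (y ^ (t * l) * (wz ^ (t * l))⁻¹)
          = au := cg_solve au _ _ _ _ _ heu hwz
      apply h i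
      simp only [hbadF, hbadU, hHfin, Finset.mem_image, Finset.mem_univ, true_and]
      refine ⟨γ ^ (j : ℕ) * (γ ^ ((i : ℕ) * r))⁻¹ * (y * wz⁻¹) ^ (t * l),
        ⟨(y * wz⁻¹) ^ (t * l), ⟨y * wz⁻¹, rfl⟩, rfl⟩, ?_⟩
      rw [mul_pow, inv_pow, hsolve, hau, Units.val_mk0]
  set missedSet : (Fin l → F) → Finset (Fin (t * l)) :=
    fun a => Finset.univ.filter (fun j => ∀ i : Fin l, a i ∉ badF i (j : ℕ)) with hmissedSet
  have hYcard : ∀ a, Y (G a) = (missedSet a).card := by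
    intro a
    rw [hY, Nat.card_eq_fintype_card, Fintype.card_subtype]
    apply Finset.card_bij (fun j _ => j)
    · intro j hj
      simp only [Finset.mem_filter, Finset.mem_univ, true_and] at hj ⊢
      rw [hmissedSet]
      simp only [Finset.mem_filter, Finset.mem_univ, true_and]
      exact (hmiss a j).1 hj
    · intro j _ j' _ h; exact h
    · intro j hj
      rw [hmissedSet] at hj
      simp only [Finset.mem_filter, Finset.mem_univ, true_and] at hj ⊢
      exact ⟨j, (hmiss a j).2 hj, rfl⟩
  -- main counting identity over ℕ
  have hcount : ∀ J : Finset (Fin (t * l)), J.card = k →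
      (Finset.univ.filter (fun a : Fin l → F => J ⊆ missedSet a)).card = (q - k * c) ^ l := by
    intro J hJ
    set Good : Fin l → Finset F := fun i => Finset.univ \ (J.biUnion (fun j => badF i (j : ℕ)))
      with hGood
    have hGoodcard : ∀ i, (Good i).card = q - k * c := by
      intro i
      rw [hGood]
      rw [Finset.card_sdiff_of_subset (Finset.subset_univ _), Finset.card_univ, ← hq]
      congr 1
      calc (J.biUnion (fun j => badF i (j : ℕ))).card
          = ∑ j ∈ J, (badF i (j : ℕ)).card :=
            Finset.card_biUnion (fun j _ j' _ hne => hdisj i j j' hne)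
        _ = ∑ _j ∈ J, c := Finset.sum_congr rfl (fun j _ => hbadFcard i _)
        _ = k * c := by rw [Finset.sum_const, smul_eq_mul, hJ]
    have hfe : Finset.univ.filter (fun a : Fin l → F => J ⊆ missedSet a)
        = Fintype.piFinset Good := by
      ext a
      simp only [Finset.mem_filter, Finset.mem_univ, true_and, Fintype.mem_piFinset, hGood,
        Finset.mem_sdiff, Finset.mem_biUnion]
      constructor
      · intro hJM i
        rintro ⟨j, hjJ, hbad⟩
        have hjm := hJM hjJ
        rw [hmissedSet] at hjm
        simp only [Finset.mem_filter, Finset.mem_univ, true_and] at hjm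
        exact hjm i hbad
      · intro hg j hjJ
        rw [hmissedSet]
        simp only [Finset.mem_filter, Finset.mem_univ, true_and]
        exact fun i hbad => (hg i) ⟨j, hjJ, hbad⟩
    rw [hfe, Fintype.card_piFinset, Finset.prod_congr rfl (fun i _ => hGoodcard i),
      Finset.prod_const, Finset.card_univ, Fintype.card_fin]
  have hmain : ∑ a : Fin l → F, (Y (G a)).descFactorial k
      = (t * l).descFactorial k * (q - k * c) ^ l := by
    have step1 : ∀ a : Fin l → F, (Y (G a)).descFactorial k
        = k.factorial * ((Finset.powersetCard k (Finset.univ : Finset (Fin (t * l)))).filter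
            (fun J => J ⊆ missedSet a)).card := by
      intro a
      have hsetJ : Finset.powersetCard k (missedSet a)
          = (Finset.powersetCard k (Finset.univ : Finset (Fin (t * l)))).filter
              (fun J => J ⊆ missedSet a) := by
        ext J
        simp only [Finset.mem_powersetCard, Finset.mem_filter, Finset.subset_univ, true_and]
        tauto
      rw [hYcard a, Nat.descFactorial_eq_factorial_mul_choose, ← Finset.card_powersetCard, hsetJ]
    calc ∑ a : Fin l → F, (Y (G a)).descFactorial k
        = ∑ a : Fin l → F, k.factorial *
            ((Finset.powersetCard k (Finset.univ : Finset (Fin (t * l)))).filter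
              (fun J => J ⊆ missedSet a)).card := Finset.sum_congr rfl (fun a _ => step1 a)
      _ = k.factorial * ∑ a : Fin l → F,
            ∑ J ∈ Finset.powersetCard k (Finset.univ : Finset (Fin (t * l))),
              if J ⊆ missedSet a then 1 else 0 := by
          rw [Finset.mul_sum]
          exact Finset.sum_congr rfl (fun a _ => by rw [Finset.card_filter])
      _ = k.factorial * ∑ J ∈ Finset.powersetCard k (Finset.univ : Finset (Fin (t * l))),
            ∑ a : Fin l → F, if J ⊆ missedSet a then 1 else 0 := by rw [Finset.sum_comm]
      _ = k.factorial * ∑ J ∈ Finset.powersetCard k (Finset.univ : Finset (Fin (t * l))),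
            (q - k * c) ^ l := by
          congr 1
          refine Finset.sum_congr rfl (fun J hJ => ?_)
          rw [← Finset.card_filter]
          exact hcount J (Finset.mem_powersetCard.1 hJ).2
      _ = k.factorial * ((t * l).choose k * (q - k * c) ^ l) := by
          rw [Finset.sum_const, Finset.card_powersetCard, Finset.card_univ, Fintype.card_fin,
            smul_eq_mul]
      _ = (t * l).descFactorial k * (q - k * c) ^ l := by
          rw [← mul_assoc, ← Nat.descFactorial_eq_factorial_mul_choose]
  -- final real arithmetic
  have hkc : k * c ≤ q - 1 := by
    calc k * c ≤ (t * l) * c := Nat.mul_le_mul_right c hk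
      _ = l * (t * c) := by ring
      _ = q - 1 := by rw [hc, hls]
  have hqR : (0 : ℝ) < (q : ℝ) := by exact_mod_cast Nat.lt_of_lt_of_le (by norm_num) hq2
  have hcast : ((q - k * c : ℕ) : ℝ) = (q : ℝ) - (k : ℝ) * (c : ℝ) := by
    have : k * c ≤ q := le_trans hkc (Nat.sub_le q 1)
    push_cast [Nat.cast_sub this]; ring
  have hcR : (c : ℝ) = (s : ℝ) / (t : ℝ) := by
    rw [hcdef]
    exact Nat.cast_div htds (by exact_mod_cast htpos.ne')
  have hfrac : 1 - (s : ℝ) * (k : ℝ) / ((t : ℝ) * (q : ℝ))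
      = ((q - k * c : ℕ) : ℝ) / (q : ℝ) := by
    rw [hcast, hcR]
    have htR : (t : ℝ) ≠ 0 := by exact_mod_cast htpos.ne'
    field_simp
  rw [hfrac]
  rw [div_pow, ← Nat.cast_sum]
  rw [hmain]
  push_cast
  field_simp
end

section
/- Let q be a prime power with q − 1 = ℓs, r a positive integer, t = gcd(r, s), and γ a fixed generator of 𝔽_q^*. Choose a_0, …, a_{ℓ−1} independently and uniformly at random from 𝔽_q, and let g = f^r_{a_0,…,a_{ℓ−1}} be the associated r-th order cyclotomic mapping of index ℓ. Let T_j = γ^j {x^{tℓ} : x ∈ 𝔽_q^*} for 0 ≤ j ≤ tℓ−1 be the cyclotomic cosets of index tℓ, and let Y be the number of indices j ∈ {0,…,tℓ−1} such that T_j is disjoint from the value set g(𝔽_q). Then for every integer k with 0 ≤ k ≤ tℓ, ℙ(Y = k) = C(tℓ, k) ∑_{j=0}^{tℓ−k} (−1)^{tℓ−k−j} C(tℓ−k, j) ( (t + sj)/(tq) )^ℓ. -/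
open Finset

theorem fiber_card (N m d : ℕ) [NeZero N] [NeZero m] (hm : 0 < m) (hd : 0 < d)
    (hN : N = m * d) (xt : ZMod m) :
    (Finset.univ.filter fun x : ZMod N => ((x.val : ℕ) : ZMod m) = xt).card = d := by
  classical
  have hNm0 : ((N : ℕ) : ZMod m) = 0 := by
    rw [hN]; push_cast; simp
  have hcastmod : ∀ a : ℕ, ((a % N : ℕ) : ZMod m) = (a : ZMod m) := by
    intro a
    conv_rhs => rw [← Nat.mod_add_div a N]
    push_cast
    rw [hNm0]
    ring
  have key : (Finset.univ.filter fun x : ZMod N => ((x.val : ℕ) : ZMod m) = xt).card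
      = (Finset.univ : Finset (Fin d)).card := by
    refine Finset.card_bij' (fun x _ => (⟨x.val / m % d, Nat.mod_lt _ hd⟩ : Fin d))
      (fun c => fun _ => ((xt.val + m * (c : ℕ) : ℕ) : ZMod N))
      (fun x hx => Finset.mem_univ _) (fun c hc => ?_) (fun x hx => ?_) (fun c hc => ?_)
    · -- bwd lands in the fiber
      simp only [Finset.mem_filter, Finset.mem_univ, true_and]
      rw [ZMod.val_natCast, hcastmod]
      push_cast
      simp [ZMod.natCast_self, ZMod.natCast_val, ZMod.cast_id]
    · -- left inverse : bwd (fwd x) = x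
      simp only [Finset.mem_filter, Finset.mem_univ, true_and] at hx
      have hval : x.val % m = xt.val := by
        have := congrArg ZMod.val hx
        rwa [ZMod.val_natCast] at this
      have hdivlt : x.val / m < d := by
        have : x.val < m * d := hN ▸ x.val_lt
        exact Nat.div_lt_of_lt_mul (by omega)
      dsimp only
      rw [Nat.mod_eq_of_lt hdivlt, ← hval, Nat.mod_add_div]
      simp [ZMod.natCast_val, ZMod.cast_id]
    · -- right inverse : fwd (bwd c) = c
      have hlt : xt.val + m * (c : ℕ) < N := by
        have h1 : xt.val < m := xt.val_lt
        have h2 : (c : ℕ) < d := c.isLt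
        calc xt.val + m * (c : ℕ) < m + m * (c : ℕ) := by omega
          _ = m * ((c : ℕ) + 1) := by ring
          _ ≤ m * d := Nat.mul_le_mul_left m h2
          _ = N := hN.symm
      apply Fin.ext
      dsimp only
      rw [ZMod.val_natCast, Nat.mod_eq_of_lt hlt, Nat.add_mul_div_left _ _ hm,
        Nat.div_eq_of_lt xt.val_lt, Nat.zero_add, Nat.mod_eq_of_lt c.isLt]
  rw [key]
  simp

theorem sum_pow_neg_one_real {β : Type*} [DecidableEq β] (X : Finset β) :
    ∑ J ∈ X.powerset, (-1 : ℝ) ^ J.card = if X = ∅ then 1 else 0 := by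
  have h := Finset.sum_powerset_neg_one_pow_card (x := X)
  have : ∑ J ∈ X.powerset, (-1 : ℝ) ^ J.card
      = ((∑ J ∈ X.powerset, (-1 : ℤ) ^ J.card : ℤ) : ℝ) := by push_cast; rfl
  rw [this, h]
  split <;> norm_num

theorem comb_core {α : Type} [Fintype α] (m k : ℕ) (hk : k ≤ m)
    (miss : α → Finset (Fin m)) (A : ℕ → ℝ)
    (hA : ∀ S : Finset (Fin m),
      ((univ.filter fun a => S ⊆ miss a).card : ℝ) = A S.card) :
    ((univ.filter fun a => (miss a).card = k).card : ℝ)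
      = (m.choose k : ℝ) * ∑ j ∈ range (m - k + 1),
          (-1 : ℝ) ^ (m - k - j) * ((m - k).choose j : ℝ) * A (m - j) := by
  classical
  set n := m - k with hn
  -- Step 1: split by the value of miss
  have h1 : (univ.filter fun a => (miss a).card = k).card
      = ∑ K ∈ powersetCard k (univ : Finset (Fin m)),
          (univ.filter fun a => miss a = K).card := by
    rw [Finset.card_eq_sum_card_fiberwise (f := miss)
      (t := powersetCard k (univ : Finset (Fin m)))]
    · refine Finset.sum_congr rfl fun K hK => ?_
      rw [Finset.filter_filter]
      simp only [mem_powersetCard] at hK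
      congr 1
      ext a
      simp only [Finset.mem_filter, Finset.mem_univ, true_and]
      exact ⟨fun h => h.2, fun h' => ⟨by rw [h', hK.2], h'⟩⟩
    · intro a ha
      simp only [mem_coe, mem_filter] at ha
      exact mem_powersetCard.mpr ⟨subset_univ _, ha.2⟩
  -- Step 2: inclusion-exclusion for a fixed K
  have h2 : ∀ K ∈ powersetCard k (univ : Finset (Fin m)),
      ((univ.filter fun a => miss a = K).card : ℝ)
        = ∑ J ∈ (univ \ K).powerset,
            (-1 : ℝ) ^ J.card * ((univ.filter fun a => K ∪ J ⊆ miss a).card : ℝ) := by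
    intro K hK
    have swap : ∑ J ∈ (univ \ K).powerset,
        (-1 : ℝ) ^ J.card * ((univ.filter fun a => K ∪ J ⊆ miss a).card : ℝ)
        = ∑ a : α, ∑ J ∈ (univ \ K).powerset,
            (-1 : ℝ) ^ J.card * (if K ∪ J ⊆ miss a then 1 else 0) := by
      rw [Finset.sum_comm]
      refine Finset.sum_congr rfl fun J hJ => ?_
      rw [← Finset.mul_sum]
      congr 1
      rw [Finset.sum_boole]
    rw [swap]
    have inner : ∀ a : α, (∑ J ∈ (univ \ K).powerset,
        (-1 : ℝ) ^ J.card * (if K ∪ J ⊆ miss a then 1 else 0))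
        = if miss a = K then 1 else 0 := by
      intro a
      by_cases hKa : K ⊆ miss a
      · have hsub : (miss a \ K).powerset ⊆ (univ \ K).powerset :=
          Finset.powerset_mono.mpr (Finset.sdiff_subset_sdiff (subset_univ _) le_rfl)
        have step : ∑ J ∈ (univ \ K).powerset,
            (-1 : ℝ) ^ J.card * (if K ∪ J ⊆ miss a then 1 else 0)
            = ∑ J ∈ (miss a \ K).powerset, (-1 : ℝ) ^ J.card := by
          rw [← Finset.sum_subset hsub]
          · refine Finset.sum_congr rfl fun J hJ => ?_
            simp only [mem_powerset] at hJ
            have : K ∪ J ⊆ miss a := by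
              rw [Finset.union_subset_iff]
              exact ⟨hKa, hJ.trans (Finset.sdiff_subset)⟩
            simp [this]
          · intro J hJ hJ'
            simp only [mem_powerset] at hJ hJ'
            have : ¬ K ∪ J ⊆ miss a := by
              intro hcon
              exact hJ' (Finset.subset_sdiff.mpr ⟨(Finset.subset_union_right).trans hcon,
                Finset.disjoint_left.mpr fun x hxJ hxK =>
                  (Finset.mem_sdiff.mp (hJ hxJ)).2 hxK⟩)
            simp [this]
        rw [step, sum_pow_neg_one_real]
        have hiff : (miss a \ K = ∅) ↔ (miss a = K) :=
          ⟨fun h => Finset.Subset.antisymm (Finset.sdiff_eq_empty_iff_subset.mp h) hKa,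
           fun h => by simp [h]⟩
        simp only [hiff]
      · have hma : miss a ≠ K := fun h => hKa (h ▸ le_rfl)
        rw [if_neg hma]
        refine Finset.sum_eq_zero fun J hJ => ?_
        have : ¬ K ∪ J ⊆ miss a := fun hcon => hKa ((Finset.subset_union_left).trans hcon)
        simp [this]
    calc ((univ.filter fun a => miss a = K).card : ℝ)
        = ∑ a : α, (if miss a = K then (1:ℝ) else 0) := by rw [Finset.sum_boole]
      _ = ∑ a : α, ∑ J ∈ (univ \ K).powerset,
            (-1 : ℝ) ^ J.card * (if K ∪ J ⊆ miss a then 1 else 0) := by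
          exact Finset.sum_congr rfl fun a _ => (inner a).symm
  -- Step 3: compute the inner sum for fixed K
  have h3 : ∀ K ∈ powersetCard k (univ : Finset (Fin m)),
      (∑ J ∈ (univ \ K).powerset,
          (-1 : ℝ) ^ J.card * ((univ.filter fun a => K ∪ J ⊆ miss a).card : ℝ))
        = ∑ c ∈ range (n + 1), (-1 : ℝ) ^ c * ((n.choose c : ℕ) : ℝ) * A (k + c) := by
    intro K hK
    simp only [mem_powersetCard] at hK
    have hcardK : K.card = k := hK.2
    have hcard_sdiff : (univ \ K).card = n := by
      rw [Finset.card_sdiff_of_subset (subset_univ _), Finset.card_univ, Fintype.card_fin, hcardK]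
    rw [Finset.sum_powerset, hcard_sdiff]
    refine Finset.sum_congr rfl fun c hc => ?_
    have hterm : ∀ J ∈ powersetCard c (univ \ K),
        (-1 : ℝ) ^ J.card * ((univ.filter fun a => K ∪ J ⊆ miss a).card : ℝ)
          = (-1 : ℝ) ^ c * A (k + c) := by
      intro J hJ
      simp only [mem_powersetCard] at hJ
      have hdisj : Disjoint K J := by
        refine Finset.disjoint_left.mpr fun x hxK hxJ => ?_
        exact (Finset.mem_sdiff.mp (hJ.1 hxJ)).2 hxK
      have : (K ∪ J).card = k + c := by
        rw [Finset.card_union_of_disjoint hdisj, hcardK, hJ.2]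
      rw [hJ.2, hA (K ∪ J), this]
    rw [Finset.sum_congr rfl hterm, Finset.sum_const, Finset.card_powersetCard, hcard_sdiff]
    push_cast
    ring
  -- Step 4+5: assemble
  have h4 : ((univ.filter fun a => (miss a).card = k).card : ℝ)
      = (m.choose k : ℝ) * ∑ c ∈ range (n + 1),
          (-1 : ℝ) ^ c * ((n.choose c : ℕ) : ℝ) * A (k + c) := by
    rw [h1]
    push_cast
    rw [Finset.sum_congr rfl fun K hK => (h2 K hK).trans (h3 K hK)]
    rw [Finset.sum_const, Finset.card_powersetCard, Finset.card_univ, Fintype.card_fin]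
    simp [nsmul_eq_mul]
  rw [h4]
  congr 1
  rw [← Finset.sum_range_reflect]
  refine Finset.sum_congr rfl fun j hj => ?_
  simp only [mem_range] at hj
  have hj' : j ≤ n := Nat.lt_succ_iff.mp hj
  have e1 : n + 1 - 1 - j = n - j := by omega
  have e2 : k + (n - j) = m - j := by omega
  have e3 : n.choose (n - j) = n.choose j := Nat.choose_symm hj'
  rw [e1, e2, e3]


/-- The exact distribution of the number `Y` of cyclotomic cosets of index `tℓ` missed by the
value set of a random `r`-th order cyclotomic mapping of index `ℓ = (q-1)/s`
(branch constants `a_0, …, a_{ℓ-1}` chosen independently and uniformly from `𝔽_q`):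
`ℙ(Y = k) = C(tℓ,k) ∑_{j=0}^{tℓ-k} (-1)^{tℓ-k-j} C(tℓ-k,j) ((t+sj)/(tq))^ℓ`. -/
theorem cyclotomic_mapping_missing_cosets_distribution
    (F : Type) [Field F] [Fintype F] (q : ℕ) (hq : q = Fintype.card F)
    (s l r t : ℕ) (hs : 0 < s) (hl : 0 < l) (hr : 0 < r)
    (hls : l * s = q - 1) (ht : t = Nat.gcd r s)
    (γ : Fˣ) (hγ : ∀ x : Fˣ, x ∈ Subgroup.zpowers γ)
    (G : (Fin l → F) → F → F)
    (hG : ∀ a, G a 0 = 0 ∧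
      ∀ (i : Fin l) (y : Fˣ), G a ((γ : F) ^ (i : ℕ) * (y : F) ^ l)
        = a i * ((γ : F) ^ (i : ℕ) * (y : F) ^ l) ^ r)
    (Y : (F → F) → ℕ)
    (hY : ∀ g, Y g =
      Nat.card {j : Fin (t * l) // ∀ y : Fˣ, (γ : F) ^ (j : ℕ) * (y : F) ^ (t * l) ∉ Set.range g})
    (k : ℕ) (hk : k ≤ t * l) :
    (Nat.card {a : Fin l → F // Y (G a) = k} : ℝ) / (q : ℝ) ^ l
      = ((t * l).choose k : ℝ) *
          ∑ j ∈ Finset.range (t * l - k + 1),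
            (-1 : ℝ) ^ (t * l - k - j) * ((t * l - k).choose j : ℝ) *
              (((t : ℝ) + (s : ℝ) * (j : ℝ)) / ((t : ℝ) * (q : ℝ))) ^ l := by
  classical
  set m := t * l with hmdef
  have hq1 : 1 ≤ q := by rw [hq]; exact Fintype.card_pos
  have ht_pos : 0 < t := by rw [ht]; exact Nat.gcd_pos_of_pos_right r hs
  obtain ⟨d, hsd⟩ : t ∣ s := ht ▸ Nat.gcd_dvd_right r s
  obtain ⟨r', hrr'⟩ : t ∣ r := ht ▸ Nat.gcd_dvd_left r s
  have hd_pos : 0 < d := by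
    rcases Nat.eq_zero_or_pos d with h | h
    · subst h; omega
    · exact h
  set N := q - 1 with hNdef
  have hN_pos : 0 < N := by
    have : 0 < l * s := Nat.mul_pos hl hs
    omega
  have hNls : N = l * s := hls.symm
  have hNmd : N = m * d := by rw [hNls, hsd, hmdef]; ring
  have hm_pos : 0 < m := Nat.mul_pos ht_pos hl
  haveI : NeZero N := ⟨hN_pos.ne'⟩
  haveI : NeZero m := ⟨hm_pos.ne'⟩
  have hqN : q = N + 1 := by omega
  have hcardU : Fintype.card Fˣ = N := by
    rw [Fintype.card_units, ← hq, hNdef]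
  have horder : orderOf γ = N := by
    rw [orderOf_eq_card_of_forall_mem_zpowers hγ, Nat.card_eq_fintype_card, hcardU]
  -- the discrete-log bijection
  have hinj : Function.Injective (fun n : ZMod N => γ ^ n.val) := by
    intro x y hxy
    have h := pow_eq_pow_iff_modEq.mp hxy
    rw [horder, Nat.ModEq] at h
    rw [Nat.mod_eq_of_lt x.val_lt, Nat.mod_eq_of_lt y.val_lt] at h
    exact ZMod.val_injective N h
  have hbij : Function.Bijective (fun n : ZMod N => γ ^ n.val) :=
    (Fintype.bijective_iff_injective_and_card _).mpr
      ⟨hinj, by rw [ZMod.card, hcardU]⟩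
  set E : ZMod N ≃ Fˣ := Equiv.ofBijective _ hbij with hEdef
  have hE : ∀ n : ZMod N, E n = γ ^ n.val := fun n => rfl
  have h1 : ∀ a : ℕ, γ ^ a = E ((a : ZMod N)) := by
    intro a
    rw [hE, ZMod.val_natCast, ← horder, pow_mod_orderOf]
  have h2 : ∀ x y : ZMod N, E (x + y) = E x * E y := by
    intro x y
    have hxy : x + y = ((x.val + y.val : ℕ) : ZMod N) := by
      push_cast [ZMod.natCast_val, ZMod.cast_id]
      rfl
    rw [hxy, ← h1, pow_add, hE, hE]
  have h3 : ∀ (c : ℕ) (x : ZMod N), (E x) ^ c = E ((c : ℕ) * x) := by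
    intro c x
    have : ((c : ℕ) : ZMod N) * x = ((c * x.val : ℕ) : ZMod N) := by
      push_cast [ZMod.natCast_val, ZMod.cast_id]
      rfl
    rw [this, ← h1, hE, ← pow_mul, mul_comm c x.val]
  -- reduction mod m
  set π : ZMod N → ZMod m := fun n => ((n.val : ℕ) : ZMod m) with hπdef
  have hNm0 : ((N : ℕ) : ZMod m) = 0 := by rw [hNmd]; push_cast; simp
  have hπnat : ∀ a : ℕ, π ((a : ZMod N)) = (a : ZMod m) := by
    intro a
    rw [hπdef]
    dsimp only
    rw [ZMod.val_natCast]
    conv_rhs => rw [← Nat.mod_add_div a N]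
    push_cast
    rw [hNm0]; ring
  have hπadd : ∀ x y : ZMod N, π (x + y) = π x + π y := by
    intro x y
    have hxy : x + y = ((x.val + y.val : ℕ) : ZMod N) := by
      push_cast [ZMod.natCast_val, ZMod.cast_id]
      rfl
    rw [hxy, hπnat]
    push_cast
    rfl
  have hπm : ∀ x : ZMod N, π (((m : ℕ) : ZMod N) * x) = 0 := by
    intro x
    have : ((m : ℕ) : ZMod N) * x = ((m * x.val : ℕ) : ZMod N) := by
      push_cast [ZMod.natCast_val, ZMod.cast_id]
      rfl
    rw [this, hπnat]
    push_cast
    simp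
  -- the key classification
  have claim2 : ∀ (u : Fˣ) (e jv : ℕ), jv < m →
      ((∃ w : Fˣ, u * γ ^ e = γ ^ jv * w ^ m) ↔
        π (E.symm u) + ((e : ℕ) : ZMod m) = ((jv : ℕ) : ZMod m)) := by
    intro u e jv hjv
    constructor
    · rintro ⟨w, hw⟩
      have hz : E.symm u + (e : ZMod N) = (jv : ZMod N) + ((m : ℕ) : ZMod N) * E.symm w := by
        apply E.injective
        rw [h2, h2, E.apply_symm_apply, ← h1, ← h3, E.apply_symm_apply, ← h1, hw]
      have := congrArg π hz
      rw [hπadd, hπadd, hπnat, hπnat, hπm] at this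
      rw [this]; ring
    · intro h
      set n := E.symm u + (e : ZMod N) with hndef
      have hπn : π n = ((jv : ℕ) : ZMod m) := by
        rw [hndef, hπadd, hπnat, h]
      have hval : n.val % m = jv := by
        have := congrArg ZMod.val hπn
        rw [hπdef] at this
        dsimp only at this
        rw [ZMod.val_natCast, ZMod.val_natCast, Nat.mod_eq_of_lt hjv] at this
        exact this
      refine ⟨γ ^ (n.val / m), ?_⟩
      have hu : u * γ ^ e = E n := by
        conv_lhs => rw [← E.apply_symm_apply u, h1 e]
        rw [← h2]
      rw [hu, hE, ← pow_mul, ← pow_add]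
      congr 1
      rw [← hval, mul_comm]
      exact (Nat.mod_add_div n.val m).symm
  -- hit predicate
  set hitP : Fin l → F → Fin (t * l) → Prop := fun i c j =>
    ∃ u : Fˣ, (u : F) = c ∧
      π (E.symm u) + (((i : ℕ) * r : ℕ) : ZMod m) = (((j : ℕ) : ℕ) : ZMod m) with hhitdef
  have hjm : ∀ j : Fin (t * l), (j : ℕ) < m := fun j => j.isLt
  have claim1 : ∀ (a : Fin l → F) (j : Fin (t * l)),
      (∀ y : Fˣ, (γ : F) ^ (j : ℕ) * (y : F) ^ (t * l) ∉ Set.range (G a))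
        ↔ ∀ i : Fin l, ¬ hitP i (a i) j := by
    intro a j
    constructor
    · intro h i hhit
      obtain ⟨u, hu, hcls⟩ := hhit
      obtain ⟨w, hw⟩ := (claim2 u ((i : ℕ) * r) (j : ℕ) (hjm j)).mpr hcls
      refine h w ⟨(γ : F) ^ (i : ℕ) * ((1 : Fˣ) : F) ^ l, ?_⟩
      rw [(hG a).2 i 1]
      simp only [Units.val_one, one_pow, mul_one]
      rw [← hu, ← pow_mul]
      have hww := congrArg (fun z : Fˣ => (z : F)) hw
      simp only [Units.val_mul, Units.val_pow_eq_pow_val] at hww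
      rw [hmdef] at hww
      exact hww
    · rintro h y ⟨x, hx⟩
      by_cases hx0 : x = 0
      · rw [hx0, (hG a).1] at hx
        exact Units.ne_zero (γ ^ (j : ℕ) * y ^ (t * l))
          (by push_cast; exact hx.symm)
      · obtain ⟨u, hu⟩ : ∃ u : Fˣ, (u : F) = x := ⟨(Ne.isUnit hx0).unit, (Ne.isUnit hx0).unit_spec⟩
        obtain ⟨n, hn⟩ : ∃ n : ℕ, γ ^ n = u :=
          (Submonoid.mem_powers_iff u γ).mp (mem_powers_iff_mem_zpowers.mpr (hγ u))
        set i0 : Fin l := ⟨n % l, Nat.mod_lt n hl⟩ with hi0def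
        have hinput : (γ : F) ^ ((i0 : ℕ)) * ((γ ^ (n / l) : Fˣ) : F) ^ l = x := by
          rw [Units.val_pow_eq_pow_val, ← pow_mul, ← pow_add]
          have : (i0 : ℕ) + n / l * l = n := Nat.mod_add_div' n l
          rw [this, ← Units.val_pow_eq_pow_val, hn, hu]
        have hGx := (hG a).2 i0 (γ ^ (n / l))
        rw [hinput, hx] at hGx
        -- hGx : γ^j * y^(t*l) = a i0 * x ^ r
        have hxr : x ^ r = ((γ ^ (n * r) : Fˣ) : F) := by
          rw [← hu, ← Units.val_pow_eq_pow_val, ← hn, ← pow_mul]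
        set u' : Fˣ := γ ^ (j : ℕ) * y ^ (t * l) * (γ ^ (n * r))⁻¹ with hu'def
        have hau : (u' : F) = a i0 := by
          apply mul_right_cancel₀ (pow_ne_zero r hx0)
          rw [← hGx, hxr, hu'def]
          push_cast
          field_simp
        apply h i0
        refine ⟨u', hau, ?_⟩
        apply (claim2 u' ((i0 : ℕ) * r) (j : ℕ) (hjm j)).mp
        refine ⟨y * (γ ^ ((n / l) * r'))⁻¹, ?_⟩
        have hexp : n * r = (n % l) * r + ((n / l) * r') * (t * l) := by
          have h0 : n % l + n / l * l = n := Nat.mod_add_div' n l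
          calc n * r = (n % l + n / l * l) * r := by rw [h0]
            _ = (n % l) * r + (n / l) * (l * r) := by ring
            _ = (n % l) * r + ((n / l) * r') * (t * l) := by rw [hrr']; ring
        have hi0n : (i0 : ℕ) = n % l := rfl
        show u' * γ ^ ((i0 : ℕ) * r) = γ ^ (j : ℕ) * (y * (γ ^ (n / l * r'))⁻¹) ^ (t * l)
        rw [mul_pow, inv_pow, ← pow_mul, hu'def, hi0n, hexp, pow_add]
        group
  -- cardinality of a single hit fiber
  have card_hit : ∀ (i : Fin l) (j : Fin (t * l)),
      (univ.filter fun c : F => hitP i c j).card = d := by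
    intro i j
    have hstep1 : (univ.filter fun c : F => hitP i c j).card
        = (univ.filter fun u : Fˣ =>
            π (E.symm u) + (((i : ℕ) * r : ℕ) : ZMod m) = (((j : ℕ) : ℕ) : ZMod m)).card := by
      refine (Finset.card_bij (s := univ.filter fun u : Fˣ =>
          π (E.symm u) + (((i : ℕ) * r : ℕ) : ZMod m) = (((j : ℕ) : ℕ) : ZMod m))
        (t := univ.filter fun c : F => hitP i c j) (fun u _ => (u : F)) ?_ ?_ ?_).symm
      · intro u hu
        simp only [mem_filter, mem_univ, true_and] at hu ⊢
        exact ⟨u, rfl, hu⟩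
      · intro u1 _ u2 _ h
        exact Units.ext h
      · intro c hc
        simp only [mem_filter, mem_univ, true_and] at hc
        obtain ⟨u, hu, hP⟩ := hc
        exact ⟨u, by simp only [mem_filter, mem_univ, true_and]; exact hP, hu⟩
    have hstep2 : (univ.filter fun u : Fˣ =>
          π (E.symm u) + (((i : ℕ) * r : ℕ) : ZMod m) = (((j : ℕ) : ℕ) : ZMod m)).card
        = (univ.filter fun x : ZMod N =>
            π x + (((i : ℕ) * r : ℕ) : ZMod m) = (((j : ℕ) : ℕ) : ZMod m)).card := by
      refine (Finset.card_bij (s := univ.filter fun x : ZMod N =>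
          π x + (((i : ℕ) * r : ℕ) : ZMod m) = (((j : ℕ) : ℕ) : ZMod m))
        (t := univ.filter fun u : Fˣ =>
          π (E.symm u) + (((i : ℕ) * r : ℕ) : ZMod m) = (((j : ℕ) : ℕ) : ZMod m))
        (fun x _ => E x) ?_ ?_ ?_).symm
      · intro x hx
        simp only [mem_filter, mem_univ, true_and, Equiv.symm_apply_apply] at hx ⊢
        exact hx
      · intro x1 _ x2 _ h
        exact E.injective h
      · intro u hu
        simp only [mem_filter, mem_univ, true_and] at hu
        exact ⟨E.symm u, by simp only [mem_filter, mem_univ, true_and,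
          Equiv.symm_apply_apply]; exact hu, E.apply_symm_apply u⟩
    have hstep3 : (univ.filter fun x : ZMod N =>
          π x + (((i : ℕ) * r : ℕ) : ZMod m) = (((j : ℕ) : ℕ) : ZMod m)).card
        = (univ.filter fun x : ZMod N =>
            π x = (((j : ℕ) : ℕ) : ZMod m) - (((i : ℕ) * r : ℕ) : ZMod m)).card := by
      congr 1
      ext x
      simp only [mem_filter, mem_univ, true_and]
      constructor
      · intro h; rw [← h]; ring
      · intro h; rw [h]; ring
    rw [hstep1, hstep2, hstep3]
    exact fiber_card N m d hm_pos hd_pos hNmd _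
  -- two different cosets cannot be hit by the same value
  have hit_inj : ∀ (i : Fin l) (c : F) (j j' : Fin (t * l)),
      hitP i c j → hitP i c j' → j = j' := by
    rintro i c j j' ⟨u, hu, h⟩ ⟨u2, hu2, h2⟩
    have huu : u = u2 := Units.ext (by rw [hu, hu2])
    subst huu
    have hjj : (((j : ℕ) : ℕ) : ZMod m) = (((j' : ℕ) : ℕ) : ZMod m) := by rw [← h, ← h2]
    have := congrArg ZMod.val hjj
    rw [ZMod.val_natCast, ZMod.val_natCast, Nat.mod_eq_of_lt (hjm j),
      Nat.mod_eq_of_lt (hjm j')] at this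
    exact Fin.ext this
  -- counting values avoiding the cosets of S, one coordinate
  have cardB : ∀ (i : Fin l) (S : Finset (Fin (t * l))),
      (((univ.filter fun c : F => ∀ j ∈ S, ¬ hitP i c j).card : ℕ) : ℝ)
        = (q : ℝ) - (d : ℝ) * (S.card : ℝ) := by
    intro i S
    have hsplit := Finset.card_filter_add_card_filter_not
      (s := (univ : Finset F)) (p := fun c => ∃ j ∈ S, hitP i c j)
    have hbiU : (univ.filter fun c : F => ∃ j ∈ S, hitP i c j)
        = S.biUnion (fun j => univ.filter fun c => hitP i c j) := by
      ext c
      simp only [mem_filter, mem_univ, true_and, Finset.mem_biUnion]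
    have hcards : (univ.filter fun c : F => ∃ j ∈ S, hitP i c j).card = d * S.card := by
      rw [hbiU, Finset.card_biUnion]
      · rw [Finset.sum_congr rfl fun j _ => card_hit i j, Finset.sum_const, smul_eq_mul,
          mul_comm]
      · intro j hj j' hj' hne
        refine Finset.disjoint_left.mpr fun c hc hc' => hne ?_
        simp only [mem_filter, mem_univ, true_and] at hc hc'
        exact hit_inj i c j j' hc hc'
    have hnegeq : (univ.filter fun c : F => ¬ ∃ j ∈ S, hitP i c j)
        = (univ.filter fun c : F => ∀ j ∈ S, ¬ hitP i c j) := by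
      ext c
      simp only [mem_filter, mem_univ, true_and]
      push_neg
      exact ⟨fun h j hj => h j hj, fun h j hj => h j hj⟩
    rw [hnegeq, hcards, Finset.card_univ, ← hq] at hsplit
    have hnat : (univ.filter fun c : F => ∀ j ∈ S, ¬ hitP i c j).card + d * S.card = q := by
      omega
    have hcast := congrArg (Nat.cast : ℕ → ℝ) hnat
    push_cast at hcast
    linarith
  -- the missed-coset finset
  set miss : (Fin l → F) → Finset (Fin (t * l)) :=
    fun a => univ.filter fun j => ∀ i, ¬ hitP i (a i) j with hmissdef
  have hA : ∀ S : Finset (Fin (t * l)),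
      ((univ.filter fun a : Fin l → F => S ⊆ miss a).card : ℝ)
        = ((q : ℝ) - (d : ℝ) * (S.card : ℝ)) ^ l := by
    intro S
    have hiff : ∀ a : Fin l → F, S ⊆ miss a ↔
        ∀ i, ∀ j ∈ S, ¬ hitP i (a i) j := by
      intro a
      constructor
      · intro hS i j hj
        have := hS hj
        simp only [hmissdef, mem_filter, mem_univ, true_and] at this
        exact this i
      · intro hall j hj
        simp only [hmissdef, mem_filter, mem_univ, true_and]
        intro i
        exact hall i j hj
    have hpi : (univ.filter fun a : Fin l → F => S ⊆ miss a)
        = Fintype.piFinset (fun i => univ.filter fun c : F => ∀ j ∈ S, ¬ hitP i c j) := by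
      ext a
      simp only [mem_filter, mem_univ, true_and, Fintype.mem_piFinset]
      exact hiff a
    rw [hpi, Fintype.card_piFinset]
    push_cast
    rw [Finset.prod_congr rfl fun i _ => cardB i S]
    rw [Finset.prod_const, Finset.card_univ, Fintype.card_fin]

  -- relate Y to the missed-coset finset
  have hYmiss : ∀ a : Fin l → F, Y (G a) = (miss a).card := by
    intro a
    rw [hY (G a), Nat.card_eq_fintype_card, Fintype.card_subtype]
    congr 1
    ext j
    simp only [mem_filter, mem_univ, true_and, hmissdef]
    exact claim1 a j
  have hfin : Nat.card {a : Fin l → F // Y (G a) = k}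
      = (univ.filter fun a : Fin l → F => (miss a).card = k).card := by
    rw [Nat.card_eq_fintype_card, Fintype.card_subtype]
    congr 1
    ext a
    simp only [mem_filter, mem_univ, true_and, hYmiss a]
  rw [hfin, comb_core m k hk miss (fun c => ((q : ℝ) - (d : ℝ) * (c : ℕ)) ^ l) hA]
  rw [mul_div_assoc]
  congr 1
  rw [Finset.sum_div]
  refine Finset.sum_congr rfl fun j hj => ?_
  have hjle : j ≤ m - k := Nat.lt_succ_iff.mp (Finset.mem_range.mp hj)
  have hjm' : j ≤ m := le_trans hjle (Nat.sub_le _ _)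
  have hqmd : q = m * d + 1 := by rw [hqN, hNmd]
  have hq0 : (q : ℝ) ≠ 0 := Nat.cast_ne_zero.mpr (by omega)
  have ht0 : (t : ℝ) ≠ 0 := Nat.cast_ne_zero.mpr ht_pos.ne'
  have hqR : (q : ℝ) = (m : ℝ) * (d : ℝ) + 1 := by
    rw [hqmd]; push_cast; ring
  have hbase : ((q : ℝ) - (d : ℝ) * ((m - j : ℕ) : ℝ)) = 1 + (d : ℝ) * (j : ℝ) := by
    rw [Nat.cast_sub hjm', hqR]; ring
  have hbase2 : (((t : ℝ) + (s : ℝ) * (j : ℝ)) / ((t : ℝ) * (q : ℝ)))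
      = (1 + (d : ℝ) * (j : ℝ)) / (q : ℝ) := by
    have hsreal : (s : ℝ) = (t : ℝ) * (d : ℝ) := by
      rw [hsd]; push_cast; ring
    rw [hsreal, show (t : ℝ) + (t : ℝ) * (d : ℝ) * (j : ℝ)
      = (t : ℝ) * (1 + (d : ℝ) * (j : ℝ)) by ring, mul_div_mul_left _ _ ht0]
  rw [hbase2, div_pow]
  have : ((q : ℝ) - (d : ℝ) * ((m - j : ℕ) : ℝ)) ^ l = (1 + (d : ℝ) * (j : ℝ)) ^ l := by
    rw [hbase]
  rw [this]
  ring
end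

section
/- Let q be a prime power with q − 1 = ℓs, r a positive integer, t = gcd(r, s), and γ a fixed generator of 𝔽_q^*. Choose a_0, …, a_{ℓ−1} independently and uniformly at random from 𝔽_q, and let g = f^r_{a_0,…,a_{ℓ−1}} be the associated r-th order cyclotomic mapping of index ℓ. Then for every integer k with 0 ≤ k ≤ tℓ, the probability that the value set g(𝔽_q) has cardinality 1 + k·s/t equals C(tℓ, k) ∑_{j=0}^{k} (−1)^{k−j} C(k, j) ( (t + sj)/(tq) )^ℓ. -/
open Finset

private lemma wt_subset_sum {ι Q : Type} [Fintype ι] [DecidableEq ι] [Fintype Q] [DecidableEq Q]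
    (m : ℕ) (S : Finset Q)
    [DecidablePred fun b : ι → Option Q => ∀ qq, (∃ i, b i = some qq) → qq ∈ S] :
    ∑ b ∈ univ.filter (fun b : ι → Option Q => ∀ qq, (∃ i, b i = some qq) → qq ∈ S),
      (∏ i, ((b i).elim 1 fun _ => m)) = (1 + m * S.card) ^ (Fintype.card ι) := by
  classical
  have hfil : univ.filter (fun b : ι → Option Q => ∀ qq, (∃ i, b i = some qq) → qq ∈ S)
      = Fintype.piFinset (fun _ : ι => insert none (S.image some)) := by
    ext b
    simp only [mem_filter, mem_univ, true_and, Fintype.mem_piFinset, mem_insert, mem_image]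
    constructor
    · intro h i
      cases hbi : b i with
      | none => exact Or.inl rfl
      | some qq => exact Or.inr ⟨qq, h qq ⟨i, hbi⟩, rfl⟩
    · rintro h qq ⟨i, hbi⟩
      rcases h i with h' | ⟨q', hq', h'⟩
      · rw [hbi] at h'; cases h'
      · rw [hbi] at h'; cases h'; exact hq'
  have hps := Finset.prod_univ_sum (fun _ : ι => insert none (S.image some))
      (fun _ (o : Option Q) => (o.elim 1 fun _ => m : ℕ))
  rw [hfil, ← hps]
  have : ∑ o ∈ insert none (S.image some), (o.elim 1 fun _ => m) = 1 + m * S.card := by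
    rw [Finset.sum_insert (by simp), Finset.sum_image (fun a _ b _ h => Option.some_injective _ h)]
    simp [mul_comm]
  simp [this]

private lemma alt_sum_filter {α : Type} [DecidableEq α] (S U : Finset α) (hU : U ⊆ S) :
    ∑ T ∈ S.powerset.filter (fun T => U ⊆ T), (-1 : ℝ) ^ T.card
      = if U = S then (-1 : ℝ) ^ S.card else 0 := by
  classical
  have hbij : ∑ T ∈ S.powerset.filter (fun T => U ⊆ T), (-1 : ℝ) ^ T.card
      = ∑ T' ∈ (S \ U).powerset, (-1 : ℝ) ^ (U ∪ T').card := by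
    refine Finset.sum_nbij' (fun T => T \ U) (fun T' => U ∪ T') ?_ ?_ ?_ ?_ ?_
    · intro T hT
      simp only [mem_filter, mem_powerset] at hT
      exact mem_powerset.mpr (sdiff_subset_sdiff hT.1 le_rfl)
    · intro T' hT'
      simp only [mem_powerset] at hT'
      refine mem_filter.mpr ⟨mem_powerset.mpr (union_subset hU (hT'.trans sdiff_subset)), subset_union_left⟩
    · intro T hT
      simp only [mem_filter, mem_powerset] at hT
      simpa using union_sdiff_of_subset hT.2
    · intro T' hT'
      simp only [mem_powerset] at hT'
      simpa using union_sdiff_cancel_left (disjoint_of_subset_right hT' sdiff_disjoint.symm)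
    · intro T hT
      simp only [mem_filter, mem_powerset] at hT
      rw [union_sdiff_of_subset hT.2]
  rw [hbij]
  have hcard : ∀ T' ∈ (S \ U).powerset, (U ∪ T').card = U.card + T'.card := by
    intro T' hT'
    exact card_union_of_disjoint (disjoint_of_subset_right (mem_powerset.mp hT') sdiff_disjoint.symm)
  calc ∑ T' ∈ (S \ U).powerset, (-1 : ℝ) ^ (U ∪ T').card
      = ∑ T' ∈ (S \ U).powerset, (-1 : ℝ) ^ U.card * (-1 : ℝ) ^ T'.card := by
        refine Finset.sum_congr rfl fun T' hT' => ?_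
        rw [hcard T' hT', pow_add]
    _ = (-1 : ℝ) ^ U.card * ∑ T' ∈ (S \ U).powerset, (-1 : ℝ) ^ T'.card := by
        rw [Finset.mul_sum]
    _ = if U = S then (-1 : ℝ) ^ S.card else 0 := by
        have := Finset.sum_powerset_neg_one_pow_card (x := S \ U)
        have hreal : ∑ T' ∈ (S \ U).powerset, (-1 : ℝ) ^ T'.card
            = if S \ U = ∅ then 1 else 0 := by
          have := congrArg (fun z : ℤ => (z : ℝ)) this
          push_cast at this
          simpa using this
        rw [hreal]
        by_cases h : U = S
        · subst h; simp
        · have : ¬ S \ U = ∅ := by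
            rw [sdiff_eq_empty_iff_subset]
            intro hSU
            exact h (subset_antisymm hU hSU)
          simp [h, this]
private lemma finset_mobius {α : Type} [DecidableEq α] (A E : Finset α → ℝ)
    (h : ∀ S, A S = ∑ T ∈ S.powerset, E T) (S : Finset α) :
    E S = ∑ T ∈ S.powerset, (-1 : ℝ) ^ (S.card - T.card) * A T := by
  classical
  have hsign : ∀ T ∈ S.powerset, (-1 : ℝ) ^ (S.card - T.card)
      = (-1 : ℝ) ^ S.card * (-1 : ℝ) ^ T.card := by
    intro T hT
    have hle : T.card ≤ S.card := card_le_card (mem_powerset.mp hT)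
    have : (-1 : ℝ) ^ (S.card - T.card) * (-1 : ℝ) ^ T.card * (-1 : ℝ) ^ T.card
        = (-1 : ℝ) ^ S.card * (-1 : ℝ) ^ T.card := by
      rw [← pow_add, Nat.sub_add_cancel hle]
    have h2 : (-1 : ℝ) ^ T.card * (-1 : ℝ) ^ T.card = 1 := by
      rw [← pow_add]
      exact Even.neg_one_pow ⟨T.card, rfl⟩
    calc (-1 : ℝ) ^ (S.card - T.card)
        = (-1 : ℝ) ^ (S.card - T.card) * ((-1 : ℝ) ^ T.card * (-1 : ℝ) ^ T.card) := by
          rw [h2, mul_one]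
        _ = (-1 : ℝ) ^ S.card * (-1 : ℝ) ^ T.card := by rw [← mul_assoc, this]
  symm
  calc ∑ T ∈ S.powerset, (-1 : ℝ) ^ (S.card - T.card) * A T
      = ∑ T ∈ S.powerset, ∑ U ∈ T.powerset, (-1 : ℝ) ^ S.card * (-1 : ℝ) ^ T.card * E U := by
        refine Finset.sum_congr rfl fun T hT => ?_
        rw [hsign T hT, h T, Finset.mul_sum]
    _ = ∑ U ∈ S.powerset, ∑ T ∈ S.powerset.filter (fun T => U ⊆ T),
          (-1 : ℝ) ^ S.card * (-1 : ℝ) ^ T.card * E U := by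
        refine Finset.sum_comm' ?_
        intro T U
        simp only [mem_powerset, mem_filter, mem_powerset]
        constructor
        · rintro ⟨h1, h2⟩; exact ⟨⟨h1, h2⟩, h2.trans h1⟩
        · rintro ⟨⟨h1, h2⟩, _⟩; exact ⟨h1, h2⟩
    _ = ∑ U ∈ S.powerset, ((-1 : ℝ) ^ S.card * E U) *
          ∑ T ∈ S.powerset.filter (fun T => U ⊆ T), (-1 : ℝ) ^ T.card := by
        refine Finset.sum_congr rfl fun U hU => ?_
        rw [Finset.mul_sum]
        refine Finset.sum_congr rfl fun T hT => ?_
        ring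
    _ = E S := by
        rw [Finset.sum_eq_single S]
        · rw [alt_sum_filter S S subset_rfl, if_pos rfl]
          have h2 : (-1 : ℝ) ^ S.card * (-1 : ℝ) ^ S.card = 1 := by
            rw [← pow_add]; exact Even.neg_one_pow ⟨S.card, rfl⟩
          calc (-1 : ℝ) ^ S.card * E S * (-1 : ℝ) ^ S.card
              = ((-1 : ℝ) ^ S.card * (-1 : ℝ) ^ S.card) * E S := by ring
            _ = E S := by rw [h2, one_mul]
        · intro U hU hne
          rw [alt_sum_filter S U (mem_powerset.mp hU), if_neg hne, mul_zero]
        · intro hS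
          exact absurd (mem_powerset.mpr subset_rfl) hS
private lemma occupancy_count {ι E' Q : Type} [Fintype ι] [DecidableEq ι] [Fintype E']
    [Fintype Q] [DecidableEq Q] (p : ι → E' → Option Q) (m : ℕ)
    (hnone : ∀ i, (univ.filter fun e : E' => p i e = none).card = 1)
    (hsome : ∀ i qq, (univ.filter fun e : E' => p i e = some qq).card = m) (k : ℕ)
    [DecidablePred fun c : ι → E' =>
      (univ.filter fun qq : Q => ∃ i, p i (c i) = some qq).card = k] :
    ((univ.filter fun c : ι → E' =>
        (univ.filter fun qq : Q => ∃ i, p i (c i) = some qq).card = k).card : ℝ)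
      = ((Fintype.card Q).choose k : ℝ) * ∑ j ∈ range (k + 1),
          (-1 : ℝ) ^ (k - j) * (k.choose j : ℝ)
            * ((1 : ℝ) + (m : ℝ) * (j : ℝ)) ^ (Fintype.card ι) := by
  classical
  set L := Fintype.card ι with hL
  -- weight of a pattern
  set wt : (ι → Option Q) → ℕ := fun b => ∏ i, ((b i).elim 1 fun _ => m) with hwt
  set hit : (ι → Option Q) → Finset Q := fun b => univ.filter (fun qq => ∃ i, b i = some qq)
    with hhit
  -- fiber cardinality
  have fiber_card : ∀ b : ι → Option Q,
      (univ.filter fun c : ι → E' => (fun i => p i (c i)) = b).card = wt b := by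
    intro b
    have : univ.filter (fun c : ι → E' => (fun i => p i (c i)) = b)
        = Fintype.piFinset (fun i => univ.filter fun e => p i e = b i) := by
      ext c
      simp [Fintype.mem_piFinset, funext_iff]
    rw [this, Fintype.card_piFinset]
    refine Finset.prod_congr rfl fun i _ => ?_
    cases hbi : b i with
    | none => simp [hnone i]
    | some qq => simp [hsome i qq]
  -- the count as a weighted sum over patterns
  have count_eq : (univ.filter fun c : ι → E' => (hit (fun i => p i (c i))).card = k).card
      = ∑ b ∈ univ.filter (fun b : ι → Option Q => (hit b).card = k), wt b := by
    rw [Finset.card_eq_sum_card_fiberwise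
      (f := fun c : ι → E' => fun i => p i (c i))
      (t := univ.filter (fun b : ι → Option Q => (hit b).card = k))
      (fun c hc => by simpa using (Finset.mem_filter.mp hc).2)]
    refine Finset.sum_congr rfl fun b hb => ?_
    rw [← fiber_card b]
    congr 1
    ext c
    simp only [mem_filter, mem_univ, true_and, and_iff_right_iff_imp]
    intro hcb
    rw [hcb]
    exact (Finset.mem_filter.mp hb).2
  -- define E and A
  set Efun : Finset Q → ℝ := fun S => ∑ b ∈ univ.filter (fun b => hit b = S), (wt b : ℝ)
    with hEfun
  set Afun : Finset Q → ℝ := fun S => ((1 : ℝ) + (m : ℝ) * (S.card : ℝ)) ^ L with hAfun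
  have hAE : ∀ S, Afun S = ∑ T ∈ S.powerset, Efun T := by
    intro S
    have hnat := wt_subset_sum (ι := ι) m S
    have hfilEq : (univ.filter (fun b : ι → Option Q => ∀ qq, (∃ i, b i = some qq) → qq ∈ S))
        = univ.filter (fun b : ι → Option Q => hit b ⊆ S) := by
      ext b
      simp only [mem_filter, mem_univ, true_and, hhit, Finset.subset_iff, mem_filter]
      try tauto
    rw [hfilEq] at hnat
    have h1 : Afun S = ∑ b ∈ univ.filter (fun b : ι → Option Q => hit b ⊆ S), (wt b : ℝ) := by
      calc Afun S = (((1 + m * S.card) ^ (Fintype.card ι) : ℕ) : ℝ) := by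
            rw [hAfun, hL]; push_cast; ring
        _ = ((∑ b ∈ univ.filter (fun b : ι → Option Q => hit b ⊆ S), wt b : ℕ) : ℝ) := by
            rw [hnat]
        _ = ∑ b ∈ univ.filter (fun b : ι → Option Q => hit b ⊆ S), (wt b : ℝ) :=
            Nat.cast_sum _ _
    rw [h1]
    rw [← Finset.sum_fiberwise_of_maps_to
      (g := hit) (t := S.powerset)
      (fun b hb => Finset.mem_powerset.mpr (Finset.mem_filter.mp hb).2)]
    refine Finset.sum_congr rfl fun T hT => ?_
    rw [hEfun]
    congr 1
    ext b
    simp only [mem_filter, mem_univ, true_and, and_iff_right_iff_imp]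
    intro hbT
    rw [hbT]
    exact Finset.mem_powerset.mp hT
  have hE : ∀ S : Finset Q, Efun S
      = ∑ T ∈ S.powerset, (-1 : ℝ) ^ (S.card - T.card) * Afun T :=
    finset_mobius Afun Efun hAE
  -- sum over S of card k
  have main : ((univ.filter fun c : ι → E' => (hit (fun i => p i (c i))).card = k).card : ℝ)
      = ∑ S ∈ powersetCard k (univ : Finset Q), Efun S := by
    rw [count_eq]
    push_cast
    rw [← Finset.sum_fiberwise_of_maps_to (g := hit) (t := powersetCard k (univ : Finset Q))
      (fun b hb => Finset.mem_powersetCard.mpr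
        ⟨Finset.subset_univ _, (Finset.mem_filter.mp hb).2⟩)]
    refine Finset.sum_congr rfl fun S hS => ?_
    rw [hEfun]
    congr 1
    ext b
    simp only [mem_filter, mem_univ, true_and, and_iff_right_iff_imp]
    intro hbS
    rw [hbS]
    exact (Finset.mem_powersetCard.mp hS).2
  have goal2 : ((univ.filter fun c : ι → E' => (hit (fun i => p i (c i))).card = k).card : ℝ)
      = ((Fintype.card Q).choose k : ℝ) * ∑ j ∈ range (k + 1),
          (-1 : ℝ) ^ (k - j) * (k.choose j : ℝ) * ((1 : ℝ) + (m : ℝ) * (j : ℝ)) ^ L := by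
    rw [main]
    have hSterm : ∀ S ∈ powersetCard k (univ : Finset Q), Efun S
        = ∑ j ∈ range (k + 1),
            (-1 : ℝ) ^ (k - j) * (k.choose j : ℝ) * ((1 : ℝ) + (m : ℝ) * (j : ℝ)) ^ L := by
      intro S hS
      have hScard : S.card = k := (Finset.mem_powersetCard.mp hS).2
      rw [hE S, Finset.sum_powerset]
      rw [hScard]
      refine Finset.sum_congr rfl fun j hj => ?_
      have : ∀ T ∈ powersetCard j S, (-1 : ℝ) ^ (k - T.card) * Afun T
          = (-1 : ℝ) ^ (k - j) * ((1 : ℝ) + (m : ℝ) * (j : ℝ)) ^ L := by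
        intro T hT
        have hTcard : T.card = j := (Finset.mem_powersetCard.mp hT).2
        rw [hAfun]
        simp only [hTcard]
      rw [Finset.sum_congr rfl this, Finset.sum_const, Finset.card_powersetCard, hScard]
      simp [mul_comm, mul_assoc, mul_left_comm]
    rw [Finset.sum_congr rfl hSterm, Finset.sum_const, Finset.card_powersetCard,
      Finset.card_univ]
    simp
  exact goal2
/-- The exact distribution of the value set size of a random `r`-th order cyclotomic mapping
of index `ℓ = (q-1)/s` (branch constants `a_0, …, a_{ℓ-1}` chosen independently and uniformly
from `𝔽_q`): for `0 ≤ k ≤ tℓ`, the probability that `|V_g| = 1 + k·s/t` equals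
`C(tℓ,k) ∑_{j=0}^{k} (-1)^{k-j} C(k,j) ((t+sj)/(tq))^ℓ`. -/
theorem cyclotomic_mapping_value_set_size_distribution
    (F : Type) [Field F] [Fintype F] (q : ℕ) (hq : q = Fintype.card F)
    (s l r t : ℕ) (hs : 0 < s) (hl : 0 < l) (hr : 0 < r)
    (hls : l * s = q - 1) (ht : t = Nat.gcd r s)
    (γ : Fˣ) (hγ : ∀ x : Fˣ, x ∈ Subgroup.zpowers γ)
    (G : (Fin l → F) → F → F)
    (hG : ∀ a, G a 0 = 0 ∧
      ∀ (i : Fin l) (y : Fˣ), G a ((γ : F) ^ (i : ℕ) * (y : F) ^ l)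
        = a i * ((γ : F) ^ (i : ℕ) * (y : F) ^ l) ^ r)
    (k : ℕ) (hk : k ≤ t * l) :
    (Nat.card {a : Fin l → F // (Set.range (G a)).ncard = 1 + k * (s / t)} : ℝ) / (q : ℝ) ^ l
      = ((t * l).choose k : ℝ) *
          ∑ j ∈ Finset.range (k + 1),
            (-1 : ℝ) ^ (k - j) * (k.choose j : ℝ) *
              (((t : ℝ) + (s : ℝ) * (j : ℝ)) / ((t : ℝ) * (q : ℝ))) ^ l := by
  classical
  have hcardU : Fintype.card Fˣ = q - 1 := by
    rw [hq, Fintype.card_units]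
  have horder : orderOf γ = l * s := by
    have : Subgroup.zpowers γ = ⊤ := by
      ext x; simpa using hγ x
    rw [← Nat.card_zpowers, this, hls, Nat.card_eq_fintype_card]
    rw [← hcardU]
    exact (Fintype.card_congr Subgroup.topEquiv.toEquiv)
  have hcomm : ∀ (x : Fˣ) (n : ℕ) (z : ℤ), (x ^ n) ^ z = (x ^ z) ^ n := by
    intro x n z
    rw [← zpow_natCast x n, ← zpow_natCast (x ^ z) n, ← zpow_mul, ← zpow_mul, mul_comm]
  -- the subgroup H
  set H : Subgroup Fˣ := Subgroup.zpowers (γ ^ (l * r)) with hH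
  have hrange : ∀ x : Fˣ, x ^ (l * r) ∈ H := by
    intro x
    obtain ⟨z, hz⟩ := hγ x
    refine ⟨z, ?_⟩
    show (γ ^ (l * r)) ^ z = x ^ (l * r)
    rw [← hz]
    exact hcomm γ (l * r) z
  have hsurj : ∀ h ∈ H, ∃ y : Fˣ, y ^ (l * r) = h := by
    intro h hh
    obtain ⟨z, hz⟩ := hh
    refine ⟨γ ^ z, ?_⟩
    have : (γ ^ (l * r)) ^ z = h := hz
    rw [← this]
    exact (hcomm γ (l * r) z).symm
  have htdvd : t ∣ s := ht ▸ Nat.gcd_dvd_right r s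
  have htpos : 0 < t := ht ▸ Nat.gcd_pos_of_pos_left s hr
  have hm : Nat.card H = s / t := by
    rw [hH, Nat.card_zpowers, orderOf_pow, horder]
    rw [Nat.gcd_mul_left]
    have : Nat.gcd s r = t := by rw [Nat.gcd_comm, ← ht]
    rw [this, Nat.mul_div_mul_left _ _ hl]
  -- decomposition of units
  have hdecomp : ∀ x : Fˣ, ∃ (i : Fin l) (y : Fˣ), x = γ ^ (i : ℕ) * y ^ l := by
    intro x
    obtain ⟨z, hz⟩ := hγ x
    have hz' : γ ^ z = x := hz
    have hlz : (0:ℤ) < (l:ℤ) := by exact_mod_cast hl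
    have hmodlt : z % l < l := Int.emod_lt_of_pos z hlz
    have hmodnn : 0 ≤ z % l := Int.emod_nonneg z (by positivity)
    refine ⟨⟨(z % l).toNat, ?_⟩, γ ^ (z / l), ?_⟩
    · exact_mod_cast Int.toNat_lt' (by omega) |>.mpr (by omega)
    · show x = γ ^ ((z % ↑l).toNat) * (γ ^ (z / ↑l)) ^ l
      rw [← zpow_natCast γ ((z % ↑l).toNat), Int.toNat_of_nonneg hmodnn]
      rw [← zpow_natCast (γ ^ (z / ↑l)) l, ← zpow_mul]
      rw [← zpow_add, ← hz']
      congr 1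
      rw [mul_comm]
      exact (Int.emod_add_mul_ediv z l).symm
  -- quotient
  have hmlt : t * (s / t) = s := Nat.mul_div_cancel' htdvd
  set m := s / t with hmdef
  have hmpos : 0 < m := Nat.div_pos (Nat.le_of_dvd hs htdvd) htpos
  set Q := Fˣ ⧸ H with hQ
  haveI : Fintype Q := Fintype.ofFinite Q
  have hcardQ : Fintype.card Q = t * l := by
    have h1 : Nat.card Fˣ = Nat.card Q * Nat.card H :=
      Subgroup.card_eq_card_quotient_mul_card_subgroup H
    rw [hm, Nat.card_eq_fintype_card, Nat.card_eq_fintype_card, hcardU, ← hls] at h1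
    have h2 : l * s = Fintype.card Q * m := h1
    have h3 : (l * t) * m = Fintype.card Q * m := by
      rw [mul_assoc, hmlt, h2]
    have h4 := Nat.eq_of_mul_eq_mul_right hmpos h3
    rw [← h4, Nat.mul_comm]
  have fibQ : ∀ qq : Q, (univ.filter fun w : Fˣ => QuotientGroup.mk w = qq).card = m := by
    intro qq
    obtain ⟨u, hu⟩ := QuotientGroup.mk_surjective (s := H) qq
    have : (univ.filter fun w : Fˣ => QuotientGroup.mk w = qq).card
        = (univ.filter fun h : Fˣ => h ∈ H).card := by
      refine Finset.card_nbij' (fun w => u⁻¹ * w) (fun h => u * h) ?_ ?_ ?_ ?_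
      · intro w hw
        simp only [mem_coe, mem_filter, mem_univ, true_and] at hw ⊢
        rw [← hu] at hw
        exact (QuotientGroup.eq.mp hw.symm)
      · intro h hh
        simp only [mem_coe, mem_filter, mem_univ, true_and] at hh ⊢
        rw [← hu]
        exact (QuotientGroup.eq.mpr (by simpa using hh)).symm
      · intro w hw; simp
      · intro h hh; simp
    rw [this]
    have : (univ.filter fun h : Fˣ => h ∈ H) = H.carrier.toFinset := by
      ext h; simp [Set.mem_toFinset]
    rw [this, ← hm]
    rw [Set.toFinset_card]
    rw [Nat.card_eq_fintype_card]
    rfl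
  -- the classifying map
  set χ : Fin l → F → Option Q := fun i x =>
    if h : x = 0 then none else
      some (QuotientGroup.mk (Units.mk0 x h * γ ^ ((i : ℕ) * r))) with hχ
  have χ_fib_none : ∀ i, (univ.filter fun x : F => χ i x = none).card = 1 := by
    intro i
    have : (univ.filter fun x : F => χ i x = none) = {0} := by
      ext x
      simp only [mem_filter, mem_univ, true_and, mem_singleton, hχ]
      constructor
      · intro h
        by_contra hx
        rw [dif_neg hx] at h
        cases h
      · intro h; rw [dif_pos h]
    rw [this, card_singleton]
  have χ_fib_some : ∀ i qq, (univ.filter fun x : F => χ i x = some qq).card = m := by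
    intro i qq
    rw [← fibQ qq]
    refine Finset.card_nbij' (fun x => if h : x = 0 then 1 else Units.mk0 x h * γ ^ ((i : ℕ) * r))
      (fun w => ((w * (γ ^ ((i : ℕ) * r))⁻¹ : Fˣ) : F)) ?_ ?_ ?_ ?_
    · intro x hx
      simp only [mem_coe, mem_filter, mem_univ, true_and] at hx ⊢
      have hx0 : x ≠ 0 := by
        intro h0
        rw [hχ] at hx; simp only [dif_pos h0] at hx
        cases hx
      rw [dif_neg hx0]
      rw [hχ] at hx; simp only [dif_neg hx0] at hx
      exact Option.some_injective _ hx
    · intro w hw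
      simp only [mem_coe, mem_filter, mem_univ, true_and] at hw ⊢
      rw [hχ]
      have hne : ((w * (γ ^ ((i : ℕ) * r))⁻¹ : Fˣ) : F) ≠ 0 := Units.ne_zero _
      simp only [dif_neg hne, Units.mk0_val, inv_mul_cancel_right, hw]
    · intro x hx
      simp only [mem_coe, mem_filter, mem_univ, true_and] at hx
      have hx0 : x ≠ 0 := by
        intro h0
        rw [hχ] at hx; simp only [dif_pos h0] at hx
        cases hx
      simp only [dif_neg hx0]
      rw [mul_inv_cancel_right]
      simp
    · intro w hw
      have hne : ((w * (γ ^ ((i : ℕ) * r))⁻¹ : Fˣ) : F) ≠ 0 := Units.ne_zero _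
      simp only [dif_neg hne]
      rw [Units.mk0_val, inv_mul_cancel_right]
  have hw_split : ∀ (i : Fin l) (y : Fˣ), (γ ^ (i : ℕ) * y ^ l) ^ r
      = γ ^ ((i : ℕ) * r) * y ^ (l * r) := by
    intro i y
    rw [mul_pow, ← pow_mul, ← pow_mul]
  have key : ∀ (G' : F → F) (a : Fin l → F), G' 0 = 0 →
      (∀ (i : Fin l) (y : Fˣ), G' ((γ : F) ^ (i : ℕ) * (y : F) ^ l)
        = a i * ((γ : F) ^ (i : ℕ) * (y : F) ^ l) ^ r) →
      Set.range G' = insert (0 : F)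
        (Units.val '' (QuotientGroup.mk ⁻¹' {qq : Q | ∃ i, χ i (a i) = some qq})) := by
    intro G' a hG0 hGi
    ext v
    constructor
    · rintro ⟨x, rfl⟩
      by_cases hx : x = 0
      · rw [hx, hG0]; exact Set.mem_insert _ _
      · obtain ⟨i, y, hxy⟩ := hdecomp (Units.mk0 x hx)
        have hxF : x = (γ : F) ^ (i : ℕ) * (y : F) ^ l := by
          have := congrArg (Units.val) hxy
          push_cast at this
          simpa using this
        by_cases hai : a i = 0
        · rw [hxF, hGi i y, hai, zero_mul]; exact Set.mem_insert _ _
        · refine Set.mem_insert_iff.mpr (Or.inr ?_)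
          refine ⟨Units.mk0 (a i) hai * (γ ^ (i : ℕ) * y ^ l) ^ r, ?_, ?_⟩
          · show QuotientGroup.mk _ ∈ {qq : Q | ∃ i, χ i (a i) = some qq}
            refine ⟨i, ?_⟩
            rw [hχ]
            simp only [dif_neg hai]
            congr 1
            refine QuotientGroup.eq.mpr ?_
            rw [hw_split i y]
            have : (Units.mk0 (a i) hai * γ ^ ((i : ℕ) * r))⁻¹
                * (Units.mk0 (a i) hai * (γ ^ ((i : ℕ) * r) * y ^ (l * r)))
                = y ^ (l * r) := by group
            rw [this]
            exact hrange y
          · rw [hxF, hGi i y]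
            push_cast [Units.val_mk0]
            ring
    · intro hv
      rcases Set.mem_insert_iff.mp hv with h0 | ⟨w, hwmem, rfl⟩
      · exact ⟨0, by rw [hG0, h0]⟩
      · obtain ⟨i, hi⟩ := hwmem
        have hai : a i ≠ 0 := by
          intro h0
          rw [hχ] at hi; simp only [dif_pos h0] at hi
          cases hi
        rw [hχ] at hi; simp only [dif_neg hai] at hi
        have hmk : (QuotientGroup.mk (Units.mk0 (a i) hai * γ ^ ((i : ℕ) * r)) : Q)
            = QuotientGroup.mk w := Option.some_injective _ hi
        obtain ⟨y, hy⟩ := hsurj _ (QuotientGroup.eq.mp hmk)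
        have hww : w = Units.mk0 (a i) hai * (γ ^ (i : ℕ) * y ^ l) ^ r := by
          rw [hw_split i y, ← mul_assoc, hy]
          group
        refine ⟨(γ : F) ^ (i : ℕ) * (y : F) ^ l, ?_⟩
        rw [hGi i y, hww]
        push_cast [Units.val_mk0]
        ring

  -- value set cardinality
  have ncard_eq : ∀ a : Fin l → F, (Set.range (G a)).ncard
      = (univ.filter fun qq : Q => ∃ i, χ i (a i) = some qq).card * m + 1 := by
    intro a
    rw [key (G a) a (hG a).1 (hG a).2]
    set Sfin : Finset Q := univ.filter fun qq : Q => ∃ i, χ i (a i) = some qq with hSfin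
    have hset : {qq : Q | ∃ i, χ i (a i) = some qq} = ↑Sfin := by
      ext qq; simp [hSfin]
    rw [hset]
    have hXfin : (Units.val '' (QuotientGroup.mk ⁻¹' (↑Sfin : Set Q))).Finite :=
      Set.toFinite _
    have h0X : (0 : F) ∉ Units.val '' (QuotientGroup.mk ⁻¹' (↑Sfin : Set Q)) := by
      rintro ⟨w, -, hw⟩
      exact Units.ne_zero w hw
    rw [Set.ncard_insert_of_notMem h0X hXfin]
    congr 1
    rw [Set.ncard_image_of_injective _ Units.val_injective]
    have hpre : (QuotientGroup.mk ⁻¹' (↑Sfin : Set Q))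
        = ↑(univ.filter fun w : Fˣ => (QuotientGroup.mk w : Q) ∈ Sfin) := by
      ext w; simp
    rw [hpre, Set.ncard_coe_finset]
    rw [Finset.card_eq_sum_card_fiberwise (f := fun w : Fˣ => (QuotientGroup.mk w : Q))
      (s := univ.filter fun w : Fˣ => (QuotientGroup.mk w : Q) ∈ Sfin)
      (t := Sfin) (fun w hw => (mem_filter.mp hw).2)]
    have hfib : ∀ qq ∈ Sfin, ((univ.filter fun w : Fˣ => (QuotientGroup.mk w : Q) ∈ Sfin).filter
        fun w => (QuotientGroup.mk w : Q) = qq).card = m := by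
      intro qq hqq
      rw [← fibQ qq]
      congr 1
      ext w
      simp only [mem_filter, mem_univ, true_and, and_iff_right_iff_imp]
      intro hw; rw [hw]; exact hqq
    rw [Finset.sum_congr rfl hfib, Finset.sum_const, smul_eq_mul]
  have cond_iff : ∀ a : Fin l → F,
      ((Set.range (G a)).ncard = 1 + k * m) ↔
        ((univ.filter fun qq : Q => ∃ i, χ i (a i) = some qq).card = k) := by
    intro a
    rw [ncard_eq a]
    constructor
    · intro h
      have h2 : (univ.filter fun qq : Q => ∃ i, χ i (a i) = some qq).card * m = k * m := by
        omega
      exact Nat.eq_of_mul_eq_mul_right hmpos h2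
    · intro h
      rw [h, Nat.add_comm]
  have Ncount : (Nat.card {a : Fin l → F // (Set.range (G a)).ncard = 1 + k * m} : ℝ)
      = ((univ.filter fun a : Fin l → F =>
          (univ.filter fun qq : Q => ∃ i, χ i (a i) = some qq).card = k).card : ℝ) := by
    congr 1
    rw [Nat.card_congr (Equiv.subtypeEquivRight cond_iff), Nat.card_eq_fintype_card,
      Fintype.card_subtype]
  have hoc := occupancy_count (fun i x => χ i x) m χ_fib_none χ_fib_some k
  rw [Ncount, show ((univ.filter fun a : Fin l → F =>
      (univ.filter fun qq : Q => ∃ i, χ i (a i) = some qq).card = k).card : ℝ)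
      = ((Fintype.card Q).choose k : ℝ) * ∑ j ∈ range (k + 1), (-1 : ℝ) ^ (k - j)
        * (k.choose j : ℝ) * ((1 : ℝ) + (m : ℝ) * (j : ℝ)) ^ (Fintype.card (Fin l)) from by
      convert hoc, hcardQ,
    Fintype.card_fin]
  have htR : (0 : ℝ) < (t : ℝ) := by exact_mod_cast htpos
  have hqR : (0 : ℝ) < (q : ℝ) := by
    have : 0 < q := by
      have := Fintype.card_pos (α := F)
      omega
    exact_mod_cast this
  have hsr : (s : ℝ) = (t : ℝ) * (m : ℝ) := by exact_mod_cast hmlt.symm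
  have hterm : ∀ j : ℕ, (((t : ℝ) + (s : ℝ) * (j : ℝ)) / ((t : ℝ) * (q : ℝ))) ^ l
      = ((1 : ℝ) + (m : ℝ) * (j : ℝ)) ^ l / (q : ℝ) ^ l := by
    intro j
    have h1 : (t : ℝ) + (s : ℝ) * (j : ℝ) = (t : ℝ) * (1 + (m : ℝ) * (j : ℝ)) := by
      rw [hsr]; ring
    rw [h1, mul_div_mul_left _ _ (ne_of_gt htR), div_pow]
  simp only [hterm]
  rw [mul_div_assoc, Finset.sum_div]
  exact congrArg _ (Finset.sum_congr rfl fun j _ => mul_div_assoc _ _ _)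
end

section
/- Let q be a prime power and let g be chosen uniformly at random from the q^{q−1} polynomials over 𝔽_q of degree at most q−1 with g(0) = 0 (equivalently, a uniformly random function g : 𝔽_q → 𝔽_q with g(0) = 0). Then for every integer k with 0 ≤ k ≤ q−1, ℙ(|V_g| = k + 1) = C(q−1, k) ∑_{j=0}^{k} (−1)^{k−j} C(k, j) ((1+j)/q)^{q−1}. -/
open Finset

lemma aux_card_pi {α β : Type*} [Fintype α] [Fintype β] [DecidableEq α] [DecidableEq β]
    (s : Finset β) :
    (Finset.univ.filter fun h : α → β => ∀ x, h x ∈ s).card = s.card ^ Fintype.card α := by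
  have h : (Finset.univ.filter fun h : α → β => ∀ x, h x ∈ s)
      = Fintype.piFinset fun _ : α => s := by
    ext h; simp [Fintype.mem_piFinset]
  rw [h, Fintype.card_piFinset]
  simp

lemma aux_cover_count {α β : Type*} [Fintype α] [Fintype β] [DecidableEq α] [DecidableEq β]
    (S : Finset β) :
    ((Finset.univ.filter fun h : α → β => ∀ i ∈ S, ∃ x, h x = i).card : ℤ)
      = ∑ j ∈ Finset.range (S.card + 1),
          (-1 : ℤ) ^ (S.card - j) * (S.card.choose j) *
            ((Fintype.card β - S.card + j : ℕ) : ℤ) ^ Fintype.card α := by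
  have hSB : S.card ≤ Fintype.card β := S.card_le_univ
  have key := Finset.inclusion_exclusion_card_inf_compl S
    (fun i => Finset.univ.filter fun h : α → β => ∀ x, h x ≠ i)
  have h1 : (S.inf fun i => (Finset.univ.filter fun h : α → β => ∀ x, h x ≠ i)ᶜ)
      = Finset.univ.filter fun h : α → β => ∀ i ∈ S, ∃ x, h x = i := by
    ext h
    simp only [Finset.mem_inf, Finset.mem_compl, Finset.mem_filter, Finset.mem_univ, true_and]
    push_neg
    rfl
  have h2 : ∀ t ∈ S.powerset,
      ((t.inf fun i => Finset.univ.filter fun h : α → β => ∀ x, h x ≠ i).card : ℤ)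
        = ((Fintype.card β - t.card : ℕ) : ℤ) ^ Fintype.card α := by
    intro t ht
    have : (t.inf fun i => Finset.univ.filter fun h : α → β => ∀ x, h x ≠ i)
        = Finset.univ.filter fun h : α → β => ∀ x, h x ∈ tᶜ := by
      ext h
      simp only [Finset.mem_inf, Finset.mem_filter, Finset.mem_univ, true_and,
        Finset.mem_compl]
      exact ⟨fun H x hx => H (h x) hx x rfl, fun H i hi x hxi => H x (by rw [hxi]; exact hi)⟩
    rw [this, aux_card_pi, Finset.card_compl]
    push_cast
    ring
  rw [h1] at key
  rw [key, Finset.sum_congr rfl fun t ht => by rw [h2 t ht]]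
  have h3 : (∑ t ∈ S.powerset,
        (-1 : ℤ) ^ t.card * ((Fintype.card β - t.card : ℕ) : ℤ) ^ Fintype.card α)
      = ∑ m ∈ Finset.range (S.card + 1),
          (S.card.choose m) • ((-1 : ℤ) ^ m * ((Fintype.card β - m : ℕ) : ℤ) ^ Fintype.card α) :=
    Finset.sum_powerset_apply_card
      (fun m => (-1 : ℤ) ^ m * ((Fintype.card β - m : ℕ) : ℤ) ^ Fintype.card α)
  rw [h3, ← Finset.sum_range_reflect]
  refine Finset.sum_congr rfl fun m hm => ?_
  rw [Finset.mem_range, Nat.lt_succ_iff] at hm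
  have e1 : S.card + 1 - 1 - m = S.card - m := by clear key h1 h2 h3; omega
  have e4 : Fintype.card β - (S.card - m) = Fintype.card β - S.card + m := by
    clear key h1 h2 h3; omega
  rw [e1, Nat.choose_symm hm, e4, nsmul_eq_mul]
  ring

lemma aux_card_filter_coe {β : Type*} [DecidableEq β] (C T : Finset β) (hTC : T ⊆ C) :
    (Finset.univ.filter fun y : {y // y ∈ C} => (y : β) ∈ T).card = T.card := by
  refine Finset.card_bij (fun (y : {y // y ∈ C}) _ => (y : β)) ?_ ?_ ?_
  · intro a ha; simpa using (Finset.mem_filter.1 ha).2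
  · intro a _ b _ h; exact Subtype.ext h
  · intro b hb; exact ⟨⟨b, hTC hb⟩, by simp [hb], rfl⟩

lemma aux_fiber_count (F : Type*) [Fintype F] [DecidableEq F] (z : F) (T : Finset F)
    (h0 : z ∉ T) :
    ((Finset.univ.filter fun g : F → F =>
        g z = z ∧ Finset.image g Finset.univ = insert z T).card : ℤ)
      = ∑ j ∈ Finset.range (T.card + 1),
          (-1 : ℤ) ^ (T.card - j) * (T.card.choose j) *
            ((1 + j : ℕ) : ℤ) ^ (Fintype.card F - 1) := by
  classical
  set C : Finset F := insert z T with hC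
  set S : Finset {y // y ∈ C} := Finset.univ.filter (fun y : {y // y ∈ C} => (y : F) ∈ T)
    with hS
  have hScard : S.card = T.card := aux_card_filter_coe C T (Finset.subset_insert _ _)
  have hcod : Fintype.card {y // y ∈ C} = T.card + 1 := by
    rw [Fintype.card_coe, hC, Finset.card_insert_of_notMem h0]
  have hdom : Fintype.card {x : F // x ≠ z} = Fintype.card F - 1 := by
    simp [Fintype.card_subtype_compl]
  have hbij : (Finset.univ.filter fun g : F → F =>
        g z = z ∧ Finset.image g Finset.univ = C).card
      = (Finset.univ.filter fun h : {x : F // x ≠ z} → {y // y ∈ C} =>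
          ∀ i ∈ S, ∃ x, h x = i).card := by
    apply Finset.card_bij (fun g hg => fun x : {x : F // x ≠ z} =>
      (⟨g x, by
        have h2 := (Finset.mem_filter.1 hg).2.2
        have h3 := Finset.mem_image_of_mem g (Finset.mem_univ x.1)
        rwa [h2] at h3⟩ : {y // y ∈ C}))
    · intro g hg
      obtain ⟨-, hg1, hg2⟩ := Finset.mem_filter.1 hg
      rw [Finset.mem_filter]
      refine ⟨Finset.mem_univ _, fun i hi => ?_⟩
      have hiT : (i : F) ∈ T := (Finset.mem_filter.1 hi).2
      have : (i : F) ∈ Finset.image g Finset.univ := by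
        rw [hg2]; exact i.2
      obtain ⟨a, -, ha⟩ := Finset.mem_image.1 this
      have ha0 : a ≠ z := by
        rintro rfl
        rw [hg1] at ha
        rw [ha] at h0
        exact h0 hiT
      exact ⟨⟨a, ha0⟩, Subtype.ext ha⟩
    · intro g hg g' hg' heq
      funext x
      by_cases hx : x = z
      · rw [hx, (Finset.mem_filter.1 hg).2.1, (Finset.mem_filter.1 hg').2.1]
      · exact congrArg Subtype.val (congrFun heq ⟨x, hx⟩)
    · intro h hh
      refine ⟨fun x => if hx : x = z then z else ((h ⟨x, hx⟩ : {y // y ∈ C}) : F), ?_, ?_⟩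
      · rw [Finset.mem_filter]
        refine ⟨Finset.mem_univ _, dif_pos rfl, ?_⟩
        apply Finset.Subset.antisymm
        · intro y hy
          obtain ⟨x, -, hx⟩ := Finset.mem_image.1 hy
          by_cases hxz : x = z
          · rw [hxz, dif_pos rfl] at hx
            rw [← hx, hC]; exact Finset.mem_insert_self _ _
          · rw [dif_neg hxz] at hx
            rw [← hx]; exact (h ⟨x, hxz⟩).2
        · intro y hy
          rw [hC, Finset.mem_insert] at hy
          rcases hy with rfl | hyT
          · exact Finset.mem_image.2 ⟨y, Finset.mem_univ _, dif_pos rfl⟩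
          · have hiS : (⟨y, Finset.mem_insert_of_mem hyT⟩ : {y // y ∈ C}) ∈ S := by
              rw [hS, Finset.mem_filter]; exact ⟨Finset.mem_univ _, hyT⟩
            obtain ⟨x, hx⟩ := (Finset.mem_filter.1 hh).2 _ hiS
            refine Finset.mem_image.2 ⟨(x : F), Finset.mem_univ _, ?_⟩
            rw [dif_neg x.2]
            simp only [Subtype.coe_eta, hx]
      · funext x
        apply Subtype.ext
        show (if hx : (x : F) = z then z else _) = ((h x : {y // y ∈ C}) : F)
        rw [dif_neg x.2]
  rw [hbij, aux_cover_count S, hScard, hcod, hdom]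
  refine Finset.sum_congr rfl fun j _ => ?_
  rw [show T.card + 1 - T.card + j = 1 + j from by rw [Nat.add_sub_cancel_left]]

/-- The exact distribution of the value set size of a uniformly random polynomial of degree at
most `q-1` over `𝔽_q` with `g(0) = 0` (equivalently, a uniformly random function
`g : 𝔽_q → 𝔽_q` with `g(0) = 0`):
`ℙ(|V_g| = k+1) = C(q-1,k) ∑_{j=0}^{k} (-1)^{k-j} C(k,j) ((1+j)/q)^{q-1}`. -/
theorem random_polynomial_value_set_distribution
    (F : Type) [Field F] [Fintype F] (q : ℕ) (hq : q = Fintype.card F)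
    (k : ℕ) (hk : k ≤ q - 1) :
    (Nat.card {g : F → F // g 0 = 0 ∧ (Set.range g).ncard = k + 1} : ℝ) / (q : ℝ) ^ (q - 1)
      = ((q - 1).choose k : ℝ) *
          ∑ j ∈ Finset.range (k + 1),
            (-1 : ℝ) ^ (k - j) * (k.choose j : ℝ) * ((1 + (j : ℝ)) / (q : ℝ)) ^ (q - 1) := by
  classical
  have hqpos : 0 < q := hq ▸ Fintype.card_pos
  have hq0 : (q : ℝ) ≠ 0 := Nat.cast_ne_zero.mpr hqpos.ne'
  have hr : ∀ g : F → F, (Set.range g).ncard = (Finset.image g Finset.univ).card := fun g => by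
    rw [← Set.image_univ, ← Finset.coe_univ, ← Finset.coe_image, Set.ncard_coe_finset]
  have hNat : Nat.card {g : F → F // g 0 = 0 ∧ (Set.range g).ncard = k + 1}
      = (Finset.univ.filter fun g : F → F =>
          g 0 = 0 ∧ (Finset.image g Finset.univ).card = k + 1).card := by
    rw [Nat.card_congr (Equiv.subtypeEquivRight fun g => by rw [hr g])]
    rw [Nat.card_eq_fintype_card, Fintype.card_subtype]
  have hmaps : ∀ g ∈ (Finset.univ.filter fun g : F → F =>
        g 0 = 0 ∧ (Finset.image g Finset.univ).card = k + 1),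
      (Finset.image g Finset.univ).erase 0
        ∈ Finset.powersetCard k ((Finset.univ : Finset F).erase 0) := by
    intro g hg
    obtain ⟨-, hg0, hgc⟩ := Finset.mem_filter.1 hg
    rw [Finset.mem_powersetCard]
    constructor
    · intro x hx
      rw [Finset.mem_erase] at hx ⊢
      exact ⟨hx.1, Finset.mem_univ x⟩
    · have h0mem : (0:F) ∈ Finset.image g Finset.univ := by
        rw [← hg0]; exact Finset.mem_image_of_mem g (Finset.mem_univ 0)
      rw [Finset.card_erase_of_mem h0mem, hgc]
      rfl
  have hpart : (Finset.univ.filter fun g : F → F =>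
        g 0 = 0 ∧ (Finset.image g Finset.univ).card = k + 1).card
      = ∑ T ∈ Finset.powersetCard k ((Finset.univ : Finset F).erase 0),
          (Finset.univ.filter fun g : F → F =>
            g 0 = 0 ∧ Finset.image g Finset.univ = insert 0 T).card := by
    rw [Finset.card_eq_sum_card_fiberwise hmaps]
    refine Finset.sum_congr rfl fun T hT => ?_
    congr 1
    rw [Finset.mem_powersetCard] at hT
    have h0T : (0:F) ∉ T := fun h => (Finset.mem_erase.1 (hT.1 h)).1 rfl
    ext g
    simp only [Finset.mem_filter, Finset.mem_univ, true_and]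
    constructor
    · rintro ⟨⟨hg0, hgc⟩, hfib⟩
      refine ⟨hg0, ?_⟩
      have h0mem : (0:F) ∈ Finset.image g Finset.univ := by
        rw [← hg0]; exact Finset.mem_image_of_mem g (Finset.mem_univ 0)
      rw [← hfib, Finset.insert_erase h0mem]
    · rintro ⟨hg0, him⟩
      refine ⟨⟨hg0, ?_⟩, ?_⟩
      · rw [him, Finset.card_insert_of_notMem h0T, hT.2]
      · rw [him, Finset.erase_insert h0T]
  have hVal : ((Finset.univ.filter fun g : F → F =>
        g 0 = 0 ∧ (Finset.image g Finset.univ).card = k + 1).card : ℤ)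
      = ((q - 1).choose k : ℤ) *
          ∑ j ∈ Finset.range (k + 1),
            (-1 : ℤ) ^ (k - j) * (k.choose j) * ((1 + j : ℕ) : ℤ) ^ (q - 1) := by
    rw [hpart, Nat.cast_sum]
    rw [Finset.sum_congr rfl (fun T hT => ?_), Finset.sum_const, nsmul_eq_mul,
      Finset.card_powersetCard, Finset.card_erase_of_mem (Finset.mem_univ 0),
      Finset.card_univ, ← hq]
    rw [Finset.mem_powersetCard] at hT
    have h0T : (0:F) ∉ T := fun h => (Finset.mem_erase.1 (hT.1 h)).1 rfl
    rw [aux_fiber_count F 0 T h0T, hT.2, ← hq]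
  have key : ((Finset.univ.filter fun g : F → F =>
        g 0 = 0 ∧ (Finset.image g Finset.univ).card = k + 1).card : ℝ)
      = ((q - 1).choose k : ℝ) *
          ∑ j ∈ Finset.range (k + 1),
            (-1 : ℝ) ^ (k - j) * (k.choose j : ℝ) * (1 + (j : ℝ)) ^ (q - 1) := by
    exact_mod_cast hVal
  have hsum : ∑ j ∈ Finset.range (k + 1),
        (-1 : ℝ) ^ (k - j) * (k.choose j : ℝ) * ((1 + (j : ℝ)) / (q : ℝ)) ^ (q - 1)
      = (∑ j ∈ Finset.range (k + 1),
          (-1 : ℝ) ^ (k - j) * (k.choose j : ℝ) * (1 + (j : ℝ)) ^ (q - 1)) / (q : ℝ) ^ (q - 1) := by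
    rw [Finset.sum_div]
    refine Finset.sum_congr rfl fun j _ => ?_
    rw [div_pow]
    ring
  rw [hNat, key, hsum, mul_div_assoc]
end

section
/- Let (q_m) be a sequence of prime powers tending to infinity and (k_m) a sequence of positive integers with k_m^2/q_m → 0 (in particular, this covers any fixed k ≥ 1). For each m let g be a uniformly random function g : 𝔽_{q_m} → 𝔽_{q_m} with g(0) = 0 (equivalently a uniformly random polynomial of degree at most q_m−1 with constant term 0). Then ℙ(|V_g| = k_m + 1) / [ (1/k_m!) (q_m − 1)^{k_m} ((k_m + 1)/q_m)^{q_m − 1} ] → 1 as m → ∞. -/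
open Finset

lemma pi_card {F : Type*} [Fintype F] [DecidableEq F] (z : F) (T : Finset F) :
    (Fintype.piFinset (fun x => if x = z then ({z} : Finset F) else T)).card
      = T.card ^ (Fintype.card F - 1) := by
  rw [Fintype.card_piFinset]
  rw [← Finset.mul_prod_erase Finset.univ _ (Finset.mem_univ z)]
  rw [if_pos rfl, Finset.card_singleton, one_mul]
  rw [Finset.prod_congr rfl (fun x hx => by rw [if_neg (Finset.ne_of_mem_erase hx)]),
    Finset.prod_const, Finset.card_erase_of_mem (Finset.mem_univ _), Finset.card_univ]


lemma S_card {F : Type*} [Fintype F] [DecidableEq F] (z : F) (k : ℕ) :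
    (Finset.univ.filter (fun S : Finset F => z ∈ S ∧ S.card = k + 1)).card
      = (Fintype.card F - 1).choose k := by
  have : (Finset.univ.filter (fun S : Finset F => z ∈ S ∧ S.card = k + 1)).card
      = ((Finset.univ.erase z).powersetCard k).card := by
    refine Finset.card_bij' (fun S _ => S.erase z) (fun T _ => insert z T) ?_ ?_ ?_ ?_
    · intro S hS
      simp only [mem_filter, mem_univ, true_and] at hS
      rw [Finset.mem_powersetCard]
      exact ⟨Finset.erase_subset_erase z (Finset.subset_univ S),
        by rw [Finset.card_erase_of_mem hS.1, hS.2]; rfl⟩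
    · intro T hT
      rw [Finset.mem_powersetCard] at hT
      have hzT : z ∉ T := fun h => (Finset.mem_erase.mp (hT.1 h)).1 rfl
      simp only [mem_filter, mem_univ, true_and]
      exact ⟨Finset.mem_insert_self _ _, by rw [Finset.card_insert_of_notMem hzT, hT.2]⟩
    · intro S hS
      simp only [mem_filter, mem_univ, true_and] at hS
      exact Finset.insert_erase hS.1
    · intro T hT
      rw [Finset.mem_powersetCard] at hT
      exact Finset.erase_insert (fun h => (Finset.mem_erase.mp (hT.1 h)).1 rfl)
  rw [this, Finset.card_powersetCard, Finset.card_erase_of_mem (Finset.mem_univ _),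
    Finset.card_univ]

lemma count_bounds (F : Type*) [Field F] [Fintype F] (k : ℕ) :
    Nat.card {g : F → F // g 0 = 0 ∧ (Set.range g).ncard = k + 1}
        ≤ ((Fintype.card F - 1).choose k) * (k+1) ^ (Fintype.card F - 1) ∧
    ((Fintype.card F - 1).choose k) * (k+1) ^ (Fintype.card F - 1)
        ≤ Nat.card {g : F → F // g 0 = 0 ∧ (Set.range g).ncard = k + 1}
          + ((Fintype.card F - 1).choose k) * (k * k ^ (Fintype.card F - 1)) := by
  classical
  set q := Fintype.card F with hq
  set 𝒮 : Finset (Finset F) :=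
    Finset.univ.filter (fun S : Finset F => (0:F) ∈ S ∧ S.card = k + 1) with h𝒮
  set A : Finset F → Finset (F → F) :=
    (fun S => Finset.univ.filter (fun g : F → F => g 0 = 0 ∧ Finset.image g Finset.univ = S))
    with hA
  have himg : ∀ g : F → F, (Set.range g).ncard = (Finset.image g Finset.univ).card := by
    intro g
    rw [← Set.ncard_coe_finset, Finset.coe_image, Finset.coe_univ, Set.image_univ]
  -- the partition
  have hN : Nat.card {g : F → F // g 0 = 0 ∧ (Set.range g).ncard = k + 1}
      = ∑ S ∈ 𝒮, (A S).card := by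
    rw [Nat.card_eq_fintype_card, Fintype.card_subtype]
    rw [Finset.card_eq_sum_card_fiberwise
      (f := fun g : F → F => Finset.image g Finset.univ) (t := 𝒮)
      (fun g hg => by
        simp only [Finset.mem_coe, mem_filter, mem_univ, true_and] at hg
        simp only [h𝒮, Finset.mem_coe, mem_filter, mem_univ, true_and]
        exact ⟨Finset.mem_image.mpr ⟨0, Finset.mem_univ _, hg.1⟩, by rw [← himg g, hg.2]⟩)]
    apply Finset.sum_congr rfl
    intro S hS
    congr 1
    ext g
    simp only [h𝒮, hA, mem_filter, mem_univ, true_and] at hS ⊢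
    constructor
    · rintro ⟨⟨h0, _⟩, h2⟩; exact ⟨h0, h2⟩
    · rintro ⟨h0, h2⟩; exact ⟨⟨h0, by rw [himg g, h2, hS.2]⟩, h2⟩
  -- upper bound per fiber
  have hupper : ∀ S ∈ 𝒮, (A S).card ≤ (k+1) ^ (q - 1) := by
    intro S hS
    simp only [h𝒮, mem_filter, mem_univ, true_and] at hS
    have hsub : A S ⊆ Fintype.piFinset (fun x => if x = (0:F) then ({0}:Finset F) else S) := by
      intro g hg
      simp only [hA, mem_filter, mem_univ, true_and] at hg
      rw [Fintype.mem_piFinset]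
      intro x
      by_cases hx : x = 0
      · rw [if_pos hx, hx, hg.1]; exact Finset.mem_singleton_self _
      · rw [if_neg hx, ← hg.2]; exact Finset.mem_image.mpr ⟨x, Finset.mem_univ _, rfl⟩
    calc (A S).card ≤ _ := Finset.card_le_card hsub
      _ = S.card ^ (q - 1) := pi_card 0 S
      _ = (k+1) ^ (q-1) := by rw [hS.2]
  -- lower bound per fiber
  have hlower : ∀ S ∈ 𝒮, (k+1) ^ (q - 1) ≤ (A S).card + k * k ^ (q - 1) := by
    intro S hS
    simp only [h𝒮, mem_filter, mem_univ, true_and] at hS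
    set B := Fintype.piFinset (fun x => if x = (0:F) then ({0}:Finset F) else S) with hB
    have hBsub : B ⊆ A S ∪ (S.erase 0).biUnion
        (fun y => Fintype.piFinset (fun x => if x = (0:F) then ({0}:Finset F) else S.erase y)) := by
      intro g hg
      rw [Fintype.mem_piFinset] at hg
      have hg0 : g 0 = 0 := by
        have := hg 0; rw [if_pos rfl] at this; exact Finset.mem_singleton.mp this
      have hgS : Finset.image g Finset.univ ⊆ S := by
        intro y hy
        obtain ⟨x, -, rfl⟩ := Finset.mem_image.mp hy
        by_cases hx : x = 0
        · rw [hx, hg0]; exact hS.1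
        · have := hg x; rwa [if_neg hx] at this
      by_cases him : Finset.image g Finset.univ = S
      · exact Finset.mem_union_left _ (by
          simp only [hA, mem_filter, mem_univ, true_and]; exact ⟨hg0, him⟩)
      · obtain ⟨y, hyS, hyim⟩ := Finset.exists_of_ssubset (ssubset_of_subset_of_ne hgS him)
        have hy0 : y ≠ 0 := by
          rintro rfl
          exact hyim (Finset.mem_image.mpr ⟨0, Finset.mem_univ _, hg0⟩)
        apply Finset.mem_union_right
        apply Finset.mem_biUnion.mpr
        refine ⟨y, Finset.mem_erase.mpr ⟨hy0, hyS⟩, ?_⟩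
        rw [Fintype.mem_piFinset]
        intro x
        by_cases hx : x = 0
        · rw [if_pos hx, hx, hg0]; exact Finset.mem_singleton_self _
        · rw [if_neg hx]
          refine Finset.mem_erase.mpr ⟨?_, by have := hg x; rwa [if_neg hx] at this⟩
          rintro rfl
          exact hyim (Finset.mem_image.mpr ⟨x, Finset.mem_univ _, rfl⟩)
    have hBcard : B.card = (k+1) ^ (q - 1) := by
      rw [hB, pi_card 0 S, hS.2]
    calc (k+1) ^ (q-1) = B.card := hBcard.symm
      _ ≤ _ := Finset.card_le_card hBsub
      _ ≤ (A S).card + ((S.erase 0).biUnion _).card := Finset.card_union_le _ _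
      _ ≤ (A S).card + k * k ^ (q - 1) := by
          refine Nat.add_le_add_left ?_ _
          calc ((S.erase 0).biUnion _).card
              ≤ ∑ y ∈ S.erase 0, (Fintype.piFinset
                  (fun x => if x = (0:F) then ({0}:Finset F) else S.erase y)).card :=
                Finset.card_biUnion_le
            _ ≤ ∑ _y ∈ S.erase 0, k ^ (q - 1) := by
                refine Finset.sum_le_sum (fun y hy => ?_)
                rw [pi_card 0 (S.erase y), Finset.card_erase_of_mem (Finset.mem_erase.mp hy).2,
                  hS.2]
                simp
                exact le_rfl
            _ = (S.erase 0).card * k ^ (q-1) := by rw [Finset.sum_const, smul_eq_mul]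
            _ = k * k ^ (q-1) := by rw [Finset.card_erase_of_mem hS.1, hS.2]; simp
  have hScard : 𝒮.card = (q - 1).choose k := S_card 0 k
  constructor
  · rw [hN]
    calc ∑ S ∈ 𝒮, (A S).card ≤ ∑ _S ∈ 𝒮, (k+1)^(q-1) := Finset.sum_le_sum hupper
      _ = 𝒮.card * (k+1)^(q-1) := by rw [Finset.sum_const, smul_eq_mul]
      _ = (q-1).choose k * (k+1)^(q-1) := by rw [hScard]
  · rw [hN]
    calc (q-1).choose k * (k+1)^(q-1) = ∑ _S ∈ 𝒮, (k+1)^(q-1) := by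
          rw [Finset.sum_const, smul_eq_mul, hScard]
      _ ≤ ∑ S ∈ 𝒮, ((A S).card + k * k^(q-1)) := Finset.sum_le_sum hlower
      _ = (∑ S ∈ 𝒮, (A S).card) + 𝒮.card * (k * k^(q-1)) := by
          rw [Finset.sum_add_distrib, Finset.sum_const, smul_eq_mul]
      _ = _ := by rw [hScard]

set_option maxHeartbeats 1000000 in

lemma ratio_bounds (q k N : ℕ) (hk : 0 < k) (hq2 : 2 ≤ q)
    (hub : N ≤ (q-1).choose k * (k+1) ^ (q-1))
    (hlb : (q-1).choose k * (k+1) ^ (q-1) ≤ N + (q-1).choose k * (k * k ^ (q-1)))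
    (hε : (k:ℝ)^2/((q:ℝ)-1) < 1/2) :
    (1 - (k:ℝ)^2/((q:ℝ)-1))^2 ≤
      ((N:ℝ) / (q:ℝ)^(q-1)) /
        ((1/((k.factorial:ℕ):ℝ)) * ((q:ℝ)-1)^k * (((k:ℝ)+1)/(q:ℝ))^(q-1))
    ∧ ((N:ℝ) / (q:ℝ)^(q-1)) /
        ((1/((k.factorial:ℕ):ℝ)) * ((q:ℝ)-1)^k * (((k:ℝ)+1)/(q:ℝ))^(q-1)) ≤ 1 := by
  have hq1 : (1:ℝ) ≤ (q:ℝ) - 1 := by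
    have : (2:ℝ) ≤ q := by exact_mod_cast hq2
    linarith
  have hq1pos : (0:ℝ) < (q:ℝ) - 1 := by linarith
  have hqpos : (0:ℝ) < (q:ℝ) := by linarith
  have hkpos : (0:ℝ) < (k:ℝ) := by exact_mod_cast hk
  have hk1 : (1:ℝ) ≤ (k:ℝ) := by exact_mod_cast hk
  have hfacpos : (0:ℝ) < (k.factorial : ℝ) := by exact_mod_cast k.factorial_pos
  have hε' : (k:ℝ)^2 < ((q:ℝ)-1)/2 := by
    rw [div_lt_iff₀ hq1pos] at hε; linarith
  have hkq : (k:ℝ) ≤ (q:ℝ) - 1 := by nlinarith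
  have hkqn : k ≤ q := by
    have : (k:ℝ) ≤ (q:ℝ) := by linarith
    exact_mod_cast this
  have hεnn : 0 ≤ (k:ℝ)^2/((q:ℝ)-1) := by positivity
  set ε : ℝ := (k:ℝ)^2/((q:ℝ)-1) with hεdef
  have hDpos : (0:ℝ) < ((q:ℝ)-1)^k * ((k:ℝ)+1)^(q-1) := by positivity
  have hR : ((N:ℝ) / (q:ℝ)^(q-1)) /
        ((1/((k.factorial:ℕ):ℝ)) * ((q:ℝ)-1)^k * (((k:ℝ)+1)/(q:ℝ))^(q-1))
      = (N:ℝ) * (k.factorial:ℝ) / (((q:ℝ)-1)^k * ((k:ℝ)+1)^(q-1)) := by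
    rw [div_pow]
    field_simp
  rw [hR]
  have hdesc_ub : (q-1).choose k * k.factorial ≤ (q-1)^k := by
    have h1 := Nat.descFactorial_le_pow (q-1) k
    rw [Nat.descFactorial_eq_factorial_mul_choose] at h1
    rw [Nat.mul_comm]
    exact h1
  have hdesc_lb : (q - k)^k ≤ (q-1).choose k * k.factorial := by
    have h1 := Nat.pow_sub_le_descFactorial (q-1) k
    rw [Nat.descFactorial_eq_factorial_mul_choose] at h1
    have hq1' : q - 1 + 1 = q := by omega
    rw [hq1'] at h1
    rw [Nat.mul_comm]
    exact h1
  constructor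
  · -- lower bound
    set X : ℝ := ((q-1).choose k : ℝ) * (k.factorial:ℝ) / ((q:ℝ)-1)^k with hXdef
    set Y : ℝ := 1 - (k:ℝ) * ((k:ℝ)/((k:ℝ)+1))^(q-1) with hYdef
    have hcast : ((q - k : ℕ) : ℝ) = (q:ℝ) - (k:ℝ) := by
      push_cast [hkqn]; ring
    have hX : 1 - ε ≤ X := by
      have h2 : ((q:ℝ) - (k:ℝ))^k ≤ ((q-1).choose k : ℝ) * (k.factorial:ℝ) := by
        rw [← hcast]
        exact_mod_cast hdesc_lb
      have h3 : 1 - ε ≤ ((q:ℝ) - (k:ℝ))^k / ((q:ℝ)-1)^k := by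
        rw [← div_pow]
        have ha : (-2:ℝ) ≤ -(((k:ℝ)-1)/((q:ℝ)-1)) := by
          have : ((k:ℝ)-1)/((q:ℝ)-1) ≤ 2 := by
            rw [div_le_iff₀ hq1pos]; nlinarith
          linarith
        have hbern := one_add_mul_le_pow ha k
        have heq : (1 + -(((k:ℝ)-1)/((q:ℝ)-1))) = ((q:ℝ)-(k:ℝ))/((q:ℝ)-1) := by
          field_simp
          ring
        rw [heq] at hbern
        refine le_trans ?_ hbern
        have h4 : (k:ℝ) * (((k:ℝ)-1)/((q:ℝ)-1)) ≤ ε := by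
          rw [hεdef]
          rw [mul_div_assoc']
          gcongr
          nlinarith
        push_cast
        linarith
      refine h3.trans ?_
      rw [hXdef]
      gcongr
    have hY : 1 - ε ≤ Y := by
      rw [hYdef]
      have hstep : (k:ℝ) * ((k:ℝ)/((k:ℝ)+1))^(q-1) ≤ ε := by
        have hinv : ((k:ℝ)/((k:ℝ)+1))^(q-1) ≤ (k:ℝ)/((q:ℝ)-1) := by
          have h1 : ((q:ℝ)-1)/(k:ℝ) ≤ (((k:ℝ)+1)/(k:ℝ))^(q-1) := by
            have h0 : (0:ℝ) ≤ 1/(k:ℝ) := by positivity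
            have ha : (-2:ℝ) ≤ (1:ℝ)/(k:ℝ) := by linarith
            have hbern := one_add_mul_le_pow ha (q-1)
            have heq : (1 + (1:ℝ)/(k:ℝ)) = ((k:ℝ)+1)/(k:ℝ) := by field_simp
            rw [heq] at hbern
            have hcast2 : ((q - 1 : ℕ):ℝ) = (q:ℝ) - 1 := by
              push_cast [le_trans one_le_two hq2]; ring
            rw [hcast2] at hbern
            refine le_trans ?_ hbern
            have he := div_eq_mul_one_div ((q:ℝ)-1) (k:ℝ)
            linarith [he.le, he.ge]
          have h2 : (0:ℝ) < ((q:ℝ)-1)/(k:ℝ) := by positivity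
          have h3 := one_div_le_one_div_of_le h2 h1
          rw [one_div_div] at h3
          calc ((k:ℝ)/((k:ℝ)+1))^(q-1) = 1/((((k:ℝ)+1)/(k:ℝ))^(q-1)) := by
                rw [one_div, ← inv_pow, inv_div]
            _ ≤ (k:ℝ)/((q:ℝ)-1) := h3
        calc (k:ℝ) * ((k:ℝ)/((k:ℝ)+1))^(q-1) ≤ (k:ℝ) * ((k:ℝ)/((q:ℝ)-1)) :=
              mul_le_mul_of_nonneg_left hinv hkpos.le
          _ = ε := by rw [hεdef]; field_simp
      linarith
    have hε1 : 0 ≤ 1 - ε := by linarith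
    have hXY : (1-ε)^2 ≤ X * Y := by
      rw [sq]
      exact mul_le_mul hX hY hε1 (hε1.trans hX)
    refine hXY.trans ?_
    have hXYeq : X * Y = (((q-1).choose k : ℝ) * (k.factorial:ℝ) * ((k:ℝ)+1)^(q-1)
        - ((q-1).choose k : ℝ) * (k.factorial:ℝ) * ((k:ℝ) * (k:ℝ)^(q-1)))
        / (((q:ℝ)-1)^k * ((k:ℝ)+1)^(q-1)) := by
      rw [hXdef, hYdef, div_pow]
      field_simp
    rw [hXYeq]
    gcongr ?_ / _
    have hlbR : (((q-1).choose k : ℕ):ℝ) * ((k:ℝ)+1)^(q-1)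
          ≤ (N:ℝ) + (((q-1).choose k : ℕ):ℝ) * ((k:ℝ) * (k:ℝ)^(q-1)) := by
      exact_mod_cast hlb
    nlinarith [mul_le_mul_of_nonneg_right hlbR hfacpos.le]
  · -- upper bound
    rw [div_le_one hDpos]
    have hubR : (N:ℝ) ≤ (((q-1).choose k : ℕ):ℝ) * ((k:ℝ)+1)^(q-1) := by
      exact_mod_cast hub
    have hdR : (((q-1).choose k : ℕ):ℝ) * (k.factorial:ℝ) ≤ ((q:ℝ)-1)^k := by
      have h2 : (((q-1).choose k * k.factorial : ℕ):ℝ) ≤ (((q-1)^k : ℕ):ℝ) := by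
        exact_mod_cast hdesc_ub
      have hcast2 : ((q - 1 : ℕ):ℝ) = (q:ℝ) - 1 := by
        push_cast [le_trans one_le_two hq2]; ring
      push_cast at h2
      rw [hcast2] at h2
      exact h2
    nlinarith [mul_le_mul_of_nonneg_right hubR hfacpos.le,
      mul_le_mul_of_nonneg_right hdR (pow_nonneg (by positivity : (0:ℝ) ≤ (k:ℝ)+1) (q-1))]


/-- Asymptotics for small value sets of random polynomials: let `q_m → ∞` be a sequence of
prime powers (cardinalities of finite fields `F_m`) and `k_m ≥ 1` with `k_m²/q_m → 0`. For a
uniformly random function `g : 𝔽_{q_m} → 𝔽_{q_m}` with `g(0) = 0`, the probability that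
`|V_g| = k_m + 1` is asymptotic to `(1/k_m!) (q_m-1)^{k_m} ((k_m+1)/q_m)^{q_m-1}`. -/
theorem random_polynomial_small_value_set_asymptotic
    (F : ℕ → Type) [∀ m, Field (F m)] [∀ m, Fintype (F m)]
    (q : ℕ → ℕ) (hq : ∀ m, q m = Fintype.card (F m))
    (hqtop : Filter.Tendsto q Filter.atTop Filter.atTop)
    (k : ℕ → ℕ) (hk : ∀ m, 0 < k m)
    (hk2 : Filter.Tendsto (fun m => (k m : ℝ) ^ 2 / (q m : ℝ)) Filter.atTop (nhds 0)) :
    Filter.Tendsto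
      (fun m =>
        ((Nat.card {g : F m → F m // g 0 = 0 ∧ (Set.range g).ncard = k m + 1} : ℝ) /
            (q m : ℝ) ^ (q m - 1)) /
          ((1 / ((k m).factorial : ℝ)) * ((q m : ℝ) - 1) ^ (k m) *
            (((k m : ℝ) + 1) / (q m : ℝ)) ^ (q m - 1)))
      Filter.atTop (nhds 1) := by
  have hq2 : ∀ᶠ m in Filter.atTop, 2 ≤ q m := hqtop.eventually_ge_atTop 2
  -- ε → 0
  have hεt : Filter.Tendsto (fun m => (k m:ℝ)^2/((q m:ℝ)-1)) Filter.atTop (nhds 0) := by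
    have hg : Filter.Tendsto (fun m => 2 * ((k m:ℝ)^2/(q m:ℝ))) Filter.atTop (nhds 0) := by
      have := hk2.const_mul (2:ℝ)
      rwa [mul_zero] at this
    refine squeeze_zero' ?_ ?_ hg
    · filter_upwards [hq2] with m h2
      have : (1:ℝ) ≤ (q m:ℝ) - 1 := by
        have : (2:ℝ) ≤ (q m:ℝ) := by exact_mod_cast h2
        linarith
      positivity
    · filter_upwards [hq2] with m h2
      have hq2R : (2:ℝ) ≤ (q m:ℝ) := by exact_mod_cast h2
      have h1 : (0:ℝ) < (q m:ℝ) - 1 := by linarith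
      have h0 : (0:ℝ) < (q m:ℝ) := by linarith
      rw [show 2*((k m:ℝ)^2/(q m:ℝ)) = (2*(k m:ℝ)^2)/(q m:ℝ) by ring,
        div_le_div_iff₀ h1 h0]
      nlinarith [sq_nonneg (k m:ℝ)]
  have hεlt : ∀ᶠ m in Filter.atTop, (k m:ℝ)^2/((q m:ℝ)-1) < 1/2 :=
    hεt.eventually (gt_mem_nhds (by norm_num : (0:ℝ) < 1/2))
  -- eventual bounds
  have hbounds : ∀ᶠ m in Filter.atTop,
      (1 - (k m:ℝ)^2/((q m:ℝ)-1))^2 ≤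
        ((Nat.card {g : F m → F m // g 0 = 0 ∧ (Set.range g).ncard = k m + 1} : ℝ) /
            (q m : ℝ) ^ (q m - 1)) /
          ((1 / ((k m).factorial : ℝ)) * ((q m : ℝ) - 1) ^ (k m) *
            (((k m : ℝ) + 1) / (q m : ℝ)) ^ (q m - 1)) ∧
        ((Nat.card {g : F m → F m // g 0 = 0 ∧ (Set.range g).ncard = k m + 1} : ℝ) /
            (q m : ℝ) ^ (q m - 1)) /
          ((1 / ((k m).factorial : ℝ)) * ((q m : ℝ) - 1) ^ (k m) *
            (((k m : ℝ) + 1) / (q m : ℝ)) ^ (q m - 1)) ≤ 1 := by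
    filter_upwards [hq2, hεlt] with m h2 hε
    have hcb := count_bounds (F m) (k m)
    rw [← hq m] at hcb
    exact ratio_bounds (q m) (k m) _ (hk m) h2 hcb.1 hcb.2 hε
  have hL : Filter.Tendsto (fun m => (1 - (k m:ℝ)^2/((q m:ℝ)-1))^2)
      Filter.atTop (nhds 1) := by
    have := (Filter.Tendsto.sub (tendsto_const_nhds (x := (1:ℝ))) hεt).pow 2
    norm_num at this
    exact this
  exact tendsto_of_tendsto_of_tendsto_of_le_of_le' hL tendsto_const_nhds
    (hbounds.mono fun m h => h.1) (hbounds.mono fun m h => h.2)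
end

section
/- Let q be a prime power, γ a fixed generator of 𝔽_q^*, a, b ∈ 𝔽_q with a ≠ 0, r a positive integer, s a positive divisor of q−1, ℓ = (q−1)/s, t = gcd(r, s), and f ∈ 𝔽_q[x]. Let g(x) = a x^r f(x^s) + b and let c be the cardinality of the set { (γ^{ir} f(γ^{si}))^{s/t} : i = 0, 1, …, ℓ−1 } ⊆ 𝔽_q. Then |V_g| = c·(s/t) + 1 or |V_g| = (c−1)·(s/t) + 1. -/
/-- (Proposition 2.3 of Mullen–Wan–Wang.) Let `g(x) = a x^r f(x^s) + b` (`a ≠ 0`) over `𝔽_q`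
with `s ∣ q-1`, `ℓ = (q-1)/s`, `t = gcd(r,s)`, and let
`c = |{(γ^{ir} f(γ^{si}))^{s/t} : i = 0, …, ℓ-1}|` for a primitive element `γ`. Then
`|V_g| = c·(s/t) + 1` or `|V_g| = (c-1)·(s/t) + 1`. -/
theorem value_set_cyclotomic_proposition
    (F : Type) [Field F] [Fintype F] [DecidableEq F] (q : ℕ) (hq : q = Fintype.card F)
    (γ : Fˣ) (hγ : ∀ x : Fˣ, x ∈ Subgroup.zpowers γ)
    (a b : F) (ha : a ≠ 0) (r s l t : ℕ) (hr : 0 < r) (hs : 0 < s) (hsd : s ∣ q - 1)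
    (hl : l = (q - 1) / s) (ht : t = Nat.gcd r s)
    (f : Polynomial F) (g : F → F) (hg : ∀ x, g x = a * x ^ r * Polynomial.eval (x ^ s) f + b)
    (c : ℕ)
    (hc : c = (Finset.image
        (fun i : Fin l => ((γ : F) ^ ((i : ℕ) * r) * Polynomial.eval ((γ : F) ^ (s * (i : ℕ))) f)
          ^ (s / t)) Finset.univ).card) :
    (Finset.image g Finset.univ).card = c * (s / t) + 1 ∨
      (Finset.image g Finset.univ).card = (c - 1) * (s / t) + 1 := by
  classical
  set m := s / t with hmdef
  set D := Finset.image
        (fun i : Fin l => ((γ : F) ^ ((i : ℕ) * r) * Polynomial.eval ((γ : F) ^ (s * (i : ℕ))) f)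
          ^ m) Finset.univ with hDdef
  have ht_pos : 0 < t := ht ▸ Nat.gcd_pos_of_pos_right r hs
  have hts : t ∣ s := ht ▸ Nat.gcd_dvd_right r s
  have htr : t ∣ r := ht ▸ Nat.gcd_dvd_left r s
  have htm : t * m = s := Nat.mul_div_cancel' hts
  have hm_pos : 0 < m := Nat.div_pos (Nat.le_of_dvd hs hts) ht_pos
  have hNpos : 0 < q - 1 := by
    have h1 : 1 < Fintype.card F := Fintype.one_lt_card
    omega
  have hls : l * s = q - 1 := by rw [hl]; exact Nat.div_mul_cancel hsd
  have hl_pos : 0 < l := by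
    rcases Nat.eq_zero_or_pos l with h | h
    · rw [h, zero_mul] at hls; omega
    · exact h
  have hN : l * t * m = q - 1 := by rw [mul_assoc, htm]; exact hls
  have hNZ : ((q - 1 : ℕ) : ℤ) = (l : ℤ) * t * m := by exact_mod_cast hN.symm
  have hlsZ : (l : ℤ) * s = ((q - 1 : ℕ) : ℤ) := by exact_mod_cast hls
  have horder : orderOf γ = q - 1 := by
    rw [orderOf_eq_card_of_forall_mem_zpowers hγ, Nat.card_eq_fintype_card,
      Fintype.card_units, hq]
  have hγ0 : (γ : F) ≠ 0 := Units.ne_zero γ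
  have hval : ∀ e : ℤ, ((γ ^ e : Fˣ) : F) = (γ : F) ^ e := fun e => Units.val_zpow_eq_zpow_val γ e
  have hone : ∀ e : ℤ, (γ : F) ^ e = 1 ↔ ((q - 1 : ℕ) : ℤ) ∣ e := by
    intro e
    rw [← hval]
    constructor
    · intro h
      have h' : (γ ^ e : Fˣ) = 1 := Units.ext (by rw [Units.val_one]; exact h)
      rw [← horder]
      exact orderOf_dvd_iff_zpow_eq_one.mpr h'
    · intro hd
      have h' : (γ ^ e : Fˣ) = 1 := orderOf_dvd_iff_zpow_eq_one.mp (horder ▸ hd)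
      rw [h', Units.val_one]
  have hcong : ∀ e1 e2 : ℤ, ((q - 1 : ℕ) : ℤ) ∣ (e1 - e2) → (γ : F) ^ e1 = (γ : F) ^ e2 := by
    intro e1 e2 hd
    have h1 : (γ : F) ^ (e1 - e2) = 1 := (hone _).mpr hd
    calc (γ : F) ^ e1 = (γ : F) ^ (e2 + (e1 - e2)) := by congr 1; ring
      _ = (γ : F) ^ e2 * (γ : F) ^ (e1 - e2) := zpow_add₀ hγ0 _ _
      _ = (γ : F) ^ e2 := by rw [h1, mul_one]
  have hsurj : ∀ x : F, x ≠ 0 → ∃ e : ℤ, x = (γ : F) ^ e := by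
    intro x hx
    obtain ⟨e, he⟩ := Subgroup.mem_zpowers_iff.mp (hγ (Units.mk0 x hx))
    exact ⟨e, by rw [← hval, he]; rfl⟩
  have hpow : ∀ (e : ℤ) (n : ℕ), ((γ : F) ^ e) ^ n = (γ : F) ^ (e * n) := by
    intro e n
    rw [← zpow_natCast ((γ : F) ^ e) n, ← zpow_mul]
  set P : F → F := fun x => x ^ r * Polynomial.eval (x ^ s) f with hP
  set S : Finset F := (Finset.univ.filter (fun x : F => x ≠ 0)).image P with hS
  set ψ : F → F := fun w => w ^ m with hψ
  set He : ℤ → F := fun e => (γ : F) ^ (e * (r : ℤ)) * Polynomial.eval ((γ : F) ^ (e * (s : ℤ))) f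
    with hHe
  have hPe : ∀ e : ℤ, P ((γ : F) ^ e) = He e := by
    intro e
    simp only [hP, hHe]
    rw [hpow, hpow]
  have hC1 : ∀ e k : ℤ, He (e + l * k) = (γ : F) ^ ((l : ℤ) * k * r) * He e := by
    intro e k
    have h1 : (γ : F) ^ ((e + l * k) * (s : ℤ)) = (γ : F) ^ (e * (s : ℤ)) := by
      apply hcong
      exact ⟨k, by rw [← hlsZ]; ring⟩
    have h2 : (γ : F) ^ ((e + l * k) * (r : ℤ))
        = (γ : F) ^ ((l : ℤ) * k * r) * (γ : F) ^ (e * (r : ℤ)) := by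
      rw [← zpow_add₀ hγ0]; congr 1; ring
    simp only [hHe]
    rw [h1, h2, mul_assoc]
  have hC2 : ∀ k : ℤ, ((γ : F) ^ ((l : ℤ) * k * r)) ^ m = 1 := by
    intro k
    rw [hpow, hone]
    obtain ⟨r', hr'⟩ := htr
    exact ⟨k * r', by rw [hNZ, hr']; push_cast; ring⟩
  have hψHe : ∀ e k : ℤ, ψ (He (e + l * k)) = ψ (He e) := by
    intro e k
    simp only [hψ]
    rw [hC1, mul_pow, hC2, one_mul]
  have htZ : (t : ℤ) = r * Nat.gcdA r s + s * Nat.gcdB r s := by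
    rw [ht]; exact_mod_cast Nat.gcd_eq_gcd_ab r s
  have hC4 : ∀ k : ℤ, ∃ n : ℤ, (γ : F) ^ ((l : ℤ) * t * k) = (γ : F) ^ ((l : ℤ) * n * r) := by
    intro k
    refine ⟨Nat.gcdA r s * k, hcong _ _ ⟨k * Nat.gcdB r s, ?_⟩⟩
    rw [← hlsZ]
    linear_combination (l : ℤ) * k * htZ
  have hni : ∀ i : ℕ, He (i : ℤ)
      = (γ : F) ^ (i * r) * Polynomial.eval ((γ : F) ^ (s * i)) f := by
    intro i
    simp only [hHe]
    rw [show ((i : ℤ) * (r : ℤ)) = ((i * r : ℕ) : ℤ) by push_cast; ring,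
      show ((i : ℤ) * (s : ℤ)) = ((s * i : ℕ) : ℤ) by push_cast; ring,
      zpow_natCast, zpow_natCast]
  have hD : D = Finset.image (fun i : Fin l => ψ (He ((i : ℕ) : ℤ))) Finset.univ := by
    rw [hDdef]
    apply Finset.image_congr
    intro i _
    simp only [hψ]
    rw [hni]
  -- S.image ψ = D
  have hSD : S.image ψ = D := by
    rw [hD]
    apply Finset.Subset.antisymm
    · intro v hv
      rw [Finset.mem_image] at hv
      obtain ⟨w, hw, rfl⟩ := hv
      rw [hS, Finset.mem_image] at hw
      obtain ⟨x, hx, rfl⟩ := hw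
      rw [Finset.mem_filter] at hx
      obtain ⟨e, rfl⟩ := hsurj x hx.2
      rw [Finset.mem_image]
      have hlZ : (0 : ℤ) < (l : ℤ) := by exact_mod_cast hl_pos
      have hnn : 0 ≤ e % (l : ℤ) := Int.emod_nonneg e hlZ.ne'
      have hlt : e % (l : ℤ) < (l : ℤ) := Int.emod_lt_of_pos e hlZ
      have hi_lt : (e % (l : ℤ)).toNat < l := by omega
      refine ⟨⟨(e % (l : ℤ)).toNat, hi_lt⟩, Finset.mem_univ _, ?_⟩
      have h1 : (((e % (l : ℤ)).toNat : ℕ) : ℤ) = e % (l : ℤ) := Int.toNat_of_nonneg hnn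
      have h2 : ψ (He (e % (l : ℤ))) = ψ (He e) := by
        have h3 := hψHe (e % (l : ℤ)) (e / (l : ℤ))
        rw [show e % (l : ℤ) + (l : ℤ) * (e / (l : ℤ)) = e by
          rw [add_comm]; exact Int.mul_ediv_add_emod e l] at h3
        exact h3.symm
      simp only [Fin.val_mk]
      rw [h1, h2, hPe]
    · intro v hv
      rw [Finset.mem_image] at hv
      obtain ⟨i, _, rfl⟩ := hv
      rw [Finset.mem_image]
      refine ⟨P ((γ : F) ^ ((i : ℕ) : ℤ)), ?_, by rw [hPe]⟩
      rw [hS, Finset.mem_image]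
      exact ⟨(γ : F) ^ ((i : ℕ) : ℤ), Finset.mem_filter.mpr
        ⟨Finset.mem_univ _, zpow_ne_zero _ hγ0⟩, rfl⟩
  set T := S.filter (fun w => w ≠ 0) with hT
  set U := T.image ψ with hU
  -- fibers have size m
  have hfibcard : ∀ w0 ∈ T, (T.filter (fun w => ψ w = ψ w0)).card = m := by
    intro w0 hw0
    rw [hT, Finset.mem_filter] at hw0
    obtain ⟨hw0S, hw0ne⟩ := hw0
    rw [hS, Finset.mem_image] at hw0S
    obtain ⟨x0, hx0, hx0w⟩ := hw0S
    rw [Finset.mem_filter] at hx0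
    obtain ⟨e0, he0⟩ := hsurj x0 hx0.2
    obtain ⟨d0, hd0⟩ := hsurj w0 hw0ne
    have hmZ : ((m : ℕ) : ℤ) ≠ 0 := by exact_mod_cast hm_pos.ne'
    have hset : T.filter (fun w => ψ w = ψ w0)
        = Finset.image (fun k : Fin m => w0 * (γ : F) ^ ((l : ℤ) * t * (k : ℕ))) Finset.univ := by
      ext w
      simp only [Finset.mem_filter, Finset.mem_image, Finset.mem_univ, true_and, hT]
      constructor
      · rintro ⟨⟨hwS, hwne⟩, hwψ⟩
        obtain ⟨d, hd⟩ := hsurj w hwne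
        have h1 : (γ : F) ^ (d * (m : ℤ)) = (γ : F) ^ (d0 * (m : ℤ)) := by
          have h0 := hwψ
          simp only [hψ, hd, hd0] at h0
          rw [hpow, hpow] at h0
          exact h0
        have h2 : (γ : F) ^ ((d - d0) * (m : ℤ)) = 1 := by
          rw [sub_mul, zpow_sub₀ hγ0, h1, div_self (zpow_ne_zero _ hγ0)]
        obtain ⟨cd, hcd⟩ := (hone _).mp h2
        have h3 : d - d0 = (l : ℤ) * t * cd := by
          apply mul_right_cancel₀ hmZ
          rw [hcd, hNZ]; ring
        have hk_nn : 0 ≤ cd % (m : ℤ) := Int.emod_nonneg cd hmZ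
        have hk_lt : cd % (m : ℤ) < (m : ℤ) := Int.emod_lt_of_pos cd (by positivity)
        have hk_lt' : (cd % (m : ℤ)).toNat < m := by omega
        refine ⟨⟨(cd % (m : ℤ)).toNat, hk_lt'⟩, ?_⟩
        simp only [Fin.val_mk]
        rw [Int.toNat_of_nonneg hk_nn]
        have h4 : (γ : F) ^ ((l : ℤ) * t * cd) = (γ : F) ^ ((l : ℤ) * t * (cd % (m : ℤ))) := by
          apply hcong
          refine ⟨cd / (m : ℤ), ?_⟩
          rw [hNZ]
          linear_combination (-((l : ℤ) * t)) * (Int.mul_ediv_add_emod cd (m : ℤ))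
        rw [hd, hd0, ← h4, show d = d0 + ((l : ℤ) * t * cd) by linear_combination h3, zpow_add₀ hγ0]
      · rintro ⟨k, rfl⟩
        have hne : w0 * (γ : F) ^ ((l : ℤ) * t * (k : ℕ)) ≠ 0 :=
          mul_ne_zero hw0ne (zpow_ne_zero _ hγ0)
        have hmem : w0 * (γ : F) ^ ((l : ℤ) * t * (k : ℕ)) ∈ S := by
          obtain ⟨n, hn⟩ := hC4 ((k : ℕ) : ℤ)
          rw [hS, Finset.mem_image]
          refine ⟨(γ : F) ^ (e0 + (l : ℤ) * n), Finset.mem_filter.mpr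
            ⟨Finset.mem_univ _, zpow_ne_zero _ hγ0⟩, ?_⟩
          rw [hPe, hC1, ← hx0w, he0, hPe, hn, mul_comm]
        have hψeq : ψ (w0 * (γ : F) ^ ((l : ℤ) * t * (k : ℕ))) = ψ w0 := by
          simp only [hψ]
          rw [mul_pow, hpow, (hone _).mpr ⟨(k : ℕ), by rw [hNZ]; ring⟩, mul_one]
        exact ⟨⟨hmem, hne⟩, hψeq⟩
    rw [hset]
    rw [Finset.card_image_of_injective _ ?_, Finset.card_univ, Fintype.card_fin]
    intro k1 k2 hk
    have h5 : (γ : F) ^ ((l : ℤ) * t * (k1 : ℕ)) = (γ : F) ^ ((l : ℤ) * t * (k2 : ℕ)) :=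
      mul_left_cancel₀ hw0ne hk
    have h6 : (γ : F) ^ ((l : ℤ) * t * (k1 : ℕ) - (l : ℤ) * t * (k2 : ℕ)) = 1 := by
      rw [zpow_sub₀ hγ0, h5, div_self (zpow_ne_zero _ hγ0)]
    obtain ⟨cc, hcc⟩ := (hone _).mp h6
    have hlt0 : ((l : ℤ) * t) ≠ 0 := by positivity
    have h7 : ((k1 : ℕ) : ℤ) - ((k2 : ℕ) : ℤ) = (m : ℤ) * cc := by
      apply mul_left_cancel₀ hlt0
      rw [mul_sub, hcc, hNZ]; ring
    have h8 : ((k1 : ℕ) : ℤ) - ((k2 : ℕ) : ℤ) = 0 := by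
      apply Int.eq_zero_of_abs_lt_dvd ⟨cc, h7⟩
      have hb1 : ((k1 : ℕ) : ℤ) < (m : ℤ) := by exact_mod_cast k1.isLt
      have hb2 : ((k2 : ℕ) : ℤ) < (m : ℤ) := by exact_mod_cast k2.isLt
      have hb3 : 0 ≤ ((k1 : ℕ) : ℤ) := by positivity
      have hb4 : 0 ≤ ((k2 : ℕ) : ℤ) := by positivity
      rw [abs_sub_lt_iff]
      omega
    have : (k1 : ℕ) = (k2 : ℕ) := by omega
    exact Fin.ext this
  -- cardinality of T
  have hTcard : T.card = U.card * m := by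
    have h1 : T.card = ∑ v ∈ U, (T.filter fun w => ψ w = v).card :=
      Finset.card_eq_sum_card_fiberwise (fun x hx => Finset.mem_image_of_mem ψ hx)
    rw [h1]
    rw [Finset.sum_congr rfl (fun v hv => ?_), Finset.sum_const, smul_eq_mul]
    rw [hU, Finset.mem_image] at hv
    obtain ⟨w0, hw0, rfl⟩ := hv
    exact hfibcard w0 hw0
  -- U = D minus zero
  have hUD : U = D.filter (fun v => v ≠ 0) := by
    rw [hU, hT, ← hSD]
    ext v
    simp only [Finset.mem_image, Finset.mem_filter]
    constructor
    · rintro ⟨w, ⟨hwS, hwne⟩, rfl⟩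
      exact ⟨⟨w, hwS, rfl⟩, pow_ne_zero _ hwne⟩
    · rintro ⟨⟨w, hwS, rfl⟩, hvne⟩
      refine ⟨w, ⟨hwS, ?_⟩, rfl⟩
      intro h0
      exact hvne (by simp only [hψ, h0]; exact zero_pow hm_pos.ne')
  -- image of g
  have hgh : ∀ x : F, g x = a * P x + b := by
    intro x
    rw [hg]
    simp only [hP]
    ring
  have hg0 : g 0 = b := by
    rw [hgh]
    simp only [hP]
    rw [zero_pow hr.ne', zero_mul, mul_zero, zero_add]
  have hgset : Finset.image g Finset.univ = insert b (T.image (fun w => a * w + b)) := by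
    ext y
    simp only [Finset.mem_image, Finset.mem_insert, Finset.mem_univ, true_and]
    constructor
    · rintro ⟨x, rfl⟩
      by_cases hx : P x = 0
      · left; rw [hgh, hx, mul_zero, zero_add]
      · right
        have hx0 : x ≠ 0 := by
          intro h0
          apply hx
          rw [h0]
          simp only [hP]
          rw [zero_pow hr.ne', zero_mul]
        refine ⟨P x, ?_, (hgh x).symm⟩
        rw [hT, Finset.mem_filter]
        refine ⟨?_, hx⟩
        rw [hS, Finset.mem_image]
        exact ⟨x, Finset.mem_filter.mpr ⟨Finset.mem_univ _, hx0⟩, rfl⟩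
    · rintro (rfl | ⟨w, hw, rfl⟩)
      · exact ⟨0, hg0⟩
      · rw [hT, Finset.mem_filter] at hw
        obtain ⟨hwS, _⟩ := hw
        rw [hS, Finset.mem_image] at hwS
        obtain ⟨x, _, rfl⟩ := hwS
        exact ⟨x, hgh x⟩
  have hbnot : b ∉ T.image (fun w => a * w + b) := by
    rw [Finset.mem_image]
    rintro ⟨w, hw, hwb⟩
    rw [hT, Finset.mem_filter] at hw
    apply hw.2
    have h' : a * w = 0 := by rwa [add_eq_right] at hwb
    exact (mul_eq_zero.mp h').resolve_left ha
  have hinj : Function.Injective (fun w : F => a * w + b) := by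
    intro w1 w2 hw
    simp only at hw
    have h' : a * w1 = a * w2 := add_right_cancel hw
    exact mul_left_cancel₀ ha h'
  have hcard : (Finset.image g Finset.univ).card = (D.filter (fun v => v ≠ 0)).card * m + 1 := by
    rw [hgset, Finset.card_insert_of_notMem hbnot, Finset.card_image_of_injective _ hinj,
      hTcard, hUD]
  by_cases h0 : (0 : F) ∈ D
  · right
    have hfe : (D.filter (fun v => v ≠ 0)).card = c - 1 := by
      rw [Finset.filter_ne', Finset.card_erase_of_mem h0, hc]
    rw [hcard, hfe]
  · left
    have hfe : D.filter (fun v => v ≠ 0) = D := by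
      apply Finset.filter_true_of_mem
      intro x hx h0'
      exact h0 (h0' ▸ hx)
    rw [hcard, hfe, ← hc]
end

section
/- Let n, ℓ be positive integers and 0 ≤ m_1, …, m_ℓ ≤ n. Let A_1, …, A_ℓ be independent random subsets of {1,…,n} with A_i uniform over all m_i-element subsets, and let Y_n = n − |A_1 ∪ ⋯ ∪ A_ℓ|. Then for every integer k with 0 ≤ k ≤ n, ℙ(Y_n = k) = ∑_{h=k}^{n} (−1)^{h−k} C(h, k) C(n, h) ∏_{j=1}^{ℓ} (n − m_j)_h / (n)_h. -/
/-- Cross-multiplied form of `C(n-h,m)/C(n,m) = (n-m)_h/(n)_h`. -/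
lemma ratio_nat (n h m : ℕ) (hh : h ≤ n) (hm : m ≤ n) :
    (n - h).choose m * n.descFactorial h = n.choose m * (n - m).descFactorial h := by
  by_cases hhm : h + m ≤ n
  · have key1 : Nat.factorial (n - h) * n.descFactorial h = Nat.factorial n :=
      Nat.factorial_mul_descFactorial hh
    have key2 : Nat.factorial (n - m - h) * (n - m).descFactorial h = Nat.factorial (n - m) :=
      Nat.factorial_mul_descFactorial (by omega)
    have c1 : (n - h).choose m * Nat.factorial m * Nat.factorial (n - h - m)
        = Nat.factorial (n - h) := Nat.choose_mul_factorial_mul_factorial (by omega)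
    have c2 : n.choose m * Nat.factorial m * Nat.factorial (n - m) = Nat.factorial n :=
      Nat.choose_mul_factorial_mul_factorial hm
    have hs : n - h - m = n - m - h := by omega
    apply Nat.eq_of_mul_eq_mul_right (show 0 < Nat.factorial m * Nat.factorial (n - h - m) from
      Nat.mul_pos (Nat.factorial_pos _) (Nat.factorial_pos _))
    calc (n - h).choose m * n.descFactorial h * (Nat.factorial m * Nat.factorial (n - h - m))
        = ((n - h).choose m * Nat.factorial m * Nat.factorial (n - h - m)) * n.descFactorial h :=
          by ring
      _ = Nat.factorial (n - h) * n.descFactorial h := by rw [c1]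
      _ = Nat.factorial n := key1
      _ = n.choose m * Nat.factorial m * Nat.factorial (n - m) := c2.symm
      _ = n.choose m * Nat.factorial m
            * (Nat.factorial (n - m - h) * (n - m).descFactorial h) := by rw [key2]
      _ = n.choose m * (n - m).descFactorial h
            * (Nat.factorial m * Nat.factorial (n - h - m)) := by rw [hs]; ring
  · rw [Nat.choose_eq_zero_of_lt (show n - h < m by omega),
      Nat.descFactorial_eq_zero_iff_lt.2 (show n - m < h by omega)]
    simp

/-- Orthogonality/inversion identity for binomial coefficients. -/
lemma alt_id (n k y : ℕ) (hk : k ≤ n) (hy : y ≤ n) :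
    ∑ h ∈ Finset.Icc k n, (-1 : ℝ) ^ (h - k) * (h.choose k : ℝ) * (y.choose h : ℝ)
      = if y = k then 1 else 0 := by
  rcases lt_or_ge y k with hyk | hyk
  · rw [if_neg (by omega)]
    apply Finset.sum_eq_zero
    intro h hh
    rw [Finset.mem_Icc] at hh
    rw [Nat.choose_eq_zero_of_lt (show y < h by omega), Nat.cast_zero, mul_zero]
  · have hsub : Finset.Icc k y ⊆ Finset.Icc k n := Finset.Icc_subset_Icc_right hy
    rw [← Finset.sum_subset hsub (by
      intro h hh hnh
      rw [Finset.mem_Icc] at hh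
      rw [Finset.mem_Icc] at hnh
      rw [Nat.choose_eq_zero_of_lt (show y < h by omega), Nat.cast_zero, mul_zero])]
    have reindex :
        ∑ h ∈ Finset.Icc k y, (-1 : ℝ) ^ (h - k) * (h.choose k : ℝ) * (y.choose h : ℝ)
          = ∑ i ∈ Finset.range (y - k + 1),
              (-1 : ℝ) ^ i * ((k + i).choose k : ℝ) * (y.choose (k + i) : ℝ) := by
      apply Finset.sum_nbij' (fun h => h - k) (fun i => k + i)
      · intro h hh; rw [Finset.mem_Icc] at hh; rw [Finset.mem_range]; omega
      · intro i hi; rw [Finset.mem_range] at hi; rw [Finset.mem_Icc]; omega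
      · intro h hh; rw [Finset.mem_Icc] at hh; omega
      · intro i _; omega
      · intro h hh; rw [Finset.mem_Icc] at hh
        have h1 : k + (h - k) = h := by omega
        rw [h1]
    rw [reindex]
    have term : ∀ i ∈ Finset.range (y - k + 1),
        (-1 : ℝ) ^ i * ((k + i).choose k : ℝ) * (y.choose (k + i) : ℝ)
          = (y.choose k : ℝ) * ((-1 : ℝ) ^ i * ((y - k).choose i : ℝ)) := by
      intro i hi
      rw [Finset.mem_range] at hi
      have hc : y.choose (k + i) * (k + i).choose k = y.choose k * (y - k).choose i := by
        have := Nat.choose_mul (n := y) (show k ≤ k + i by omega)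
        simpa using this
      have hcr : (y.choose (k + i) : ℝ) * ((k + i).choose k : ℝ)
          = (y.choose k : ℝ) * ((y - k).choose i : ℝ) := by exact_mod_cast hc
      linear_combination ((-1 : ℝ) ^ i) * hcr
    rw [Finset.sum_congr rfl term, ← Finset.mul_sum]
    rcases eq_or_ne y k with rfl | hne
    · simp
    · rw [if_neg hne]
      have hd : y - k ≠ 0 := by omega
      have h0 : ∑ i ∈ Finset.range (y - k + 1), (-1 : ℤ) ^ i * ((y - k).choose i : ℤ) = 0 :=
        Int.alternating_sum_range_choose_of_ne hd
      have h1 : ∑ i ∈ Finset.range (y - k + 1), (-1 : ℝ) ^ i * ((y - k).choose i : ℝ) = 0 := by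
        exact_mod_cast h0
      rw [h1, mul_zero]

/-- Counting identity: summing `C(n - |⋃ A_j|, h)` over all configurations. -/
lemma count_lemma (n l : ℕ) (m : Fin l → ℕ) (h : ℕ) (hh : h ≤ n) :
    ∑ A : (∀ j : Fin l, {B : Finset (Fin n) // B.card = m j}),
        (n - (Finset.univ.biUnion (fun j => (A j).val)).card).choose h
      = n.choose h * ∏ j, (n - h).choose (m j) := by
  have step1 : ∀ A : (∀ j : Fin l, {B : Finset (Fin n) // B.card = m j}),
      (n - (Finset.univ.biUnion (fun j => (A j).val)).card).choose h
        = ∑ S ∈ Finset.powersetCard h (Finset.univ : Finset (Fin n)),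
            if (∀ j, (A j).val ⊆ Sᶜ) then 1 else 0 := by
    intro A
    set U := Finset.univ.biUnion (fun j => (A j).val) with hU
    have hc : n - U.card = Uᶜ.card := by
      rw [Finset.card_compl, Fintype.card_fin]
    rw [hc, ← Finset.card_powersetCard]
    have hps : Finset.powersetCard h Uᶜ
        = (Finset.powersetCard h (Finset.univ : Finset (Fin n))).filter
            (fun S => ∀ j, (A j).val ⊆ Sᶜ) := by
      ext S
      simp only [Finset.mem_powersetCard, Finset.mem_filter, Finset.subset_univ, true_and]
      constructor
      · rintro ⟨hsub, hcard⟩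
        refine ⟨hcard, fun j => ?_⟩
        have hUS : U ⊆ Sᶜ := Finset.subset_compl_comm.mp hsub
        exact (Finset.subset_biUnion_of_mem (fun j => (A j).val)
          (Finset.mem_univ j)).trans hUS
      · rintro ⟨hcard, hall⟩
        refine ⟨Finset.subset_compl_comm.mpr ?_, hcard⟩
        rw [hU, Finset.biUnion_subset]
        intro j _
        exact hall j
    rw [hps, Finset.card_filter]
  rw [Finset.sum_congr rfl (fun A _ => step1 A), Finset.sum_comm]
  have inner : ∀ S ∈ Finset.powersetCard h (Finset.univ : Finset (Fin n)),
      (∑ A : (∀ j : Fin l, {B : Finset (Fin n) // B.card = m j}),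
          if (∀ j, (A j).val ⊆ Sᶜ) then 1 else 0)
        = ∏ j, (n - h).choose (m j) := by
    intro S hS
    rw [Finset.mem_powersetCard] at hS
    have hScard : S.card = h := hS.2
    rw [← Finset.card_filter]
    rw [← Fintype.card_subtype]
    rw [Fintype.card_congr (Equiv.subtypePiEquivPi
      (p := fun j (B : {B : Finset (Fin n) // B.card = m j}) => (B : Finset (Fin n)) ⊆ Sᶜ))]
    rw [Fintype.card_pi]
    apply Finset.prod_congr rfl
    intro j _
    rw [Fintype.card_congr (Equiv.subtypeSubtypeEquivSubtypeInter
      (fun B : Finset (Fin n) => B.card = m j) (fun B => B ⊆ Sᶜ))]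
    rw [Fintype.card_subtype]
    have hfe : (Finset.univ.filter (fun B : Finset (Fin n) => B.card = m j ∧ B ⊆ Sᶜ))
        = Finset.powersetCard (m j) Sᶜ := by
      ext B
      simp only [Finset.mem_filter, Finset.mem_univ, true_and, Finset.mem_powersetCard]
      tauto
    rw [hfe, Finset.card_powersetCard, Finset.card_compl, Fintype.card_fin, hScard]
  rw [Finset.sum_congr rfl inner, Finset.sum_const, Finset.card_powersetCard,
    Finset.card_univ, Fintype.card_fin, smul_eq_mul]

/-- The exact distribution of the number `Y_n = n - |A_1 ∪ ⋯ ∪ A_ℓ|` of elements missed by the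
union of independent random sets, where `A_i` is uniform over all `m_i`-element subsets of an
`n`-element set: `ℙ(Y_n = k) = ∑_{h=k}^{n} (-1)^{h-k} C(h,k) C(n,h) ∏_{j=1}^{ℓ} (n-m_j)_h/(n)_h`. -/
theorem union_random_sets_missing_distribution (n l : ℕ) (hn : 0 < n) (hl : 0 < l)
    (m : Fin l → ℕ) (hm : ∀ j, m j ≤ n) (k : ℕ) (hk : k ≤ n) :
    (Nat.card {A : (∀ j : Fin l, {B : Finset (Fin n) // B.card = m j}) //
        n - (Finset.univ.biUnion (fun j => (A j).val)).card = k} : ℝ) /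
        (∏ j, (n.choose (m j) : ℝ))
      = ∑ h ∈ Finset.Icc k n,
          (-1 : ℝ) ^ (h - k) * (h.choose k : ℝ) * (n.choose h : ℝ) *
            ∏ j, (((n - m j).descFactorial h : ℕ) : ℝ) / ((n.descFactorial h : ℕ) : ℝ) := by
  have hD : ∀ j, (0 : ℝ) < (n.choose (m j) : ℝ) := fun j => by
    exact_mod_cast Nat.choose_pos (hm j)
  have hDprod : (0 : ℝ) < ∏ j, (n.choose (m j) : ℝ) := Finset.prod_pos fun j _ => hD j
  have ratio : ∀ h ∈ Finset.Icc k n, ∀ j : Fin l,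
      (((n - m j).descFactorial h : ℕ) : ℝ) / ((n.descFactorial h : ℕ) : ℝ)
        = ((n - h).choose (m j) : ℝ) / (n.choose (m j) : ℝ) := by
    intro h hh j
    rw [Finset.mem_Icc] at hh
    have hdesc : ((n.descFactorial h : ℕ) : ℝ) ≠ 0 := by
      have h2 : n.descFactorial h ≠ 0 := by
        rw [Ne, Nat.descFactorial_eq_zero_iff_lt]; omega
      exact_mod_cast h2
    rw [div_eq_div_iff hdesc (ne_of_gt (hD j))]
    have hnat : (n - m j).descFactorial h * n.choose (m j)
        = (n - h).choose (m j) * n.descFactorial h := by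
      rw [Nat.mul_comm]
      exact (ratio_nat n h (m j) hh.2 (hm j)).symm
    exact_mod_cast hnat
  have rhs_eq : ∑ h ∈ Finset.Icc k n,
        (-1 : ℝ) ^ (h - k) * (h.choose k : ℝ) * (n.choose h : ℝ) *
          ∏ j, (((n - m j).descFactorial h : ℕ) : ℝ) / ((n.descFactorial h : ℕ) : ℝ)
      = (∑ h ∈ Finset.Icc k n,
          (-1 : ℝ) ^ (h - k) * (h.choose k : ℝ) *
            ((n.choose h * ∏ j, (n - h).choose (m j) : ℕ) : ℝ)) /
          (∏ j, (n.choose (m j) : ℝ)) := by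
    rw [Finset.sum_div]
    apply Finset.sum_congr rfl
    intro h hh
    rw [Finset.prod_congr rfl (fun j _ => ratio h hh j), Finset.prod_div_distrib]
    push_cast
    field_simp
  rw [rhs_eq]
  rw [div_eq_div_iff (ne_of_gt hDprod) (ne_of_gt hDprod)]
  congr 1
  have card_eq : (Nat.card {A : (∀ j : Fin l, {B : Finset (Fin n) // B.card = m j}) //
      n - (Finset.univ.biUnion (fun j => (A j).val)).card = k} : ℝ)
      = ∑ A : (∀ j : Fin l, {B : Finset (Fin n) // B.card = m j}),
          if n - (Finset.univ.biUnion (fun j => (A j).val)).card = k then (1 : ℝ) else 0 := by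
    rw [Nat.card_eq_fintype_card, Fintype.card_subtype, Finset.card_filter]
    push_cast
    rfl
  have rhs2 : ∑ h ∈ Finset.Icc k n,
        (-1 : ℝ) ^ (h - k) * (h.choose k : ℝ) *
          ((n.choose h * ∏ j, (n - h).choose (m j) : ℕ) : ℝ)
      = ∑ A : (∀ j : Fin l, {B : Finset (Fin n) // B.card = m j}),
          if n - (Finset.univ.biUnion (fun j => (A j).val)).card = k then (1 : ℝ) else 0 := by
    calc ∑ h ∈ Finset.Icc k n,
          (-1 : ℝ) ^ (h - k) * (h.choose k : ℝ) *
            ((n.choose h * ∏ j, (n - h).choose (m j) : ℕ) : ℝ)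
        = ∑ h ∈ Finset.Icc k n, ∑ A : (∀ j : Fin l, {B : Finset (Fin n) // B.card = m j}),
            (-1 : ℝ) ^ (h - k) * (h.choose k : ℝ) *
              (((n - (Finset.univ.biUnion (fun j => (A j).val)).card).choose h : ℕ) : ℝ) := by
          apply Finset.sum_congr rfl
          intro h hh
          rw [Finset.mem_Icc] at hh
          rw [← count_lemma n l m h hh.2]
          push_cast
          rw [Finset.mul_sum]
      _ = ∑ A : (∀ j : Fin l, {B : Finset (Fin n) // B.card = m j}), ∑ h ∈ Finset.Icc k n,
            (-1 : ℝ) ^ (h - k) * (h.choose k : ℝ) *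
              (((n - (Finset.univ.biUnion (fun j => (A j).val)).card).choose h : ℕ) : ℝ) :=
          Finset.sum_comm
      _ = ∑ A : (∀ j : Fin l, {B : Finset (Fin n) // B.card = m j}),
            if n - (Finset.univ.biUnion (fun j => (A j).val)).card = k then (1 : ℝ) else 0 := by
          apply Finset.sum_congr rfl
          intro A _
          exact alt_id n k (n - (Finset.univ.biUnion (fun j => (A j).val)).card) hk
            (Nat.sub_le n _)
  rw [card_eq, rhs2]
end

section
/- Let n, ℓ be positive integers and 0 ≤ m_1, …, m_ℓ ≤ n. Let A_1, …, A_ℓ be independent random subsets of {1,…,n} with A_i uniform over all m_i-element subsets, and let X_n = |A_1 ∪ ⋯ ∪ A_ℓ|. Then for every integer i with 0 ≤ i ≤ n, ℙ(X_n = i) = C(n, i) ∑_{h=0}^{i} (−1)^h C(i, h) ∏_{j=1}^{ℓ} C(i − h, m_j) / C(n, m_j). -/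
open Finset

private lemma neg_one_pow_sub' {a b : ℕ} (h : b ≤ a) :
    ((-1 : ℤ)) ^ (a - b) = (-1) ^ a * (-1) ^ b := by
  obtain ⟨c, rfl⟩ := Nat.exists_eq_add_of_le h
  rw [Nat.add_sub_cancel_left, pow_add]
  have : ((-1 : ℤ)) ^ b * (-1) ^ b = 1 := by
    rw [← pow_add]; exact Even.neg_one_pow ⟨b, rfl⟩
  rw [mul_comm ((-1:ℤ)^b), mul_assoc, this, mul_one]

private lemma alt_sum_powerset {α : Type*} [DecidableEq α] (X : Finset α) :
    ∑ U ∈ X.powerset, (-1 : ℤ) ^ (X.card - U.card) = if X = ∅ then 1 else 0 := by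
  have : ∑ U ∈ X.powerset, (-1 : ℤ) ^ (X.card - U.card)
      = (-1) ^ X.card * ∑ U ∈ X.powerset, (-1 : ℤ) ^ U.card := by
    rw [Finset.mul_sum]
    refine Finset.sum_congr rfl fun U hU => ?_
    exact neg_one_pow_sub' (card_le_card (mem_powerset.1 hU))
  rw [this, Finset.sum_powerset_neg_one_pow_card]
  split_ifs with h
  · subst h; simp
  · simp

private lemma alt_sum_interval {α : Type*} [DecidableEq α] {R S : Finset α} (hRS : R ⊆ S) :
    ∑ T ∈ S.powerset.filter (fun T => R ⊆ T), (-1 : ℤ) ^ (S.card - T.card)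
      = if R = S then 1 else 0 := by
  have key : ∑ T ∈ S.powerset.filter (fun T => R ⊆ T), (-1 : ℤ) ^ (S.card - T.card)
      = ∑ U ∈ (S \ R).powerset, (-1 : ℤ) ^ ((S \ R).card - U.card) := by
    refine Finset.sum_nbij' (fun T => T \ R) (fun U => U ∪ R) ?_ ?_ ?_ ?_ ?_
    · intro T hT
      rw [mem_filter, mem_powerset] at hT
      exact mem_powerset.2 (sdiff_subset_sdiff hT.1 Subset.rfl)
    · intro U hU
      rw [mem_powerset] at hU
      rw [mem_filter, mem_powerset]
      constructor
      · exact union_subset (hU.trans sdiff_subset) hRS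
      · exact subset_union_right
    · intro T hT
      rw [mem_filter, mem_powerset] at hT
      exact sdiff_union_of_subset hT.2
    · intro U hU
      rw [mem_powerset] at hU
      have hd : Disjoint U R := disjoint_of_subset_left hU sdiff_disjoint
      simp [union_sdiff_distrib, sdiff_eq_self_of_disjoint hd]
    · intro T hT
      rw [mem_filter, mem_powerset] at hT
      congr 1
      have hR : R ⊆ T := hT.2
      have hTS : T ⊆ S := hT.1
      rw [card_sdiff_of_subset hRS, card_sdiff_of_subset hR, Nat.sub_sub_sub_cancel_right (card_le_card hR)]
  rw [key, alt_sum_powerset]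
  congr 1
  rw [eq_iff_iff, sdiff_eq_empty_iff_subset]
  exact ⟨fun h => Subset.antisymm hRS h, fun h => h ▸ Subset.rfl⟩

private def cnt (n l : ℕ) (m : Fin l → ℕ) (S : Finset (Fin n)) : ℕ :=
  (Finset.univ.filter (fun A : (∀ j : Fin l, {B : Finset (Fin n) // B.card = m j}) =>
    Finset.univ.biUnion (fun j => (A j).val) = S)).card

private lemma g_card (n l : ℕ) (m : Fin l → ℕ) (S : Finset (Fin n)) :
    (Finset.univ.filter (fun A : (∀ j : Fin l, {B : Finset (Fin n) // B.card = m j}) =>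
      ∀ j, (A j).val ⊆ S)).card = ∏ j, S.card.choose (m j) := by
  rw [← Fintype.card_subtype]
  rw [Fintype.card_congr (Equiv.subtypePiEquivPi
      (p := fun j (B : {B : Finset (Fin n) // B.card = m j}) => B.val ⊆ S))]
  rw [Fintype.card_pi]
  refine Finset.prod_congr rfl fun j _ => ?_
  rw [Fintype.card_congr (Equiv.subtypeSubtypeEquivSubtypeInter
      (fun B : Finset (Fin n) => B.card = m j) (fun B => B ⊆ S))]
  rw [Fintype.card_subtype]
  have : Finset.univ.filter (fun B : Finset (Fin n) => B.card = m j ∧ B ⊆ S)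
      = S.powersetCard (m j) := by
    ext B; simp [Finset.mem_powersetCard, and_comm]
  rw [this, Finset.card_powersetCard]

private lemma sum_cnt (n l : ℕ) (m : Fin l → ℕ) (S : Finset (Fin n)) :
    ∑ T ∈ S.powerset, cnt n l m T = ∏ j, S.card.choose (m j) := by
  rw [← g_card n l m S]
  have hmem : ∀ A ∈ Finset.univ.filter
      (fun A : (∀ j : Fin l, {B : Finset (Fin n) // B.card = m j}) => ∀ j, (A j).val ⊆ S),
      Finset.univ.biUnion (fun j => (A j).val) ∈ S.powerset := by
    intro A hA
    exact mem_powerset.2 (biUnion_subset.2 fun j _ => (mem_filter.1 hA).2 j)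
  rw [Finset.card_eq_sum_card_fiberwise hmem]
  refine Finset.sum_congr rfl fun T hT => ?_
  rw [mem_powerset] at hT
  unfold cnt
  congr 1
  ext A
  simp only [Finset.mem_filter, Finset.mem_univ, true_and]
  constructor
  · intro h
    refine ⟨fun j => ?_, h⟩
    exact (Finset.subset_biUnion_of_mem (fun j => (A j).val) (mem_univ j)).trans (h ▸ hT)
  · exact fun h => h.2

private lemma cnt_inversion (n l : ℕ) (m : Fin l → ℕ) (S : Finset (Fin n)) :
    (cnt n l m S : ℤ) = ∑ T ∈ S.powerset,
      (-1 : ℤ) ^ (S.card - T.card) * ∏ j, (T.card.choose (m j) : ℤ) := by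
  have h1 : ∀ T : Finset (Fin n), (∏ j, (T.card.choose (m j) : ℤ))
      = ∑ R ∈ T.powerset, (cnt n l m R : ℤ) := by
    intro T
    rw [← Nat.cast_sum, sum_cnt]
    push_cast
    rfl
  symm
  calc ∑ T ∈ S.powerset, (-1 : ℤ) ^ (S.card - T.card) * ∏ j, (T.card.choose (m j) : ℤ)
      = ∑ T ∈ S.powerset, ∑ R ∈ T.powerset,
          (-1 : ℤ) ^ (S.card - T.card) * (cnt n l m R : ℤ) := by
        refine Finset.sum_congr rfl fun T _ => ?_
        rw [h1, Finset.mul_sum]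
    _ = ∑ R ∈ S.powerset, ∑ T ∈ S.powerset.filter (fun T => R ⊆ T),
          (-1 : ℤ) ^ (S.card - T.card) * (cnt n l m R : ℤ) := by
        refine Finset.sum_comm' ?_
        intro T R
        simp only [mem_powerset, mem_filter]
        constructor
        · rintro ⟨h1, h2⟩; exact ⟨⟨h1, h2⟩, h2.trans h1⟩
        · rintro ⟨⟨h1, h2⟩, _⟩; exact ⟨h1, h2⟩
    _ = ∑ R ∈ S.powerset, (if R = S then 1 else 0) * (cnt n l m R : ℤ) := by
        refine Finset.sum_congr rfl fun R hR => ?_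
        rw [← Finset.sum_mul, alt_sum_interval (mem_powerset.1 hR)]
    _ = (cnt n l m S : ℤ) := by
        rw [Finset.sum_eq_single S]
        · simp
        · intro R _ hRS; simp [hRS]
        · intro h; exact absurd (mem_powerset_self S) h

private lemma cnt_card_eq (n l : ℕ) (m : Fin l → ℕ) (i : ℕ) (S : Finset (Fin n))
    (hS : S.card = i) :
    (cnt n l m S : ℤ) = ∑ h ∈ Finset.range (i + 1),
      (-1 : ℤ) ^ h * (i.choose h : ℤ) * ∏ j, ((i - h).choose (m j) : ℤ) := by
  rw [cnt_inversion, Finset.sum_powerset]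
  have step1 : ∀ k, ∑ T ∈ S.powersetCard k,
      (-1 : ℤ) ^ (S.card - T.card) * ∏ j, (T.card.choose (m j) : ℤ)
      = (-1 : ℤ) ^ (i - k) * (i.choose k : ℤ) * ∏ j, (k.choose (m j) : ℤ) := by
    intro k
    have hterm : ∀ T ∈ S.powersetCard k,
        (-1 : ℤ) ^ (S.card - T.card) * ∏ j, (T.card.choose (m j) : ℤ)
        = (-1 : ℤ) ^ (i - k) * ∏ j, (k.choose (m j) : ℤ) := by
      intro T hT
      rw [(Finset.mem_powersetCard.1 hT).2, hS]
    rw [Finset.sum_congr rfl hterm, Finset.sum_const, Finset.card_powersetCard, hS,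
      nsmul_eq_mul]
    ring
  rw [Finset.sum_congr rfl (fun k _ => step1 k), hS]
  have hrefl := Finset.sum_range_reflect
    (fun k => (-1 : ℤ) ^ (i - k) * (i.choose k : ℤ) * ∏ j, (k.choose (m j) : ℤ)) (i + 1)
  rw [← hrefl]
  refine Finset.sum_congr rfl fun h hh => ?_
  rw [Finset.mem_range] at hh
  have hh' : h ≤ i := Nat.lt_succ_iff.1 hh
  have e1 : i + 1 - 1 - h = i - h := by omega
  have e2 : i - (i - h) = h := Nat.sub_sub_self hh'
  simp only [e1, e2, Nat.choose_symm hh']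

private theorem union_count (n l : ℕ) (m : Fin l → ℕ) (i : ℕ) :
    ((Nat.card {A : (∀ j : Fin l, {B : Finset (Fin n) // B.card = m j}) //
        (Finset.univ.biUnion (fun j => (A j).val)).card = i}) : ℤ)
      = (n.choose i : ℤ) * ∑ h ∈ Finset.range (i + 1),
          (-1 : ℤ) ^ h * (i.choose h : ℤ) * ∏ j, ((i - h).choose (m j) : ℤ) := by
  classical
  rw [Nat.card_eq_fintype_card, Fintype.card_subtype]
  have hmem : ∀ A ∈ Finset.univ.filter
      (fun A : (∀ j : Fin l, {B : Finset (Fin n) // B.card = m j}) =>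
        (Finset.univ.biUnion (fun j => (A j).val)).card = i),
      Finset.univ.biUnion (fun j => (A j).val)
        ∈ (Finset.univ : Finset (Fin n)).powersetCard i := by
    intro A hA
    exact Finset.mem_powersetCard.2 ⟨Finset.subset_univ _, (mem_filter.1 hA).2⟩
  rw [Finset.card_eq_sum_card_fiberwise hmem]
  have step : ∀ S ∈ (Finset.univ : Finset (Fin n)).powersetCard i,
      ((Finset.univ.filter (fun A : (∀ j : Fin l, {B : Finset (Fin n) // B.card = m j}) =>
        (Finset.univ.biUnion (fun j => (A j).val)).card = i)).filter
        (fun A => Finset.univ.biUnion (fun j => (A j).val) = S)).card = cnt n l m S := by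
    intro S hS
    have hScard := (Finset.mem_powersetCard.1 hS).2
    unfold cnt
    congr 1
    ext A
    simp only [Finset.mem_filter, Finset.mem_univ, true_and]
    constructor
    · exact fun h => h.2
    · exact fun h => ⟨by rw [h, hScard], h⟩
  rw [Finset.sum_congr rfl step, Nat.cast_sum]
  rw [Finset.sum_congr rfl (fun S hS =>
    cnt_card_eq n l m i S (Finset.mem_powersetCard.1 hS).2), Finset.sum_const,
    Finset.card_powersetCard, Finset.card_univ, Fintype.card_fin, nsmul_eq_mul]

/-- The exact distribution of the size `X_n = |A_1 ∪ ⋯ ∪ A_ℓ|` of the union of independent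
random sets, where `A_i` is uniform over all `m_i`-element subsets of an `n`-element set:
`ℙ(X_n = i) = C(n,i) ∑_{h=0}^{i} (-1)^h C(i,h) ∏_{j=1}^{ℓ} C(i-h,m_j)/C(n,m_j)`. -/
theorem union_random_sets_size_distribution (n l : ℕ) (hn : 0 < n) (hl : 0 < l)
    (m : Fin l → ℕ) (hm : ∀ j, m j ≤ n) (i : ℕ) (hi : i ≤ n) :
    (Nat.card {A : (∀ j : Fin l, {B : Finset (Fin n) // B.card = m j}) //
        (Finset.univ.biUnion (fun j => (A j).val)).card = i} : ℝ) /
        (∏ j, (n.choose (m j) : ℝ))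
      = (n.choose i : ℝ) *
          ∑ h ∈ Finset.range (i + 1),
            (-1 : ℝ) ^ h * (i.choose h : ℝ) *
              ∏ j, ((i - h).choose (m j) : ℝ) / (n.choose (m j) : ℝ) := by
  have key := union_count n l m i
  have hP : ∀ j : Fin l, ((n.choose (m j) : ℝ)) ≠ 0 := fun j => by
    exact_mod_cast (Nat.choose_pos (hm j)).ne'
  have hcast : (Nat.card {A : (∀ j : Fin l, {B : Finset (Fin n) // B.card = m j}) //
        (Finset.univ.biUnion (fun j => (A j).val)).card = i} : ℝ)
      = (n.choose i : ℝ) * ∑ h ∈ Finset.range (i + 1),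
          (-1 : ℝ) ^ h * (i.choose h : ℝ) * ∏ j, ((i - h).choose (m j) : ℝ) := by
    exact_mod_cast congrArg (fun z : ℤ => (z : ℝ)) key
  rw [hcast, Finset.mul_sum, Finset.sum_div, Finset.mul_sum]
  refine Finset.sum_congr rfl fun h _ => ?_
  rw [Finset.prod_div_distrib]
  ring
end
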